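/- arXiv:1003.3121 — 5 statements merged into one kernel-verified Lean document; each statement's English description precedes it below -/
import Mathlib

section
/- Suppose (A1) holds with d = 1. If the process Y_n = X_n − G_n is transient, i.e. |X_n − G_n| → ∞ a.s., then X_n and G_n are also transient: |X_n| → ∞ and |G_n| → ∞ almost surely as n → ∞. -/
open MeasureTheory Filter Real
open scoped ENNReal Topology

noncomputable def gavg (x : ℕ → ℝ) (n : ℕ) : ℝ := (n : ℝ)⁻¹ * ∑ i ∈ Finset.Icc 1 n, x i

lemma gavg_neg (x : ℕ → ℝ) (n : ℕ) : gavg (fun k => -x k) n = -gavg x n := by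
  simp [gavg]

lemma sum_Icc_succ (x : ℕ → ℝ) (n : ℕ) :
    ∑ i ∈ Finset.Icc 1 (n+1), x i = (∑ i ∈ Finset.Icc 1 n, x i) + x (n+1) :=
  Finset.sum_Icc_succ_top (by omega) x

lemma y_rec (x : ℕ → ℝ) (n : ℕ) (hn : 1 ≤ n) :
    x (n+1) - gavg x (n+1) = (n:ℝ)/(n+1) * ((x n - gavg x n) + (x (n+1) - x n)) := by
  have hn0 : (0:ℝ) < (n:ℝ) := by exact_mod_cast hn
  unfold gavg; rw [sum_Icc_succ]; push_cast; field_simp; ring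

lemma g_rec (x : ℕ → ℝ) (n : ℕ) (hn : 1 ≤ n) :
    gavg x (n+1) - gavg x n = (x (n+1) - gavg x (n+1)) / n := by
  have hn0 : (0:ℝ) < (n:ℝ) := by exact_mod_cast hn
  unfold gavg; rw [sum_Icc_succ]; push_cast; field_simp; ring

lemma harm_tendsto : Tendsto (fun m => ∑ n ∈ Finset.range m, ((n:ℝ))⁻¹) atTop atTop :=
  (not_summable_iff_tendsto_nat_atTop_of_nonneg (fun i => by positivity)).1
    Real.not_summable_natCast_inv

lemma det_pos (x : ℕ → ℝ) (B : ℝ) (hB : 0 < B)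
    (hstep : ∀ n, 1 ≤ n → |x (n+1) - x n| ≤ B)
    (N : ℕ) (hN1 : 1 ≤ N)
    (hbig : ∀ n, N ≤ n → B + 2 ≤ |x n - gavg x n|)
    (hpos : B + 2 ≤ x N - gavg x N) :
    Tendsto (fun n => |x n|) atTop atTop ∧ Tendsto (fun n => |gavg x n|) atTop atTop := by
  have hY : ∀ n, N ≤ n → B + 2 ≤ x n - gavg x n := by
    intro n hn
    induction n, hn using Nat.le_induction with
    | base => exact hpos
    | succ n hn ih =>
      have hn1 : 1 ≤ n := hN1.trans hn
      have hn0 : (0:ℝ) < (n:ℝ) := by exact_mod_cast hn1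
      have hrec := y_rec x n hn1
      have hd : -B ≤ x (n+1) - x n := neg_le_of_abs_le (hstep n hn1)
      have hpos' : 0 < x (n+1) - gavg x (n+1) := by
        rw [hrec]
        have h1 : 0 < (n:ℝ)/(n+1) := by positivity
        have h2 : 0 < (x n - gavg x n) + (x (n+1) - x n) := by nlinarith
        positivity
      have hb := hbig (n+1) (by omega)
      rcases abs_cases (x (n+1) - gavg x (n+1)) with ⟨h, _⟩ | ⟨h, hneg⟩
      · linarith
      · linarith
  set H : ℕ → ℝ := fun m => ∑ n ∈ Finset.range m, ((n:ℝ))⁻¹ with hHdef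
  have hg : ∀ m, N ≤ m → gavg x N + (H m - H N) ≤ gavg x m := by
    intro m hm
    induction m, hm using Nat.le_induction with
    | base => simp
    | succ m hm ih =>
      have hm1 : 1 ≤ m := hN1.trans hm
      have hm0 : (0:ℝ) < (m:ℝ) := by exact_mod_cast hm1
      have hrec := g_rec x m hm1
      have hy1 : (1:ℝ) ≤ x (m+1) - gavg x (m+1) := by
        have := hY (m+1) (by omega); linarith
      have hdiv : (m:ℝ)⁻¹ ≤ (x (m+1) - gavg x (m+1)) / m := by
        rw [div_eq_mul_inv]
        nlinarith [inv_pos.2 hm0]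
      have hHs : H (m+1) = H m + (m:ℝ)⁻¹ := Finset.sum_range_succ _ m
      rw [hHs]
      linarith
  have hgt : Tendsto (gavg x) atTop atTop := by
    have h1 : Tendsto (fun m => (gavg x N - H N) + H m) atTop atTop :=
      tendsto_atTop_add_const_left _ _ harm_tendsto
    refine tendsto_atTop_mono' atTop ?_ h1
    filter_upwards [eventually_ge_atTop N] with m hm
    have := hg m hm; linarith
  have hxt : Tendsto x atTop atTop := by
    have h1 : Tendsto (fun n => 1 + gavg x n) atTop atTop :=
      tendsto_atTop_add_const_left _ _ hgt
    refine tendsto_atTop_mono' atTop ?_ h1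
    filter_upwards [eventually_ge_atTop N] with n hn
    have := hY n hn; linarith
  exact ⟨tendsto_abs_atTop_atTop.comp hxt, tendsto_abs_atTop_atTop.comp hgt⟩

lemma det_main (x : ℕ → ℝ) (B : ℝ) (hB : 0 < B)
    (hstep : ∀ n, 1 ≤ n → |x (n+1) - x n| ≤ B)
    (htend : Tendsto (fun n => |x n - gavg x n|) atTop atTop) :
    Tendsto (fun n => |x n|) atTop atTop ∧ Tendsto (fun n => |gavg x n|) atTop atTop := by
  obtain ⟨N0, hN0⟩ := (tendsto_atTop.1 htend (B + 2)).exists_forall_of_atTop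
  set N := max N0 1 with hNdef
  have hN1 : 1 ≤ N := le_max_right _ _
  have hbig : ∀ n, N ≤ n → B + 2 ≤ |x n - gavg x n| :=
    fun n hn => hN0 n ((le_max_left _ _).trans hn)
  rcases le_or_gt (B + 2) (x N - gavg x N) with hpos | hneg
  · exact det_pos x B hB hstep N hN1 hbig hpos
  · have hstep' : ∀ n, 1 ≤ n → |(-x (n+1)) - (-x n)| ≤ B := by
      intro n hn
      have := hstep n hn
      calc |(-x (n+1)) - (-x n)| = |x (n+1) - x n| := by rw [← abs_neg]; ring_nf
      _ ≤ B := this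
    have hbig' : ∀ n, N ≤ n → B + 2 ≤ |(-x n) - gavg (fun k => -x k) n| := by
      intro n hn
      rw [gavg_neg]
      calc B + 2 ≤ |x n - gavg x n| := hbig n hn
      _ = |(-x n) - -gavg x n| := by rw [← abs_neg]; ring_nf
    have hpos' : B + 2 ≤ (-x N) - gavg (fun k => -x k) N := by
      rw [gavg_neg]
      have hb := hbig N le_rfl
      rcases abs_cases (x N - gavg x N) with ⟨h, _⟩ | ⟨h, _⟩
      · linarith
      · linarith
    obtain ⟨h1, h2⟩ := det_pos (fun k => -x k) B hB hstep' N hN1 hbig' hpos'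
    constructor
    · simpa using h1
    · have heq : (fun n => |gavg (fun k => -x k) n|) = fun n => |gavg x n| := by
        funext n; rw [gavg_neg, abs_neg]
      rwa [heq] at h2

lemma euc_sum_apply (s : Finset ℕ) (f : ℕ → EuclideanSpace ℝ (Fin 1)) :
    (∑ i ∈ s, f i) 0 = ∑ i ∈ s, f i 0 :=
  by rw [WithLp.ofLp_sum]; exact Finset.sum_apply 0 s (fun i => (f i).ofLp)

lemma euc_norm (v : EuclideanSpace ℝ (Fin 1)) : ‖v‖ = |v 0| := by
  rw [EuclideanSpace.norm_eq]
  simp [Real.sqrt_sq_eq_abs]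

/-- Under (A1) with d = 1: if Y_n = X_n − G_n is transient then so are X_n and G_n. -/
theorem one_dimensional_transience
    {Ω : Type*} {m0 : MeasurableSpace Ω} {μ : Measure Ω} [IsProbabilityMeasure μ]
    {d : ℕ} (hd : 1 ≤ d)
    (ℱ : MeasureTheory.Filtration ℕ m0)
    (X G Y Δ : ℕ → Ω → EuclideanSpace ℝ (Fin d))
    (hadapt : ∀ n, StronglyMeasurable[ℱ n] (X n))
    (x₁ : EuclideanSpace ℝ (Fin d)) (hX1 : ∀ ω, X 1 ω = x₁)
    (hG : ∀ n ω, G n ω = (n : ℝ)⁻¹ • ∑ i ∈ Finset.Icc 1 n, X i ω)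
    (hY : ∀ n ω, Y n ω = X n ω - G n ω)
    (hΔ : ∀ n ω, Δ n ω = X (n + 1) ω - X n ω)
    (B ε₀ ρ β : ℝ) (hB : 0 < B) (hε₀ : 0 < ε₀) (hβ0 : 0 ≤ β)
    (hA1i : ∀ n, 1 ≤ n → ∀ᵐ ω ∂μ, ‖Δ n ω‖ ≤ B)
    (hA1ii : ∃ C R : ℝ, 2 ≤ R ∧ ∀ n, 1 ≤ n → ∀ᵐ ω ∂μ, R ≤ ‖Y n ω‖ →
      ‖(μ[Δ n | ℱ n]) ω - (ρ * ‖Y n ω‖ ^ (-β - 1)) • Y n ω‖ ≤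
        C * ‖Y n ω‖ ^ (-β) * Real.log ‖Y n ω‖ ^ (-2 : ℝ))
    (hA1iii : ∀ n, 1 ≤ n → ∀ᵐ ω ∂μ, ∀ e : EuclideanSpace ℝ (Fin d), ‖e‖ = 1 →
      ε₀ ≤ (μ[Set.indicator {ω' | ε₀ ≤ (inner ℝ (Δ n ω') e : ℝ)} (fun _ => (1 : ℝ)) | ℱ n]) ω)
    (hd1 : d = 1)
    (htrans : ∀ᵐ ω ∂μ, Filter.Tendsto (fun n => ‖Y n ω‖) Filter.atTop Filter.atTop) :
    ∀ᵐ ω ∂μ, Filter.Tendsto (fun n => ‖X n ω‖) Filter.atTop Filter.atTop ∧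
      Filter.Tendsto (fun n => ‖G n ω‖) Filter.atTop Filter.atTop := by
  subst hd1
  have hΔae : ∀ᵐ ω ∂μ, ∀ n, 1 ≤ n → ‖Δ n ω‖ ≤ B := by
    rw [ae_all_iff]
    intro n
    by_cases h : 1 ≤ n
    · filter_upwards [hA1i n h] with ω hb _; exact hb
    · filter_upwards with ω hn; omega
  filter_upwards [hΔae, htrans] with ω hstepω hyω
  set x : ℕ → ℝ := fun n => X n ω 0 with hxdef
  have hgcoord : ∀ n, G n ω 0 = gavg x n := by
    intro n
    rw [hG, gavg]
    have : ((n : ℝ)⁻¹ • ∑ i ∈ Finset.Icc 1 n, X i ω) 0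
        = (n : ℝ)⁻¹ * (∑ i ∈ Finset.Icc 1 n, X i ω) 0 := rfl
    rw [this, euc_sum_apply]
  have hycoord : ∀ n, Y n ω 0 = x n - gavg x n := by
    intro n; rw [hY]
    show X n ω 0 - G n ω 0 = _
    rw [hgcoord]
  have hstep : ∀ n, 1 ≤ n → |x (n+1) - x n| ≤ B := by
    intro n hn
    have := hstepω n hn
    rw [euc_norm, hΔ] at this
    exact this
  have htend : Tendsto (fun n => |x n - gavg x n|) atTop atTop := by
    have heq : (fun n => ‖Y n ω‖) = fun n => |x n - gavg x n| := by
      funext n; rw [euc_norm, hycoord]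
    rwa [heq] at hyω
  obtain ⟨h1, h2⟩ := det_main x B hB hstep htend
  constructor
  · have heq : (fun n => ‖X n ω‖) = fun n => |x n| := by
      funext n; rw [euc_norm]
    rwa [heq]
  · have heq : (fun n => ‖G n ω‖) = fun n => |gavg x n| := by
      funext n; rw [euc_norm, hgcoord]
    rwa [heq]
end

section
/- Suppose (A1) holds. Then limsup_{n→∞} ‖Y_n‖ = ∞ almost surely, where Y_n = X_n − G_n. -/
open MeasureTheory Filter Real
open scoped ENNReal Topology

section Aux
variable {Ω : Type*}

/-- iterated success sets -/
def succSet (A : ℕ → Set Ω) : ℕ → ℕ → Set Ω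
  | _, 0 => Set.univ
  | m, (k+1) => A m ∩ succSet A (m+1) k

lemma mem_succSet_forall {A : ℕ → Set Ω} {ω : Ω} :
    ∀ k m, ω ∈ succSet A m k → ∀ j < k, ω ∈ A (m + j) := by
  intro k
  induction k with
  | zero => intro m _ j hj; omega
  | succ k ih =>
    intro m hω j hj
    rw [succSet] at hω
    rcases Nat.eq_zero_or_pos j with rfl | hjpos
    · simpa using hω.1
    · obtain ⟨j', rfl⟩ : ∃ j', j = j' + 1 := ⟨j - 1, by omega⟩
      have := ih (m+1) hω.2 j' (by omega)
      simpa [Nat.add_assoc, Nat.add_comm, Nat.add_left_comm] using this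

/-- iterated failure sets -/
def failSet (F : ℕ → Set Ω) : ℕ → Set Ω
  | 0 => Set.univ
  | (J+1) => failSet F J ∩ (F J)ᶜ

variable {m0 : MeasurableSpace Ω} {μ : Measure Ω} [IsProbabilityMeasure μ] (ℱ : Filtration ℕ m0)

lemma step_lemma {ε : ℝ} {m : ℕ} {A S : Set Ω}
    (hA : MeasurableSet A) (hS : MeasurableSet[ℱ m] S)
    (hcond : ∀ᵐ ω ∂μ, ε ≤ (μ[A.indicator (fun _ => (1:ℝ)) | ℱ m]) ω) :
    ε * (μ S).toReal ≤ (μ (S ∩ A)).toReal := by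
  have hf : Integrable (A.indicator (fun _ => (1:ℝ))) μ := (integrable_const 1).indicator hA
  have h1 : ∫ _ in S, (ε : ℝ) ∂μ = (μ S).toReal * ε := by
    rw [setIntegral_const, smul_eq_mul]; rfl
  have h2 : ∫ x in S, (μ[A.indicator (fun _ => (1:ℝ)) | ℱ m]) x ∂μ
      = ∫ x in S, A.indicator (fun _ => (1:ℝ)) x ∂μ :=
    setIntegral_condExp (ℱ.le m) hf hS
  have h3 : ∫ x in S, A.indicator (fun _ => (1:ℝ)) x ∂μ = (μ (S ∩ A)).toReal := by
    rw [setIntegral_indicator hA, setIntegral_const, smul_eq_mul, mul_one]; rfl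
  have h4 : ∫ _ in S, (ε : ℝ) ∂μ ≤ ∫ x in S, (μ[A.indicator (fun _ => (1:ℝ)) | ℱ m]) x ∂μ :=
    setIntegral_mono_ae (integrable_const ε).integrableOn integrable_condExp.integrableOn hcond
  calc ε * (μ S).toReal = ∫ _ in S, (ε : ℝ) ∂μ := by rw [h1]; ring
    _ ≤ _ := h4
    _ = (μ (S ∩ A)).toReal := by rw [h2, h3]

lemma succSet_meas {A : ℕ → Set Ω} (hA : ∀ m, MeasurableSet[ℱ (m+1)] (A m)) :
    ∀ k m, MeasurableSet[ℱ (m+k)] (succSet A m k) := by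
  intro k
  induction k with
  | zero => intro m; exact MeasurableSet.univ
  | succ k ih =>
    intro m
    rw [succSet]
    have h1 : MeasurableSet[ℱ (m+(k+1))] (A m) := ℱ.mono (by omega) _ (hA m)
    have h2 : MeasurableSet[ℱ (m+(k+1))] (succSet A (m+1) k) := by
      have := ih (m+1)
      have e : m + 1 + k = m + (k+1) := by omega
      rwa [e] at this
    exact h1.inter h2

lemma succ_prob {ε : ℝ} (hε : 0 ≤ ε) {A : ℕ → Set Ω}
    (hA : ∀ m, MeasurableSet[ℱ (m+1)] (A m))
    (hcond : ∀ m, 1 ≤ m → ∀ᵐ ω ∂μ, ε ≤ (μ[(A m).indicator (fun _ => (1:ℝ)) | ℱ m]) ω) :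
    ∀ k m, 1 ≤ m → ∀ S : Set Ω, MeasurableSet[ℱ m] S →
      ε^k * (μ S).toReal ≤ (μ (S ∩ succSet A m k)).toReal := by
  intro k
  induction k with
  | zero => intro m _ S _; simp [succSet]
  | succ k ih =>
    intro m hm S hS
    have hstep : ε * (μ S).toReal ≤ (μ (S ∩ A m)).toReal :=
      step_lemma ℱ (ℱ.le (m+1) _ (hA m)) hS (hcond m hm)
    have hS' : MeasurableSet[ℱ (m+1)] (S ∩ A m) :=
      (ℱ.mono (Nat.le_succ m) _ hS).inter (hA m)
    have hih := ih (m+1) (by omega) (S ∩ A m) hS'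
    have heq : S ∩ succSet A m (k+1) = (S ∩ A m) ∩ succSet A (m+1) k := by
      rw [succSet, Set.inter_assoc]
    calc ε^(k+1) * (μ S).toReal = ε^k * (ε * (μ S).toReal) := by ring
      _ ≤ ε^k * (μ (S ∩ A m)).toReal :=
          mul_le_mul_of_nonneg_left hstep (pow_nonneg hε k)
      _ ≤ (μ ((S ∩ A m) ∩ succSet A (m+1) k)).toReal := hih
      _ = (μ (S ∩ succSet A m (k+1))).toReal := by rw [heq]

lemma fail_meas {A : ℕ → Set Ω} (hA : ∀ m, MeasurableSet[ℱ (m+1)] (A m))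
    (N₀ k : ℕ) :
    ∀ J, MeasurableSet[ℱ (N₀ + J*k)] (failSet (fun J => succSet A (N₀ + J*k) k) J) := by
  intro J
  induction J with
  | zero => exact MeasurableSet.univ
  | succ J ih =>
    rw [failSet]
    have h1 : MeasurableSet[ℱ (N₀ + (J+1)*k)] (failSet (fun J => succSet A (N₀ + J*k) k) J) :=
      ℱ.mono (Nat.add_le_add_left (Nat.mul_le_mul_right k (Nat.le_succ J)) N₀) _ ih
    have h2 : MeasurableSet[ℱ (N₀ + (J+1)*k)] (succSet A (N₀ + J*k) k) := by
      have := succSet_meas ℱ hA k (N₀ + J*k)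
      have e : N₀ + J*k + k = N₀ + (J+1)*k := by ring
      rwa [e] at this
    exact h1.inter h2.compl

lemma fail_bound {ε : ℝ} (hε : 0 ≤ ε) (hε1 : ε ≤ 1) {A : ℕ → Set Ω}
    (hA : ∀ m, MeasurableSet[ℱ (m+1)] (A m))
    (hcond : ∀ m, 1 ≤ m → ∀ᵐ ω ∂μ, ε ≤ (μ[(A m).indicator (fun _ => (1:ℝ)) | ℱ m]) ω)
    {N₀ k : ℕ} (hN₀ : 1 ≤ N₀) :
    ∀ J, (μ (failSet (fun J => succSet A (N₀ + J*k) k) J)).toReal ≤ (1 - ε^k)^J := by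
  have hεk : ε^k ≤ 1 := pow_le_one₀ hε hε1
  have hεk0 : 0 ≤ ε^k := pow_nonneg hε k
  intro J
  induction J with
  | zero => simp [failSet]
  | succ J ih =>
    set Fl := failSet (fun J => succSet A (N₀ + J*k) k) J with hFl
    have hFlmeas : MeasurableSet[ℱ (N₀ + J*k)] Fl := fail_meas ℱ hA N₀ k J
    have hSmeas : MeasurableSet (succSet A (N₀ + J*k) k) :=
      ℱ.le _ _ (succSet_meas ℱ hA k (N₀ + J*k))
    have hsp := succ_prob ℱ hε hA hcond k (N₀ + J*k) (by omega) Fl hFlmeas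
    have hsplit : μ (Fl ∩ succSet A (N₀ + J*k) k) + μ (Fl \ succSet A (N₀ + J*k) k) = μ Fl :=
      measure_inter_add_diff Fl hSmeas
    have hne1 : μ (Fl ∩ succSet A (N₀ + J*k) k) ≠ ⊤ := measure_ne_top μ _
    have hne2 : μ (Fl \ succSet A (N₀ + J*k) k) ≠ ⊤ := measure_ne_top μ _
    have hsplit' : (μ (Fl ∩ succSet A (N₀ + J*k) k)).toReal
        + (μ (Fl \ succSet A (N₀ + J*k) k)).toReal = (μ Fl).toReal := by
      rw [← ENNReal.toReal_add hne1 hne2, hsplit]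
    have hdiff : failSet (fun J => succSet A (N₀ + J*k) k) (J+1)
        = Fl \ succSet A (N₀ + J*k) k := by
      rw [failSet, Set.diff_eq]
    rw [hdiff]
    have : (μ (Fl \ succSet A (N₀ + J*k) k)).toReal ≤ (1 - ε^k) * (μ Fl).toReal := by
      nlinarith [hsp, hsplit']
    calc (μ (Fl \ succSet A (N₀ + J*k) k)).toReal ≤ (1 - ε^k) * (μ Fl).toReal := this
      _ ≤ (1 - ε^k) * (1 - ε^k)^J := by
          apply mul_le_mul_of_nonneg_left ih (by linarith)
      _ = (1 - ε^k)^(J+1) := by ring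

end Aux


lemma geom_lemma {Ω : Type*} {d : ℕ}
    (X G Y Δ : ℕ → Ω → EuclideanSpace ℝ (Fin d))
    (hG : ∀ n ω, G n ω = (n : ℝ)⁻¹ • ∑ i ∈ Finset.Icc 1 n, X i ω)
    (hY : ∀ n ω, Y n ω = X n ω - G n ω)
    (hΔ : ∀ n ω, Δ n ω = X (n + 1) ω - X n ω)
    (B M ε₀ : ℝ) (hB : 0 < B) (hM : 0 ≤ M) (hε₀ : 0 < ε₀)
    (e : EuclideanSpace ℝ (Fin d)) (he : ‖e‖ = 1)
    (k n : ℕ) (hk1 : 1 ≤ k) (hkε : 2*M + 2 ≤ (k:ℝ) * ε₀)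
    (hn1 : 1 ≤ n) (hn : (k:ℝ) * ((k:ℝ)*B + M) ≤ (n:ℝ))
    (ω : Ω) (hΔB : ∀ i, 1 ≤ i → ‖Δ i ω‖ ≤ B)
    (hYn : ‖Y n ω‖ ≤ M)
    (hsucc : ∀ j < k, ε₀ ≤ (inner ℝ (Δ (n+j) ω) e : ℝ)) :
    M < ‖Y (n+k) ω‖ := by
  -- Step 1: partial sums of increments
  have hXsum : ∀ i, X (n+i) ω = X n ω + ∑ j ∈ Finset.range i, Δ (n+j) ω := by
    intro i
    induction i with
    | zero => simp
    | succ i ih =>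
      have h : X (n+(i+1)) ω = X (n+i) ω + Δ (n+i) ω := by
        rw [hΔ (n+i) ω]; abel
      rw [h, ih, Finset.sum_range_succ]; abel
  -- Step 2: distance bound
  have hXdist : ∀ i, ‖X (n+i) ω - X n ω‖ ≤ (i:ℝ) * B := by
    intro i
    have h : X (n+i) ω - X n ω = ∑ j ∈ Finset.range i, Δ (n+j) ω := by
      rw [hXsum i]; abel
    rw [h]
    calc ‖∑ j ∈ Finset.range i, Δ (n+j) ω‖ ≤ ∑ j ∈ Finset.range i, ‖Δ (n+j) ω‖ :=
          norm_sum_le _ _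
      _ ≤ ∑ _j ∈ Finset.range i, B :=
          Finset.sum_le_sum fun j _ => hΔB (n+j) (by omega)
      _ = (i:ℝ) * B := by rw [Finset.sum_const, Finset.card_range, nsmul_eq_mul]
  -- Step 3: inner product gain
  have hinner : (k:ℝ) * ε₀ ≤ (inner ℝ (X (n+k) ω - X n ω) e : ℝ) := by
    have h : X (n+k) ω - X n ω = ∑ j ∈ Finset.range k, Δ (n+j) ω := by
      rw [hXsum k]; abel
    rw [h, sum_inner]
    calc (k:ℝ) * ε₀ = ∑ _j ∈ Finset.range k, ε₀ := by
          rw [Finset.sum_const, Finset.card_range, nsmul_eq_mul]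
      _ ≤ ∑ j ∈ Finset.range k, (inner ℝ (Δ (n+j) ω) e : ℝ) :=
          Finset.sum_le_sum fun j hj => hsucc j (Finset.mem_range.1 hj)
  -- Step 4: centre of mass drift identity
  have hIcc : ∀ m : ℕ, Finset.Icc 1 m = Finset.Ioc 0 m := fun m => by rw [← Finset.Icc_add_one_left_eq_Ioc, zero_add]
  set s1 := ∑ i ∈ Finset.Ioc 0 n, X i ω with hs1
  set s2 := ∑ i ∈ Finset.Ioc n (n+k), X i ω with hs2
  have hGn : G n ω = (n:ℝ)⁻¹ • s1 := by rw [hG, hIcc]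
  have hGnk : G (n+k) ω = ((n+k:ℕ):ℝ)⁻¹ • (s1 + s2) := by
    rw [hG, hIcc]
    congr 1
    exact (Finset.sum_Ioc_consecutive _ (Nat.zero_le n) (Nat.le_add_right n k)).symm
  have hsum3 : ∑ i ∈ Finset.Ioc n (n+k), (X i ω - G n ω) = s2 - (k:ℝ) • G n ω := by
    rw [Finset.sum_sub_distrib, Finset.sum_const, Nat.card_Ioc]
    have : n + k - n = k := by omega
    rw [this, ← Nat.cast_smul_eq_nsmul ℝ]
  have hn0 : (n:ℝ) ≠ 0 := by
    have : (0:ℝ) < n := by exact_mod_cast hn1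
    linarith
  have hnk0 : ((n+k:ℕ):ℝ) ≠ 0 := by
    have : (0:ℝ) < ((n+k:ℕ):ℝ) := by exact_mod_cast (by omega : 0 < n + k)
    linarith
  have hGdiff : G (n+k) ω - G n ω
      = ((n+k:ℕ):ℝ)⁻¹ • ∑ i ∈ Finset.Ioc n (n+k), (X i ω - G n ω) := by
    rw [hsum3, hGnk, hGn]
    have hc : ((n+k:ℕ):ℝ) = (n:ℝ) + (k:ℝ) := by push_cast; ring
    rw [hc]
    have hnk0' : (n:ℝ) + (k:ℝ) ≠ 0 := by rw [← hc]; exact hnk0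
    match_scalars <;> field_simp <;> ring
  -- Step 5: drift norm bound
  have hbound_i : ∀ i ∈ Finset.Ioc n (n+k), ‖X i ω - G n ω‖ ≤ (k:ℝ)*B + M := by
    intro i hi
    rw [Finset.mem_Ioc] at hi
    have hsplit : X i ω - G n ω = (X i ω - X n ω) + Y n ω := by rw [hY]; abel
    have hd : ‖X i ω - X n ω‖ ≤ (k:ℝ) * B := by
      have h1 : n + (i - n) = i := by omega
      have h2 := hXdist (i - n)
      rw [h1] at h2
      refine h2.trans ?_
      have : ((i - n : ℕ):ℝ) ≤ (k:ℝ) := by exact_mod_cast (by omega : i - n ≤ k)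
      nlinarith
    rw [hsplit]
    calc ‖(X i ω - X n ω) + Y n ω‖ ≤ ‖X i ω - X n ω‖ + ‖Y n ω‖ := norm_add_le _ _
      _ ≤ (k:ℝ)*B + M := by linarith
  have hGnorm : ‖G (n+k) ω - G n ω‖ ≤ 1 := by
    rw [hGdiff, norm_smul]
    have hpos : (0:ℝ) < ((n+k:ℕ):ℝ) := lt_of_le_of_ne (by positivity) (Ne.symm hnk0)
    have hnorm_inv : ‖((n+k:ℕ):ℝ)⁻¹‖ = ((n+k:ℕ):ℝ)⁻¹ := by
      rw [Real.norm_eq_abs, abs_of_nonneg (by positivity)]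
    rw [hnorm_inv]
    have hsumb : ‖∑ i ∈ Finset.Ioc n (n+k), (X i ω - G n ω)‖ ≤ ((n+k:ℕ):ℝ) := by
      calc ‖∑ i ∈ Finset.Ioc n (n+k), (X i ω - G n ω)‖
          ≤ ∑ i ∈ Finset.Ioc n (n+k), ‖X i ω - G n ω‖ := norm_sum_le _ _
        _ ≤ ∑ _i ∈ Finset.Ioc n (n+k), ((k:ℝ)*B + M) := Finset.sum_le_sum hbound_i
        _ = (k:ℝ) * ((k:ℝ)*B + M) := by
            rw [Finset.sum_const, Nat.card_Ioc, nsmul_eq_mul]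
            congr 1
            exact_mod_cast congrArg (Nat.cast (R := ℝ)) (by omega : n + k - n = k)
        _ ≤ (n:ℝ) := hn
        _ ≤ ((n+k:ℕ):ℝ) := by exact_mod_cast (by omega : n ≤ n + k)
    calc ((n+k:ℕ):ℝ)⁻¹ * ‖∑ i ∈ Finset.Ioc n (n+k), (X i ω - G n ω)‖
        ≤ ((n+k:ℕ):ℝ)⁻¹ * ((n+k:ℕ):ℝ) := by
          exact mul_le_mul_of_nonneg_left hsumb (by positivity)
      _ = 1 := inv_mul_cancel₀ hnk0
  -- Step 6: conclude
  have hYsplit : Y (n+k) ω = (X (n+k) ω - X n ω) + Y n ω + (G n ω - G (n+k) ω) := by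
    rw [hY, hY]; abel
  have h1 : (inner ℝ (Y (n+k) ω) e : ℝ)
      = (inner ℝ (X (n+k) ω - X n ω) e : ℝ) + (inner ℝ (Y n ω) e : ℝ)
        + (inner ℝ (G n ω - G (n+k) ω) e : ℝ) := by
    rw [hYsplit, inner_add_left, inner_add_left]
  have h2 : -M ≤ (inner ℝ (Y n ω) e : ℝ) := by
    have := abs_real_inner_le_norm (Y n ω) e
    rw [he, mul_one] at this
    have := neg_le_of_abs_le (this.trans hYn)
    linarith
  have h3 : -1 ≤ (inner ℝ (G n ω - G (n+k) ω) e : ℝ) := by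
    have habs := abs_real_inner_le_norm (G n ω - G (n+k) ω) e
    rw [he, mul_one] at habs
    have hrev : ‖G n ω - G (n+k) ω‖ = ‖G (n+k) ω - G n ω‖ := norm_sub_rev _ _
    have := neg_le_of_abs_le (habs.trans (le_of_eq_of_le hrev hGnorm))
    linarith
  have h4 : (inner ℝ (Y (n+k) ω) e : ℝ) ≤ ‖Y (n+k) ω‖ := by
    have := real_inner_le_norm (Y (n+k) ω) e
    rwa [he, mul_one] at this
  linarith


/-- Under (A1), limsup ‖Y_n‖ = ∞ almost surely. -/
theorem limsup_infinite
    {Ω : Type*} {m0 : MeasurableSpace Ω} {μ : Measure Ω} [IsProbabilityMeasure μ]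
    {d : ℕ} (hd : 1 ≤ d)
    (ℱ : MeasureTheory.Filtration ℕ m0)
    (X G Y Δ : ℕ → Ω → EuclideanSpace ℝ (Fin d))
    (hadapt : ∀ n, StronglyMeasurable[ℱ n] (X n))
    (x₁ : EuclideanSpace ℝ (Fin d)) (hX1 : ∀ ω, X 1 ω = x₁)
    (hG : ∀ n ω, G n ω = (n : ℝ)⁻¹ • ∑ i ∈ Finset.Icc 1 n, X i ω)
    (hY : ∀ n ω, Y n ω = X n ω - G n ω)
    (hΔ : ∀ n ω, Δ n ω = X (n + 1) ω - X n ω)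
    (B ε₀ ρ β : ℝ) (hB : 0 < B) (hε₀ : 0 < ε₀) (hβ0 : 0 ≤ β)
    (hA1i : ∀ n, 1 ≤ n → ∀ᵐ ω ∂μ, ‖Δ n ω‖ ≤ B)
    (hA1ii : ∃ C R : ℝ, 2 ≤ R ∧ ∀ n, 1 ≤ n → ∀ᵐ ω ∂μ, R ≤ ‖Y n ω‖ →
      ‖(μ[Δ n | ℱ n]) ω - (ρ * ‖Y n ω‖ ^ (-β - 1)) • Y n ω‖ ≤
        C * ‖Y n ω‖ ^ (-β) * Real.log ‖Y n ω‖ ^ (-2 : ℝ))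
    (hA1iii : ∀ n, 1 ≤ n → ∀ᵐ ω ∂μ, ∀ e : EuclideanSpace ℝ (Fin d), ‖e‖ = 1 →
      ε₀ ≤ (μ[Set.indicator {ω' | ε₀ ≤ (inner ℝ (Δ n ω') e : ℝ)} (fun _ => (1 : ℝ)) | ℱ n]) ω)
    :
    ∀ᵐ ω ∂μ, Filter.limsup (fun n => ENNReal.ofReal ‖Y n ω‖) Filter.atTop = ⊤ := by
  classical
  set e : EuclideanSpace ℝ (Fin d) := EuclideanSpace.single (⟨0, hd⟩ : Fin d) (1:ℝ) with he_def
  have he : ‖e‖ = 1 := by rw [he_def, EuclideanSpace.norm_single]; norm_num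
  set A : ℕ → Set Ω := fun n => {ω' | ε₀ ≤ (inner ℝ (Δ n ω') e : ℝ)} with hA_def
  have hAmeas : ∀ m, MeasurableSet[ℱ (m+1)] (A m) := by
    intro m
    have hsm : StronglyMeasurable[ℱ (m+1)] (Δ m) := by
      have h1 : StronglyMeasurable[ℱ (m+1)] (X (m+1)) := hadapt (m+1)
      have h2 : StronglyMeasurable[ℱ (m+1)] (X m) := (hadapt m).mono (ℱ.mono (Nat.le_succ m))
      have hfun : Δ m = fun ω => X (m+1) ω - X m ω := funext (hΔ m)
      rw [hfun]; exact h1.sub h2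
    have hin : StronglyMeasurable[ℱ (m+1)] (fun ω => (inner ℝ (Δ m ω) e : ℝ)) :=
      hsm.inner stronglyMeasurable_const
    exact hin.measurable measurableSet_Ici
  have hAmeas0 : ∀ m, MeasurableSet (A m) := fun m => ℱ.le (m+1) _ (hAmeas m)
  have hcond : ∀ m, 1 ≤ m → ∀ᵐ ω ∂μ, ε₀ ≤ (μ[(A m).indicator (fun _ => (1:ℝ)) | ℱ m]) ω := by
    intro m hm
    filter_upwards [hA1iii m hm] with ω h using h e he
  have hε₀1 : ε₀ ≤ 1 := by
    have hst := step_lemma ℱ (hAmeas0 1)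
      (MeasurableSet.univ : MeasurableSet[ℱ 1] Set.univ) (hcond 1 le_rfl)
    rw [measure_univ] at hst
    simp only [ENNReal.toReal_one, mul_one] at hst
    have h2 : μ (Set.univ ∩ A 1) ≤ 1 :=
      (measure_mono (Set.subset_univ _)).trans_eq measure_univ
    have h3 : (μ (Set.univ ∩ A 1)).toReal ≤ 1 := by
      have := ENNReal.toReal_mono (by norm_num) h2
      simpa using this
    linarith
  set Good : Set Ω := {ω | ∀ i, 1 ≤ i → ‖Δ i ω‖ ≤ B} with hGood_def
  have hGoodae : ∀ᵐ ω ∂μ, ω ∈ Good := by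
    have : ∀ᵐ ω ∂μ, ∀ i : ℕ, 1 ≤ i → ‖Δ i ω‖ ≤ B := by
      rw [ae_all_iff]
      intro i
      by_cases hi : 1 ≤ i
      · filter_upwards [hA1i i hi] with ω h _ using h
      · filter_upwards with ω h using absurd h hi
    exact this
  have hkey : ∀ M : ℕ, ∀ᵐ ω ∂μ, ∃ n, 1 ≤ n ∧ (M:ℝ) < ‖Y n ω‖ := by
    intro M
    set Mr : ℝ := (M:ℝ) with hMr_def
    have hM : 0 ≤ Mr := Nat.cast_nonneg M
    set k : ℕ := ⌈(2*Mr+2)/ε₀⌉₊ with hk_def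
    have hk1 : 1 ≤ k := by
      rw [hk_def]
      exact Nat.one_le_ceil_iff.2 (by positivity)
    have hkε : 2*Mr + 2 ≤ (k:ℝ) * ε₀ := by
      have h := Nat.le_ceil ((2*Mr+2)/ε₀)
      rw [div_le_iff₀ hε₀] at h
      exact h
    set N₀ : ℕ := max 1 ⌈(k:ℝ)*((k:ℝ)*B+Mr)⌉₊ with hN₀_def
    have hN₀1 : 1 ≤ N₀ := le_max_left _ _
    have hN₀ : (k:ℝ)*((k:ℝ)*B+Mr) ≤ (N₀:ℝ) := by
      have h := Nat.le_ceil ((k:ℝ)*((k:ℝ)*B+Mr))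
      have h2 : ((⌈(k:ℝ)*((k:ℝ)*B+Mr)⌉₊ : ℕ):ℝ) ≤ (N₀:ℝ) := by
        exact_mod_cast le_max_right 1 ⌈(k:ℝ)*((k:ℝ)*B+Mr)⌉₊
      linarith
    set Bad : Set Ω := Good ∩ {ω | ∀ n, 1 ≤ n → ‖Y n ω‖ ≤ Mr} with hBad_def
    have hBadsub : ∀ J, Bad ⊆ failSet (fun J => succSet A (N₀ + J*k) k) J := by
      intro J
      induction J with
      | zero => intro ω _; exact Set.mem_univ ω
      | succ J ih =>
        rw [failSet]
        intro ω hω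
        refine ⟨ih hω, ?_⟩
        intro hmem
        obtain ⟨hg, hb⟩ := hω
        have hsucc : ∀ j < k, ε₀ ≤ (inner ℝ (Δ (N₀ + J*k + j) ω) e : ℝ) := by
          intro j hj
          exact mem_succSet_forall k (N₀ + J*k) hmem j hj
        have hn1 : 1 ≤ N₀ + J*k := by omega
        have hnge : (k:ℝ)*((k:ℝ)*B+Mr) ≤ ((N₀ + J*k : ℕ):ℝ) :=
          le_trans hN₀ (by exact_mod_cast (by omega : N₀ ≤ N₀ + J*k))
        have hgeom := geom_lemma X G Y Δ hG hY hΔ B Mr ε₀ hB hM hε₀ e he k (N₀ + J*k)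
          hk1 hkε hn1 hnge ω hg (hb _ hn1) hsucc
        exact absurd (hb (N₀ + J*k + k) (by omega)) (not_le.2 hgeom)
    have hμBad : μ Bad = 0 := by
      have hb : ∀ J, (μ Bad).toReal ≤ (1 - ε₀^k)^J := by
        intro J
        have h1 : μ Bad ≤ μ (failSet (fun J => succSet A (N₀ + J*k) k) J) :=
          measure_mono (hBadsub J)
        have h2 := fail_bound ℱ hε₀.le hε₀1 hAmeas hcond (N₀ := N₀) (k := k) hN₀1 J
        exact (ENNReal.toReal_mono (measure_ne_top μ _) h1).trans h2
      have htend : Filter.Tendsto (fun J => (1 - ε₀^k)^J) Filter.atTop (nhds 0) := by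
        apply tendsto_pow_atTop_nhds_zero_of_lt_one
        · have := pow_le_one₀ hε₀.le hε₀1 (n := k); linarith
        · have := pow_pos hε₀ k; linarith
      have hle0 : (μ Bad).toReal ≤ 0 :=
        ge_of_tendsto htend (Filter.Eventually.of_forall hb)
      have h0 : (μ Bad).toReal = 0 := le_antisymm hle0 ENNReal.toReal_nonneg
      exact ((ENNReal.toReal_eq_zero_iff _).1 h0).resolve_right (measure_ne_top μ _)
    rw [ae_iff]
    have hsub : {ω | ¬ ∃ n, 1 ≤ n ∧ (M:ℝ) < ‖Y n ω‖} ⊆ Bad ∪ Goodᶜ := by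
      intro ω hω
      by_cases hg : ω ∈ Good
      · left
        push_neg at hω
        exact ⟨hg, fun n hn => hω n hn⟩
      · right; exact hg
    have hGc : μ Goodᶜ = 0 := by
      have := ae_iff.1 hGoodae
      simpa [Set.compl_def] using this
    refine le_antisymm ?_ zero_le
    calc μ {ω | ¬ ∃ n, 1 ≤ n ∧ (M:ℝ) < ‖Y n ω‖} ≤ μ (Bad ∪ Goodᶜ) := measure_mono hsub
      _ ≤ μ Bad + μ Goodᶜ := measure_union_le _ _
      _ = 0 := by rw [hμBad, hGc, add_zero]
  have hae : ∀ᵐ ω ∂μ, ∀ M : ℕ, ∃ n, 1 ≤ n ∧ (M:ℝ) < ‖Y n ω‖ := ae_all_iff.2 hkey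
  filter_upwards [hae] with ω hω
  refine top_unique ?_
  rw [← ENNReal.iSup_natCast]
  refine iSup_le fun M => ?_
  refine Filter.le_limsup_of_frequently_le ?_
  rw [Filter.frequently_atTop]
  intro N
  set c : ℕ := (Finset.range N).sup (fun i => ⌈‖Y i ω‖⌉₊) with hc_def
  obtain ⟨n, hn1, hn⟩ := hω (max M c)
  refine ⟨n, ?_, ?_⟩
  · by_contra hcon
    push_neg at hcon
    have h1 : ‖Y n ω‖ ≤ (⌈‖Y n ω‖⌉₊ : ℝ) := Nat.le_ceil _
    have h2 : ⌈‖Y n ω‖⌉₊ ≤ c := Finset.le_sup (f := fun i => ⌈‖Y i ω‖⌉₊) (Finset.mem_range.2 hcon)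
    have h3 : (c:ℝ) ≤ ((max M c : ℕ):ℝ) := by exact_mod_cast le_max_right M c
    have h4 : ‖Y n ω‖ ≤ ((max M c : ℕ):ℝ) :=
      h1.trans (((by exact_mod_cast h2 : (⌈‖Y n ω‖⌉₊:ℝ) ≤ (c:ℝ))).trans h3)
    have h5 : ((max M c : ℕ):ℝ) < ‖Y n ω‖ := hn
    linarith
  · have hMle : ((M:ℕ):ℝ) ≤ ((max M c : ℕ):ℝ) := by exact_mod_cast le_max_left M c
    have hlt : (M:ℝ) < ‖Y n ω‖ := lt_of_le_of_lt hMle hn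
    calc (M:ℝ≥0∞) = ENNReal.ofReal (M:ℝ) := (ENNReal.ofReal_natCast M).symm
      _ ≤ ENNReal.ofReal ‖Y n ω‖ := ENNReal.ofReal_le_ofReal hlt.le
end

section
/- Suppose (A1) holds with β ∈ [0,1). Then there exist constants C' < ∞ and R' ≥ 2 such that for every n ≥ 1, almost surely on the event {‖Y_n‖ ≥ R'}: |E_n[‖Y_{n+1}‖ − ‖Y_n‖] − ρ‖Y_n‖^{−β} + ‖Y_n‖/(n+1)| ≤ C'‖Y_n‖^{−β}(log‖Y_n‖)^{−2}. -/
open MeasureTheory Filter Real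
open scoped ENNReal Topology

open MeasureTheory Filter Real
open scoped ENNReal Topology

lemma geom_bound {d : ℕ} (a b : EuclideanSpace ℝ (Fin d)) (ha : 0 < ‖a‖) :
    0 ≤ ‖a + b‖ - ‖a‖ - (inner ℝ ((‖a‖)⁻¹ • a) b : ℝ) ∧
      ‖a + b‖ - ‖a‖ - (inner ℝ ((‖a‖)⁻¹ • a) b : ℝ) ≤ ‖b‖ ^ 2 / (2 * ‖a‖) := by
  have hin : (inner ℝ ((‖a‖)⁻¹ • a) b : ℝ) = (‖a‖)⁻¹ * (inner ℝ a b : ℝ) := real_inner_smul_left _ _ _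
  rw [hin]
  set s := ‖a + b‖ with hs
  set t := ‖a‖ with ht
  set p : ℝ := inner ℝ a b with hp
  have hsq : s ^ 2 = t ^ 2 + 2 * p + ‖b‖ ^ 2 := norm_add_sq_real a b
  have habs : |s - t| ≤ ‖b‖ := by simpa using abs_norm_sub_norm_le (a + b) a
  have h1 : (s - t) ^ 2 ≤ ‖b‖ ^ 2 := by
    nlinarith [sq_abs (s - t), abs_nonneg (s - t)]
  have key : t * (s - t - t⁻¹ * p) = (‖b‖ ^ 2 - (s - t) ^ 2) / 2 := by
    field_simp
    nlinarith [hsq]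
  constructor
  · nlinarith [key, h1, ha]
  · rw [le_div_iff₀ (by positivity : (0:ℝ) < 2 * t)]
    nlinarith [key, h1, ha]

lemma condexp_euclidean_apply {Ω : Type*} {m m0 : MeasurableSpace Ω} {μ : Measure Ω}
    (hm : m ≤ m0) [SigmaFinite (μ.trim hm)] {d : ℕ}
    {f : Ω → EuclideanSpace ℝ (Fin d)} (hf : Integrable f μ) (i : Fin d) :
    (fun ω => (μ[f|m]) ω i) =ᵐ[μ] μ[fun ω => f ω i|m] := by
  set L : EuclideanSpace ℝ (Fin d) →L[ℝ] ℝ := EuclideanSpace.proj i with hL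
  have hfi : Integrable (fun ω => f ω i) μ := L.integrable_comp hf
  refine ae_eq_condExp_of_forall_setIntegral_eq hm hfi
    (fun s _ _ => (L.integrable_comp integrable_condExp).integrableOn) (fun s hs hμs => ?_) ?_
  · have h1 : ∫ ω in s, (μ[f|m]) ω i ∂μ = L (∫ ω in s, (μ[f|m]) ω ∂μ) :=
      ContinuousLinearMap.integral_comp_comm L integrable_condExp.integrableOn
    have h2 : ∫ ω in s, f ω i ∂μ = L (∫ ω in s, f ω ∂μ) :=
      ContinuousLinearMap.integral_comp_comm L hf.integrableOn
    rw [h1, h2, setIntegral_condExp hm hf hs]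
  · exact StronglyMeasurable.aestronglyMeasurable
      (L.continuous.comp_stronglyMeasurable stronglyMeasurable_condExp)

lemma abs_coord_le_norm {d : ℕ} (x : EuclideanSpace ℝ (Fin d)) (i : Fin d) : |x i| ≤ ‖x‖ := by
  have h := abs_real_inner_le_norm x (EuclideanSpace.single i (1:ℝ))
  rw [EuclideanSpace.norm_single] at h
  rw [real_inner_comm, EuclideanSpace.inner_single_left] at h
  simpa using h

lemma condexp_inner_pullout {Ω : Type*} {m m0 : MeasurableSpace Ω} {μ : Measure Ω}
    [IsProbabilityMeasure μ] (hm : m ≤ m0) [SigmaFinite (μ.trim hm)] {d : ℕ}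
    {c f : Ω → EuclideanSpace ℝ (Fin d)} (hc : StronglyMeasurable[m] c)
    (hcb : ∀ ω, ‖c ω‖ ≤ 1) (hfm : AEStronglyMeasurable f μ) {K : ℝ}
    (hfb : ∀ᵐ ω ∂μ, ‖f ω‖ ≤ K) :
    μ[fun ω => (inner ℝ (c ω) (f ω) : ℝ)|m] =ᵐ[μ] fun ω => (inner ℝ (c ω) ((μ[f|m]) ω) : ℝ) := by
  have hfi : Integrable f μ := Integrable.mono' (integrable_const K) hfm hfb
  have hcm0 : AEStronglyMeasurable c μ := (hc.mono hm).aestronglyMeasurable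
  have hci : ∀ i : Fin d, StronglyMeasurable[m] fun ω => c ω i := fun i =>
    ((EuclideanSpace.proj i).continuous.comp_stronglyMeasurable hc)
  have hfii : ∀ i : Fin d, Integrable (fun ω => f ω i) μ := fun i =>
    ContinuousLinearMap.integrable_comp (EuclideanSpace.proj i : EuclideanSpace ℝ (Fin d) →L[ℝ] ℝ) hfi
  have hprod : ∀ i : Fin d, Integrable (fun ω => c ω i * f ω i) μ := by
    intro i
    refine Integrable.mono' (integrable_const K)
      (((hci i).mono hm).aestronglyMeasurable.mul (hfii i).1) ?_
    filter_upwards [hfb] with ω hω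
    have h1 := abs_coord_le_norm (c ω) i
    have h2 := abs_coord_le_norm (f ω) i
    have := hcb ω
    have hn : (0:ℝ) ≤ ‖f ω‖ := norm_nonneg _
    calc ‖c ω i * f ω i‖ = |c ω i| * |f ω i| := by rw [norm_mul]; rfl
      _ ≤ 1 * K := by
          apply mul_le_mul (le_trans h1 (hcb ω)) (le_trans h2 hω) (abs_nonneg _)
          exact zero_le_one
      _ = K := one_mul K
  have hinner_eq : (fun ω => (inner ℝ (c ω) (f ω) : ℝ))
      = fun ω => ∑ i : Fin d, c ω i * f ω i := by
    funext ω
    simp [PiLp.inner_apply, RCLike.inner_apply, map_sum, mul_comm]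
  rw [hinner_eq]
  have hsum : μ[fun ω => ∑ i : Fin d, c ω i * f ω i|m]
      =ᵐ[μ] ∑ i : Fin d, μ[fun ω => c ω i * f ω i|m] := by
    have := condExp_finsetSum (μ := μ) (m := m)
      (f := fun (i : Fin d) ω => c ω i * f ω i) (s := Finset.univ) (fun i _ => hprod i)
    refine Filter.EventuallyEq.trans ?_ this
    apply condExp_congr_ae
    filter_upwards with ω
    simp
  refine hsum.trans ?_
  have hterm : ∀ i : Fin d, μ[fun ω => c ω i * f ω i|m]
      =ᵐ[μ] fun ω => c ω i * (μ[f|m]) ω i := by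
    intro i
    have h1 : μ[(fun ω => c ω i) * (fun ω => f ω i)|m]
        =ᵐ[μ] (fun ω => c ω i) * μ[fun ω => f ω i|m] :=
      condExp_mul_of_stronglyMeasurable_left (hci i) (hprod i) (hfii i)
    refine h1.trans ?_
    filter_upwards [condexp_euclidean_apply hm hfi i] with ω hω
    simp only [Pi.mul_apply]
    rw [← hω]
  have : ∑ i : Fin d, μ[fun ω => c ω i * f ω i|m]
      =ᵐ[μ] fun ω => ∑ i : Fin d, c ω i * (μ[f|m]) ω i := by
    have h := eventuallyEq_sum (s := (Finset.univ : Finset (Fin d))) (fun i _ => hterm i)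
    refine h.trans ?_
    filter_upwards with ω
    simp
  refine this.trans ?_
  filter_upwards with ω
  simp [PiLp.inner_apply, RCLike.inner_apply, mul_comm]
set_option maxHeartbeats 1000000 in
/-- Under (A1) with β ∈ [0,1), the drift of ‖Y_n‖ is
ρ‖Y_n‖^{−β} − ‖Y_n‖/(n+1) + O(‖Y_n‖^{−β}(log ‖Y_n‖)^{−2}). -/
theorem drift_estimate_supercritical
    {Ω : Type*} {m0 : MeasurableSpace Ω} {μ : Measure Ω} [IsProbabilityMeasure μ]
    {d : ℕ} (hd : 1 ≤ d)
    (ℱ : MeasureTheory.Filtration ℕ m0)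
    (X G Y Δ : ℕ → Ω → EuclideanSpace ℝ (Fin d))
    (hadapt : ∀ n, StronglyMeasurable[ℱ n] (X n))
    (x₁ : EuclideanSpace ℝ (Fin d)) (hX1 : ∀ ω, X 1 ω = x₁)
    (hG : ∀ n ω, G n ω = (n : ℝ)⁻¹ • ∑ i ∈ Finset.Icc 1 n, X i ω)
    (hY : ∀ n ω, Y n ω = X n ω - G n ω)
    (hΔ : ∀ n ω, Δ n ω = X (n + 1) ω - X n ω)
    (B ε₀ ρ β : ℝ) (hB : 0 < B) (hε₀ : 0 < ε₀) (hβ0 : 0 ≤ β)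
    (hA1i : ∀ n, 1 ≤ n → ∀ᵐ ω ∂μ, ‖Δ n ω‖ ≤ B)
    (hA1ii : ∃ C R : ℝ, 2 ≤ R ∧ ∀ n, 1 ≤ n → ∀ᵐ ω ∂μ, R ≤ ‖Y n ω‖ →
      ‖(μ[Δ n | ℱ n]) ω - (ρ * ‖Y n ω‖ ^ (-β - 1)) • Y n ω‖ ≤
        C * ‖Y n ω‖ ^ (-β) * Real.log ‖Y n ω‖ ^ (-2 : ℝ))
    (hA1iii : ∀ n, 1 ≤ n → ∀ᵐ ω ∂μ, ∀ e : EuclideanSpace ℝ (Fin d), ‖e‖ = 1 →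
      ε₀ ≤ (μ[Set.indicator {ω' | ε₀ ≤ (inner ℝ (Δ n ω') e : ℝ)} (fun _ => (1 : ℝ)) | ℱ n]) ω)
    (hβ1 : β < 1) :
    ∃ C' R' : ℝ, 2 ≤ R' ∧ ∀ n, 1 ≤ n → ∀ᵐ ω ∂μ, R' ≤ ‖Y n ω‖ →
      |(μ[(fun ω' => ‖Y (n + 1) ω'‖ - ‖Y n ω'‖) | ℱ n]) ω
          - ρ * ‖Y n ω‖ ^ (-β) + ‖Y n ω‖ / ((n : ℝ) + 1)|
        ≤ C' * ‖Y n ω‖ ^ (-β) * Real.log ‖Y n ω‖ ^ (-2 : ℝ) := by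
  obtain ⟨C, R, hR2, hii⟩ := hA1ii
  -- asymptotic threshold: (log t)² ≤ t^(1-β) for large t
  have hasymp : ∃ M : ℝ, 2 ≤ M ∧ ∀ t : ℝ, M ≤ t → Real.log t ^ 2 ≤ t ^ (1 - β) := by
    have hr : (0:ℝ) < (1 - β)/2 := by linarith
    have h := (isLittleO_log_rpow_atTop hr).bound one_pos
    have h2 : ∀ᶠ t : ℝ in atTop, Real.log t ^ 2 ≤ t ^ (1 - β) := by
      filter_upwards [h, eventually_ge_atTop (1:ℝ)] with t ht ht1
      have ht0 : (0:ℝ) < t := by linarith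
      have hb : |Real.log t| ≤ t ^ ((1-β)/2) := by
        simpa [Real.norm_eq_abs, abs_of_pos (Real.rpow_pos_of_pos ht0 _)] using ht
      have hh : Real.log t ^ 2 ≤ (t ^ ((1-β)/2)) ^ 2 := by
        nlinarith [sq_abs (Real.log t), abs_nonneg (Real.log t),
          Real.rpow_pos_of_pos ht0 ((1-β)/2)]
      calc Real.log t ^ 2 ≤ (t ^ ((1-β)/2)) ^ 2 := hh
        _ = t ^ (1 - β) := by
            rw [← Real.rpow_natCast (t ^ ((1-β)/2)) 2, ← Real.rpow_mul ht0.le]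
            norm_num
    obtain ⟨M, hM⟩ := h2.exists_forall_of_atTop
    exact ⟨max M 2, le_max_right _ _, fun t ht => hM t (le_trans (le_max_left _ _) ht)⟩
  obtain ⟨M, hM2, hM⟩ := hasymp
  -- recursion identity
  have hrec : ∀ n : ℕ, 1 ≤ n → ∀ ω, Y (n+1) ω = ((n : ℝ)/((n:ℝ)+1)) • (Y n ω + Δ n ω) := by
    intro n hn ω
    have hn' : (n : ℝ) ≠ 0 := Nat.cast_ne_zero.mpr (by omega)
    have hn1 : (n : ℝ) + 1 ≠ 0 := by positivity
    rw [hY, hY, hG, hG, hΔ, Finset.sum_Icc_succ_top (by omega : 1 ≤ n + 1)]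
    push_cast
    match_scalars <;> (field_simp; try ring)
  -- a.s. bound on Y
  have hYb : ∀ n : ℕ, 1 ≤ n → ∀ᵐ ω ∂μ, ‖Y n ω‖ ≤ n * B := by
    intro n hn
    induction n, hn using Nat.le_induction with
    | base =>
        have h1 : ∀ ω, Y 1 ω = 0 := by
          intro ω; rw [hY, hG]; simp
        filter_upwards with ω
        rw [h1 ω]; simp [hB.le]
    | succ n hn ih =>
        filter_upwards [ih, hA1i n hn] with ω h1 h2
        rw [hrec n hn ω, norm_smul]
        have hq0 : (0:ℝ) ≤ (n : ℝ)/((n:ℝ)+1) := by positivity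
        have hq1 : (n : ℝ)/((n:ℝ)+1) ≤ 1 := by
          rw [div_le_one (by positivity)]; linarith
        calc ‖(n : ℝ)/((n:ℝ)+1)‖ * ‖Y n ω + Δ n ω‖
            ≤ 1 * (‖Y n ω‖ + ‖Δ n ω‖) := by
              apply mul_le_mul _ (norm_add_le _ _) (norm_nonneg _) zero_le_one
              rwa [Real.norm_eq_abs, abs_of_nonneg hq0]
          _ ≤ (n * B + B) := by rw [one_mul]; linarith
          _ = ((n:ℕ)+1 : ℕ) * B := by push_cast; ring
  -- Y is adapted
  have hYsm : ∀ k, StronglyMeasurable[ℱ k] (Y k) := by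
    intro k
    have hYe : Y k = fun ω => X k ω - (k:ℝ)⁻¹ • ∑ i ∈ Finset.Icc 1 k, X i ω :=
      funext fun ω => by rw [hY, hG]
    rw [hYe]
    refine (hadapt k).sub (StronglyMeasurable.const_smul (f := fun ω => ∑ i ∈ Finset.Icc 1 k, X i ω) ?_ ((k:ℝ)⁻¹))
    exact Finset.stronglyMeasurable_fun_sum _ fun i hi =>
      (hadapt i).mono (ℱ.mono (Finset.mem_Icc.mp hi).2)
  set R' := max R M with hR'def
  have hR'2 : (2:ℝ) ≤ R' := le_trans hM2 (le_max_right _ _)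
  have hR'0 : (0:ℝ) < R' := by linarith
  refine ⟨|C| + 4*B*|ρ| + B^2/2, R', hR'2, ?_⟩
  intro n hn
  have hm : ℱ n ≤ m0 := ℱ.le n
  haveI : SigmaFinite (μ.trim hm) := inferInstance
  have hn1 : (0:ℝ) < (n:ℝ) + 1 := by positivity
  set q : ℝ := (n:ℝ)/((n:ℝ)+1) with hqdef
  have hq0 : (0:ℝ) ≤ q := by rw [hqdef]; positivity
  have hq1 : q ≤ 1 := by rw [hqdef, div_le_one hn1]; linarith
  set c : Ω → EuclideanSpace ℝ (Fin d) := fun ω => (‖Y n ω‖)⁻¹ • Y n ω with hcdef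
  set g : Ω → ℝ := fun ω => ‖Y n ω + Δ n ω‖ with hgdef
  set w : Ω → ℝ := fun ω => (inner ℝ (c ω) (Δ n ω) : ℝ) with hwdef
  set r : Ω → ℝ := fun ω => g ω - ‖Y n ω‖ - w ω with hrdef
  set A : Set Ω := {ω | R' ≤ ‖Y n ω‖} with hAdef
  set D : Ω → EuclideanSpace ℝ (Fin d) := μ[Δ n | ℱ n] with hDdef
  -- measurability
  have hYmF : StronglyMeasurable[ℱ n] (Y n) := hYsm n
  have hYm0 : StronglyMeasurable (Y n) := hYmF.mono hm
  have hYm1 : StronglyMeasurable (Y (n+1)) := (hYsm (n+1)).mono (ℱ.le (n+1))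
  have hΔm0 : StronglyMeasurable (Δ n) := by
    have he : Δ n = fun ω => X (n+1) ω - X n ω := funext (hΔ n)
    rw [he]; exact ((hadapt (n+1)).mono (ℱ.le (n+1))).sub ((hadapt n).mono hm)
  have hcF : StronglyMeasurable[ℱ n] c := by
    have h0 : Measurable[ℱ n] fun ω => ‖Y n ω‖ := hYmF.norm.measurable
    have h1 : Measurable[ℱ n] fun ω => (‖Y n ω‖)⁻¹ := h0.inv
    have h2 : Measurable[ℱ n] (Y n) := hYmF.measurable
    exact (h1.smul h2).stronglyMeasurable
  have hcb : ∀ ω, ‖c ω‖ ≤ 1 := by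
    intro ω
    rcases eq_or_ne (‖Y n ω‖) 0 with h0 | h0
    · simp [hcdef, h0]
    · rw [hcdef]
      simp only [norm_smul, norm_inv, norm_norm]
      rw [inv_mul_cancel₀ h0]
  have hΔb := hA1i n hn
  have hYbn := hYb n hn
  -- integrability
  have htyInt : Integrable (fun ω => ‖Y n ω‖) μ := by
    refine Integrable.mono' (integrable_const ((n:ℝ)*B)) hYm0.norm.aestronglyMeasurable ?_
    filter_upwards [hYbn] with ω hω
    simpa using hω
  have hgInt : Integrable g μ := by
    refine Integrable.mono' (integrable_const ((n:ℝ)*B + B))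
      ((hYm0.add hΔm0).norm.aestronglyMeasurable) ?_
    filter_upwards [hYbn, hΔb] with ω h1 h2
    rw [hgdef]
    simp only [norm_norm]
    exact le_trans (norm_add_le _ _) (by linarith)
  have hwInt : Integrable w μ := by
    refine Integrable.mono' (integrable_const B)
      (((hcF.mono hm).measurable.inner hΔm0.measurable).aestronglyMeasurable) ?_
    filter_upwards [hΔb] with ω hω
    rw [hwdef]
    simp only [Real.norm_eq_abs]
    calc |(inner ℝ (c ω) (Δ n ω) : ℝ)| ≤ ‖c ω‖ * ‖Δ n ω‖ := abs_real_inner_le_norm _ _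
      _ ≤ 1 * B := mul_le_mul (hcb ω) hω (norm_nonneg _) zero_le_one
      _ = B := one_mul B
  have hrInt : Integrable r μ := (hgInt.sub htyInt).sub hwInt
  have hF1 : Integrable (fun ω => ‖Y (n+1) ω‖) μ := by
    refine Integrable.mono' (integrable_const (((n:ℕ)+1:ℕ)*B)) hYm1.norm.aestronglyMeasurable ?_
    filter_upwards [hYb (n+1) (by omega)] with ω hω
    simpa using hω
  have hFInt : Integrable (fun ω' => ‖Y (n + 1) ω'‖ - ‖Y n ω'‖) μ := hF1.sub htyInt
  -- conditional expectation computations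
  have hty_ce : μ[fun ω => ‖Y n ω‖|ℱ n] = fun ω => ‖Y n ω‖ :=
    condExp_of_stronglyMeasurable hm hYmF.norm htyInt
  have hw_ce : μ[w|ℱ n] =ᵐ[μ] fun ω => (inner ℝ (c ω) (D ω) : ℝ) :=
    condexp_inner_pullout hm hcF hcb hΔm0.aestronglyMeasurable hΔb
  have hadd1 : μ[g|ℱ n] =ᵐ[μ] μ[fun ω => ‖Y n ω‖|ℱ n] + μ[w + r|ℱ n] := by
    have he : g = (fun ω => ‖Y n ω‖) + (w + r) := by
      funext ω; simp only [Pi.add_apply, hrdef]; ring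
    nth_rewrite 1 [he]
    exact condExp_add htyInt (hwInt.add hrInt) _
  have hadd2 : μ[w + r|ℱ n] =ᵐ[μ] μ[w|ℱ n] + μ[r|ℱ n] := condExp_add hwInt hrInt _
  have hFq : (fun ω' => ‖Y (n + 1) ω'‖ - ‖Y n ω'‖) = fun ω => q * g ω - ‖Y n ω‖ := by
    funext ω
    rw [hrec n hn ω, norm_smul, Real.norm_eq_abs, abs_of_nonneg hq0]
  have hsub : μ[fun ω' => ‖Y (n + 1) ω'‖ - ‖Y n ω'‖|ℱ n] =ᵐ[μ]
      fun ω => q * (μ[g|ℱ n]) ω - ‖Y n ω‖ := by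
    rw [hFq]
    have h1 : (fun ω => q * g ω - ‖Y n ω‖) = q • g - fun ω => ‖Y n ω‖ := rfl
    rw [h1]
    refine (condExp_sub (by exact hgInt.const_mul q) htyInt _).trans ?_
    rw [hty_ce]
    filter_upwards [condExp_smul (μ := μ) (m := ℱ n) q g] with ω hω
    simp only [Pi.sub_apply, Pi.smul_apply, smul_eq_mul] at hω ⊢
    rw [hω]
  have hE : μ[fun ω' => ‖Y (n + 1) ω'‖ - ‖Y n ω'‖|ℱ n] =ᵐ[μ]
      fun ω => q * ‖Y n ω‖ + q * (inner ℝ (c ω) (D ω) : ℝ) + q * (μ[r|ℱ n]) ω - ‖Y n ω‖ := by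
    filter_upwards [hsub, hadd1, hadd2, hw_ce] with ω e1 e2 e3 e4
    rw [e1]
    have : (μ[g|ℱ n]) ω = ‖Y n ω‖ + ((inner ℝ (c ω) (D ω) : ℝ) + (μ[r|ℱ n]) ω) := by
      rw [e2]
      simp only [Pi.add_apply, hty_ce]
      rw [e3]
      simp only [Pi.add_apply, e4]
    rw [this]; ring
  -- bound the remainder via indicator
  have hAmF : MeasurableSet[ℱ n] A := measurableSet_le measurable_const hYmF.norm.measurable
  set hbar : Ω → ℝ := A.indicator (fun ω => B^2/(2*‖Y n ω‖)) with hbardef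
  have hbarF : StronglyMeasurable[ℱ n] hbar :=
    ((measurable_const.div (hYmF.norm.measurable.const_mul 2)).indicator hAmF).stronglyMeasurable
  have hbarb : ∀ ω, ‖hbar ω‖ ≤ B^2/(2*R') := by
    intro ω
    rw [hbardef]
    by_cases hωA : ω ∈ A
    · rw [Set.indicator_of_mem hωA]
      have htR : R' ≤ ‖Y n ω‖ := hωA
      have ht0 : (0:ℝ) < ‖Y n ω‖ := by linarith
      rw [Real.norm_eq_abs, abs_of_nonneg (by positivity)]
      apply div_le_div_of_nonneg_left (by positivity) (by linarith) (by linarith)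
    · rw [Set.indicator_of_notMem hωA]
      simp only [norm_zero]
      exact div_nonneg (by positivity) (by linarith)
  have hbarInt : Integrable hbar μ :=
    Integrable.mono' (integrable_const (B^2/(2*R')))
      ((hbarF.mono hm).aestronglyMeasurable) (Filter.Eventually.of_forall hbarb)
  have hbar_ce : μ[hbar|ℱ n] = hbar := condExp_of_stronglyMeasurable hm hbarF hbarInt
  have hindInt : Integrable (A.indicator r) μ := hrInt.indicator (hm _ hAmF)
  have hind_bounds : ∀ᵐ ω ∂μ, 0 ≤ A.indicator r ω ∧ A.indicator r ω ≤ hbar ω := by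
    filter_upwards [hΔb] with ω hω
    by_cases hωA : ω ∈ A
    · rw [Set.indicator_of_mem hωA, hbardef, Set.indicator_of_mem hωA]
      have htR : R' ≤ ‖Y n ω‖ := hωA
      have ht0 : (0:ℝ) < ‖Y n ω‖ := by linarith
      obtain ⟨hg1, hg2⟩ := geom_bound (Y n ω) (Δ n ω) ht0
      constructor
      · exact hg1
      · refine le_trans hg2 ?_
        gcongr <;> nlinarith [norm_nonneg (Δ n ω)]
    · rw [Set.indicator_of_notMem hωA, hbardef, Set.indicator_of_notMem hωA]
      exact ⟨le_refl 0, le_refl 0⟩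
  have hr_ce1 : 0 ≤ᵐ[μ] μ[A.indicator r|ℱ n] :=
    condExp_nonneg (by filter_upwards [hind_bounds] with ω hω using hω.1)
  have hr_ce2 : μ[A.indicator r|ℱ n] ≤ᵐ[μ] hbar := by
    have := condExp_mono (μ := μ) (m := ℱ n) hindInt hbarInt
      (by filter_upwards [hind_bounds] with ω hω using hω.2)
    rwa [hbar_ce] at this
  have hr_ind : μ[A.indicator r|ℱ n] =ᵐ[μ] A.indicator (μ[r|ℱ n]) := condExp_indicator hrInt hAmF
  -- final pointwise estimate
  filter_upwards [hE, hr_ce1, hr_ce2, hr_ind, hii n hn, hYbn] with ω e1 e2 e3 e4 e5 e6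
  intro hωR'
  have hωA : ω ∈ A := hωR'
  have hRt : R ≤ ‖Y n ω‖ := le_trans (le_max_left _ _) hωR'
  have hMt : M ≤ ‖Y n ω‖ := le_trans (le_max_right _ _) hωR'
  have ht2 : (2:ℝ) ≤ ‖Y n ω‖ := le_trans hR'2 hωR'
  have ht0 : (0:ℝ) < ‖Y n ω‖ := by linarith
  have hlogpos : 0 < Real.log ‖Y n ω‖ := Real.log_pos (by linarith)
  have hL2pos : (0:ℝ) < Real.log ‖Y n ω‖ ^ 2 := by positivity
  have hT : (0:ℝ) < ‖Y n ω‖ ^ (-β) := Real.rpow_pos_of_pos ht0 _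
  have hLinveq : Real.log ‖Y n ω‖ ^ (-2:ℝ) = (Real.log ‖Y n ω‖ ^ 2)⁻¹ := by
    rw [show (-2:ℝ) = -((2:ℕ):ℝ) by norm_num, Real.rpow_neg hlogpos.le, Real.rpow_natCast]
  have hLinvpos : (0:ℝ) < (Real.log ‖Y n ω‖ ^ 2)⁻¹ := by positivity
  -- remainder value
  have hrem0 : 0 ≤ (μ[r|ℱ n]) ω := by
    have h7 := e2
    rw [e4, Set.indicator_of_mem hωA] at h7
    simpa using h7
  have hrem1 : (μ[r|ℱ n]) ω ≤ B^2/(2*‖Y n ω‖) := by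
    have h5 := e3
    rw [e4] at h5
    rw [Set.indicator_of_mem hωA] at h5
    rw [hbardef, Set.indicator_of_mem hωA] at h5
    exact h5
  -- inner product estimate
  have hnormv := e5 hRt
  have hWd : (inner ℝ (c ω) (D ω) : ℝ) - ρ * ‖Y n ω‖ ^ (-β)
      = (inner ℝ (c ω) ((D ω) - (ρ * ‖Y n ω‖ ^ (-β - 1)) • Y n ω) : ℝ) := by
    rw [inner_sub_right, real_inner_smul_right]
    have hcY : (inner ℝ (c ω) (Y n ω) : ℝ) = ‖Y n ω‖ := by
      rw [hcdef]
      simp only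
      rw [real_inner_smul_left, real_inner_self_eq_norm_sq]
      field_simp
    rw [hcY]
    have hpow : ‖Y n ω‖ ^ (-β - 1) * ‖Y n ω‖ = ‖Y n ω‖ ^ (-β) := by
      rw [← Real.rpow_add_one ht0.ne' (-β - 1)]
      congr 1
      ring
    rw [mul_assoc, hpow]
  have hW : |(inner ℝ (c ω) (D ω) : ℝ) - ρ * ‖Y n ω‖ ^ (-β)|
      ≤ |C| * ‖Y n ω‖ ^ (-β) * (Real.log ‖Y n ω‖ ^ 2)⁻¹ := by
    rw [hWd]
    calc |(inner ℝ (c ω) ((D ω) - (ρ * ‖Y n ω‖ ^ (-β - 1)) • Y n ω) : ℝ)|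
        ≤ ‖c ω‖ * ‖(D ω) - (ρ * ‖Y n ω‖ ^ (-β - 1)) • Y n ω‖ := abs_real_inner_le_norm _ _
      _ ≤ 1 * (C * ‖Y n ω‖ ^ (-β) * Real.log ‖Y n ω‖ ^ (-2:ℝ)) := by
          apply mul_le_mul (hcb ω) hnormv (norm_nonneg _) zero_le_one
      _ ≤ |C| * ‖Y n ω‖ ^ (-β) * (Real.log ‖Y n ω‖ ^ 2)⁻¹ := by
          rw [one_mul, hLinveq]
          have : C ≤ |C| := le_abs_self C
          nlinarith [hT, hLinvpos, mul_pos hT hLinvpos]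
  -- log bound from ‖Y n‖ ≤ nB
  have hnB0 : (0:ℝ) < (n:ℝ)*B := by
    have : (1:ℝ) ≤ (n:ℝ) := by exact_mod_cast hn
    nlinarith
  have hlogt : Real.log ‖Y n ω‖ ≤ 2 * Real.sqrt ((n:ℝ)*B) := by
    calc Real.log ‖Y n ω‖ ≤ Real.log ((n:ℝ)*B) := Real.log_le_log ht0 e6
      _ = 2 * Real.log (Real.sqrt ((n:ℝ)*B)) := by rw [Real.log_sqrt hnB0.le]; ring
      _ ≤ 2 * (Real.sqrt ((n:ℝ)*B) - 1) := by
          have := Real.log_le_sub_one_of_pos (Real.sqrt_pos.mpr hnB0)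
          linarith
      _ ≤ 2 * Real.sqrt ((n:ℝ)*B) := by linarith
  have hlog4 : Real.log ‖Y n ω‖ ^ 2 ≤ 4*((n:ℝ)*B) := by
    nlinarith [Real.sq_sqrt hnB0.le, Real.sqrt_nonneg ((n:ℝ)*B), hlogpos.le, hlogt]
  -- power bound from asymptotic threshold
  have htb : ‖Y n ω‖ ^ (β - 1) ≤ (Real.log ‖Y n ω‖ ^ 2)⁻¹ := by
    have h6 : Real.log ‖Y n ω‖ ^ 2 ≤ ‖Y n ω‖ ^ (1 - β) := hM _ hMt
    rw [show β - 1 = -(1 - β) by ring, Real.rpow_neg ht0.le]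
    exact inv_anti₀ hL2pos h6
  -- assemble
  rw [hLinveq]
  have hiden : (μ[fun ω' => ‖Y (n + 1) ω'‖ - ‖Y n ω'‖|ℱ n]) ω - ρ * ‖Y n ω‖ ^ (-β)
      + ‖Y n ω‖ / ((n:ℝ) + 1)
      = q * ((inner ℝ (c ω) (D ω) : ℝ) - ρ * ‖Y n ω‖ ^ (-β))
        - (ρ * ‖Y n ω‖ ^ (-β)) / ((n:ℝ)+1) + q * (μ[r|ℱ n]) ω := by
    rw [e1, hqdef]
    field_simp
    ring
  rw [hiden]
  have t1 : |q * ((inner ℝ (c ω) (D ω) : ℝ) - ρ * ‖Y n ω‖ ^ (-β))|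
      ≤ |C| * ‖Y n ω‖ ^ (-β) * (Real.log ‖Y n ω‖ ^ 2)⁻¹ := by
    rw [abs_mul, abs_of_nonneg hq0]
    calc q * |(inner ℝ (c ω) (D ω) : ℝ) - ρ * ‖Y n ω‖ ^ (-β)|
        ≤ 1 * |(inner ℝ (c ω) (D ω) : ℝ) - ρ * ‖Y n ω‖ ^ (-β)| :=
          mul_le_mul_of_nonneg_right hq1 (abs_nonneg _)
      _ = |(inner ℝ (c ω) (D ω) : ℝ) - ρ * ‖Y n ω‖ ^ (-β)| := one_mul _
      _ ≤ _ := hW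
  have t2 : |(ρ * ‖Y n ω‖ ^ (-β)) / ((n:ℝ)+1)|
      ≤ 4*B*|ρ| * ‖Y n ω‖ ^ (-β) * (Real.log ‖Y n ω‖ ^ 2)⁻¹ := by
    rw [abs_div, abs_mul, abs_of_nonneg hT.le, abs_of_nonneg hn1.le]
    rw [div_le_iff₀ hn1]
    have h4 : Real.log ‖Y n ω‖ ^ 2 ≤ 4*B*((n:ℝ)+1) := by nlinarith [hlog4]
    have h5 : (1:ℝ) ≤ (Real.log ‖Y n ω‖ ^ 2)⁻¹ * (4*B*((n:ℝ)+1)) := by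
      have h6 := mul_le_mul_of_nonneg_left h4 hLinvpos.le
      rwa [inv_mul_cancel₀ hL2pos.ne'] at h6
    calc |ρ| * ‖Y n ω‖ ^ (-β) = |ρ| * ‖Y n ω‖ ^ (-β) * 1 := by ring
      _ ≤ |ρ| * ‖Y n ω‖ ^ (-β) * ((Real.log ‖Y n ω‖ ^ 2)⁻¹ * (4*B*((n:ℝ)+1))) := by
          apply mul_le_mul_of_nonneg_left h5
          positivity
      _ = 4*B*|ρ| * ‖Y n ω‖ ^ (-β) * (Real.log ‖Y n ω‖ ^ 2)⁻¹ * ((n:ℝ)+1) := by ring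
  have t3 : |q * (μ[r|ℱ n]) ω| ≤ B^2/2 * (‖Y n ω‖ ^ (-β) * (Real.log ‖Y n ω‖ ^ 2)⁻¹) := by
    rw [abs_mul, abs_of_nonneg hq0, abs_of_nonneg hrem0]
    have hti : (‖Y n ω‖)⁻¹ = ‖Y n ω‖ ^ (-β) * ‖Y n ω‖ ^ (β-1) := by
      rw [← Real.rpow_add ht0, show -β + (β-1) = (-1:ℝ) by ring, Real.rpow_neg_one]
    calc q * (μ[r|ℱ n]) ω ≤ 1 * (μ[r|ℱ n]) ω := mul_le_mul_of_nonneg_right hq1 hrem0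
      _ = (μ[r|ℱ n]) ω := one_mul _
      _ ≤ B^2/(2*‖Y n ω‖) := hrem1
      _ = B^2/2 * (‖Y n ω‖)⁻¹ := by field_simp
      _ = B^2/2 * (‖Y n ω‖ ^ (-β) * ‖Y n ω‖ ^ (β-1)) := by rw [hti]
      _ ≤ B^2/2 * (‖Y n ω‖ ^ (-β) * (Real.log ‖Y n ω‖ ^ 2)⁻¹) := by
          apply mul_le_mul_of_nonneg_left _ (by positivity : (0:ℝ) ≤ B^2/2)
          exact mul_le_mul_of_nonneg_left htb hT.le
  calc |q * ((inner ℝ (c ω) (D ω) : ℝ) - ρ * ‖Y n ω‖ ^ (-β))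
        - (ρ * ‖Y n ω‖ ^ (-β)) / ((n:ℝ)+1) + q * (μ[r|ℱ n]) ω|
      ≤ |q * ((inner ℝ (c ω) (D ω) : ℝ) - ρ * ‖Y n ω‖ ^ (-β))
        - (ρ * ‖Y n ω‖ ^ (-β)) / ((n:ℝ)+1)| + |q * (μ[r|ℱ n]) ω| := abs_add_le _ _
    _ ≤ |q * ((inner ℝ (c ω) (D ω) : ℝ) - ρ * ‖Y n ω‖ ^ (-β))|
        + |(ρ * ‖Y n ω‖ ^ (-β)) / ((n:ℝ)+1)| + |q * (μ[r|ℱ n]) ω| := by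
          have := abs_sub (q * ((inner ℝ (c ω) (D ω) : ℝ) - ρ * ‖Y n ω‖ ^ (-β)))
            ((ρ * ‖Y n ω‖ ^ (-β)) / ((n:ℝ)+1))
          linarith
    _ ≤ |C| * ‖Y n ω‖ ^ (-β) * (Real.log ‖Y n ω‖ ^ 2)⁻¹
        + 4*B*|ρ| * ‖Y n ω‖ ^ (-β) * (Real.log ‖Y n ω‖ ^ 2)⁻¹
        + B^2/2 * (‖Y n ω‖ ^ (-β) * (Real.log ‖Y n ω‖ ^ 2)⁻¹) := by
          linarith [t1, t2, t3]
    _ = (|C| + 4*B*|ρ| + B^2/2) * ‖Y n ω‖ ^ (-β) * (Real.log ‖Y n ω‖ ^ 2)⁻¹ := by ring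
end

section
/- Let (Z_n)_{n≥1} be adapted, [0,∞)-valued, with bounded jumps and limsup_{n→∞} Z_n = ∞ a.s. Suppose there exist β ∈ [0,1) and ρ ∈ ℝ \ {0} such that for every ε > 0 there exists R ≥ 1 with: for every n, a.s. on {Z_n ≥ R}, |E_n[Z_{n+1} − Z_n] − ρ Z_n^{−β} + Z_n/n| ≤ ε Z_n^{−β} + ε Z_n/n. Then Z_n is transient (Z_n → ∞ a.s.) if ρ > 0, and recurrent (liminf_{n→∞} Z_n < ∞ a.s.) if ρ < 0. -/
open MeasureTheory Filter Real
open scoped ENNReal Topology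

section SupercriticalAux



lemma inv_taylor {x δ C : ℝ} (hx2C : 2*C ≤ x) (hx1 : 1 ≤ x)
    (hδ : |δ| ≤ C) : (x+δ)⁻¹ ≤ x⁻¹ - δ/x^2 + 2*C^2/x^3 := by
  have hx0 : 0 < x := by linarith
  have hδ2 := abs_le.1 hδ
  have hxδ : x/2 ≤ x + δ := by linarith
  have hxδ0 : 0 < x + δ := by linarith
  have hiden : (x+δ)⁻¹ = x⁻¹ - δ/x^2 + δ^2/(x^2*(x+δ)) := by
    field_simp
    ring
  rw [hiden]
  have hb : δ^2/(x^2*(x+δ)) ≤ C^2/(x^2*(x/2)) := by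
    apply div_le_div₀ (by positivity) (sq_le_sq' (by linarith) (by linarith))
      (by positivity)
    apply mul_le_mul_of_nonneg_left hxδ (by positivity)
  have he : C^2/(x^2*(x/2)) = 2*C^2/x^3 := by
    field_simp
  linarith [he ▸ hb]

lemma comp_ineq {η : ℝ} (hη0 : 0 < η) (hη1 : η ≤ 1) {j : ℕ} (hj : 1 ≤ j) :
    η/4 * ((j:ℝ))^(-(1:ℝ)-η) ≤ (j:ℝ)^(-η) - ((j:ℝ)+1)^(-η) := by
  have ha1 : (1:ℝ) ≤ (j:ℝ) := by exact_mod_cast hj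
  set a : ℝ := (j:ℝ) with hadef
  have ha0 : 0 < a := by linarith
  set b : ℝ := a + 1 with hbdef
  have hb0 : 0 < b := by linarith
  have hap : (0:ℝ) < a^(η:ℝ) := Real.rpow_pos_of_pos ha0 _
  have hbη : (0:ℝ) < b^(η:ℝ) := Real.rpow_pos_of_pos hb0 _
  have hbb : b^((1:ℝ)+η) = b * b^(η:ℝ) := by
    rw [Real.rpow_add hb0, Real.rpow_one]
  have haa : a^((1:ℝ)+η) = a * a^(η:ℝ) := by
    rw [Real.rpow_add ha0, Real.rpow_one]
  -- Step 1 : a^η * (b + η) ≤ b^(1+η)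
  have step1 : a^(η:ℝ) * b + η * a^(η:ℝ) ≤ b * b^(η:ℝ) := by
    have h1 : b = a * (1 + 1/a) := by rw [hbdef]; field_simp
    have h2 : b^((1:ℝ)+η) = a^((1:ℝ)+η) * (1 + 1/a)^((1:ℝ)+η) := by
      rw [h1, Real.mul_rpow (le_of_lt ha0) (by positivity)]
    have h3 : 1 + (1+η) * (1/a) ≤ (1 + 1/a)^((1:ℝ)+η) :=
      one_add_mul_self_le_rpow_one_add
        (le_trans (by norm_num : (-1:ℝ) ≤ 0) (by positivity)) (by linarith)
    have h5 : a^((1:ℝ)+η) * (1 + (1+η) * (1/a)) = a^(η:ℝ) * b + η * a^(η:ℝ) := by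
      rw [haa]; field_simp; ring
    calc a^(η:ℝ) * b + η * a^(η:ℝ)
        = a^((1:ℝ)+η) * (1 + (1+η) * (1/a)) := h5.symm
      _ ≤ a^((1:ℝ)+η) * (1 + 1/a)^((1:ℝ)+η) :=
          mul_le_mul_of_nonneg_left h3 (by positivity)
      _ = b^((1:ℝ)+η) := h2.symm
      _ = b * b^(η:ℝ) := hbb
  -- Step 2 : η * (b * b^η)⁻¹ ≤ (a^η)⁻¹ - (b^η)⁻¹
  have step2 : η * (b * b^(η:ℝ))⁻¹ ≤ (a^(η:ℝ))⁻¹ - (b^(η:ℝ))⁻¹ := by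
    rw [inv_sub_inv (ne_of_gt hap) (ne_of_gt hbη), ← div_eq_mul_inv]
    rw [div_le_div_iff₀ (by positivity) (by positivity)]
    nlinarith [mul_le_mul_of_nonneg_right step1 (le_of_lt hbη)]
  -- Step 3 : b * b^η ≤ 4 * (a * a^η)
  have step3 : b * b^(η:ℝ) ≤ 4 * (a * a^(η:ℝ)) := by
    have hba : b ≤ 2*a := by rw [hbdef]; linarith
    have h1 : b^(η:ℝ) ≤ (2*a)^(η:ℝ) :=
      Real.rpow_le_rpow (le_of_lt hb0) hba (le_of_lt hη0)
    have h2 : (2*a)^(η:ℝ) = 2^(η:ℝ) * a^(η:ℝ) :=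
      Real.mul_rpow (by norm_num) (le_of_lt ha0)
    have h3 : (2:ℝ)^(η:ℝ) ≤ 2 := by
      calc (2:ℝ)^(η:ℝ) ≤ 2^(1:ℝ) :=
            Real.rpow_le_rpow_of_exponent_le (by norm_num) hη1
        _ = 2 := Real.rpow_one 2
    have h4 : b^(η:ℝ) ≤ 2 * a^(η:ℝ) := by
      calc b^(η:ℝ) ≤ 2^(η:ℝ) * a^(η:ℝ) := h2 ▸ h1
        _ ≤ 2 * a^(η:ℝ) := mul_le_mul_of_nonneg_right h3 (le_of_lt hap)
    nlinarith
  -- final assembly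
  have e1 : a^(-η) = (a^(η:ℝ))⁻¹ := Real.rpow_neg (le_of_lt ha0) η
  have e2 : b^(-η) = (b^(η:ℝ))⁻¹ := Real.rpow_neg (le_of_lt hb0) η
  have e3 : a^(-(1:ℝ)-η) = (a * a^(η:ℝ))⁻¹ := by
    rw [show (-(1:ℝ)-η) = -((1:ℝ)+η) by ring, Real.rpow_neg (le_of_lt ha0), haa]
  rw [e1, e2, e3]
  have hfin : η/4 * (a * a^(η:ℝ))⁻¹ ≤ η * (b * b^(η:ℝ))⁻¹ := by
    have h1 : (4 * (a * a^(η:ℝ)))⁻¹ ≤ (b * b^(η:ℝ))⁻¹ :=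
      inv_anti₀ (by positivity) step3
    have h2 : η/4 * (a * a^(η:ℝ))⁻¹ = η * (4 * (a * a^(η:ℝ)))⁻¹ := by
      rw [mul_inv]; ring
    rw [h2]
    exact mul_le_mul_of_nonneg_left h1 (le_of_lt hη0)
  linarith


lemma L2bound {β ρ C L₂ : ℝ} (hβ1 : β < 1) (hρ : 0 < ρ) (hC0 : 0 ≤ C)
    (hL₂ : L₂ = max 1 ((16*C^2/ρ)^((1-β)⁻¹))) :
    2*C^2 ≤ ρ/8 * L₂^((1:ℝ)-β) := by
  have hL₂1 : (1:ℝ) ≤ L₂ := hL₂ ▸ le_max_left _ _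
  rcases eq_or_lt_of_le hC0 with hC | hC
  · have : (0:ℝ) < L₂^((1:ℝ)-β) := Real.rpow_pos_of_pos (by linarith) _
    nlinarith
  · have hw : (0:ℝ) < 16*C^2/ρ := by positivity
    have h1 : (16*C^2/ρ)^((1-β)⁻¹) ≤ L₂ := hL₂ ▸ le_max_right _ _
    have h2 : ((16*C^2/ρ)^((1-β)⁻¹))^((1:ℝ)-β) ≤ L₂^((1:ℝ)-β) :=
      Real.rpow_le_rpow (by positivity) h1 (by linarith)
    have h3 : ((16*C^2/ρ)^((1-β)⁻¹))^((1:ℝ)-β) = 16*C^2/ρ :=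
      Real.rpow_inv_rpow (le_of_lt hw) (by intro h; rw [sub_eq_zero] at h; linarith [h.symm])
    rw [h3] at h2
    calc 2*C^2 = ρ/8 * (16*C^2/ρ) := by field_simp; ring
      _ ≤ ρ/8 * L₂^((1:ℝ)-β) := mul_le_mul_of_nonneg_left h2 (by positivity)

lemma regime {β ρ C η c L₂ K₀ : ℝ} (hβ0 : 0 ≤ β) (hβ1 : β < 1) (hρ : 0 < ρ)
    (hC0 : 0 ≤ C)
    (hη : η = (1+β)⁻¹) (hc : c = ρ/12)
    (hL₂ : L₂ = max 1 ((16*C^2/ρ)^((1-β)⁻¹)))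
    (hK₀ : K₀ = (3/2)*c^(-η) + 2*C^2*c^(-(3*η)))
    {x : ℝ} (hx1 : 1 ≤ x) (hxL₂ : L₂ ≤ x) {j : ℕ} (hj : 1 ≤ j) :
    2*C^2*(x^3)⁻¹ - ((ρ/2) * x^(-β) - (3/2)*(x/(j:ℝ))) * (x^2)⁻¹
      ≤ K₀ * (j:ℝ)^(-(1:ℝ)-η) := by
  have hx0 : (0:ℝ) < x := by linarith
  have hj0 : (0:ℝ) < (j:ℝ) := by exact_mod_cast hj
  have hj1 : (1:ℝ) ≤ (j:ℝ) := by exact_mod_cast hj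
  have hc0 : 0 < c := by rw [hc]; linarith
  have hη0 : 0 < η := by rw [hη]; positivity
  have hη12 : 2⁻¹ ≤ η := by
    rw [hη]; exact inv_anti₀ (by linarith) (by linarith)
  have hη1 : η ≤ 1 := by
    rw [hη]
    calc (1+β)⁻¹ ≤ 1⁻¹ := inv_anti₀ (by norm_num) (by linarith)
      _ = 1 := by norm_num
  have hxβ : (0:ℝ) < x^(β:ℝ) := Real.rpow_pos_of_pos hx0 _
  have hxnβ : x^(-β) = (x^(β:ℝ))⁻¹ := Real.rpow_neg (le_of_lt hx0) β
  have hx2 : (0:ℝ) < x^2 := by positivity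
  have hx3 : (0:ℝ) < x^3 := by positivity
  have hK₀0 : (0:ℝ) ≤ K₀ := by
    rw [hK₀]
    have h1 : (0:ℝ) ≤ c^(-η) := Real.rpow_nonneg (le_of_lt hc0) _
    have h2 : (0:ℝ) ≤ c^(-(3*η)) := Real.rpow_nonneg (le_of_lt hc0) _
    positivity
  have hKj : (0:ℝ) ≤ K₀ * (j:ℝ)^(-(1:ℝ)-η) := by positivity
  have hexpand : 2*C^2*(x^3)⁻¹ - ((ρ/2) * x^(-β) - (3/2)*(x/(j:ℝ))) * (x^2)⁻¹
      = 2*C^2*(x^3)⁻¹ + (3/2)*((x/(j:ℝ))*(x^2)⁻¹) - (ρ/2)*(x^(-β)*(x^2)⁻¹) := by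
    ring
  rw [hexpand]
  rcases le_or_gt (x * x^(β:ℝ)) (c*j) with hcase | hcase
  · -- below the curve : LHS ≤ 0
    have t1 : x / j ≤ c * (x^(β:ℝ))⁻¹ := by
      rw [div_le_iff₀ hj0]
      calc x = x * x^(β:ℝ) * (x^(β:ℝ))⁻¹ := by field_simp
        _ ≤ c*j * (x^(β:ℝ))⁻¹ := mul_le_mul_of_nonneg_right hcase (by positivity)
        _ = c * (x^(β:ℝ))⁻¹ * j := by ring
    have e : x^(-β) * (x^2)⁻¹ = x^((1:ℝ)-β) * (x^3)⁻¹ := by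
      rw [hxnβ, show x^((1:ℝ)-β) = x * (x^(β:ℝ))⁻¹ from by
        rw [Real.rpow_sub hx0, Real.rpow_one, div_eq_mul_inv]]
      field_simp
    have hxx : (0:ℝ) < x^((1:ℝ)-β) := Real.rpow_pos_of_pos hx0 _
    have h2C : 2*C^2 ≤ ρ/8 * x^((1:ℝ)-β) := by
      refine le_trans (L2bound hβ1 hρ hC0 hL₂) ?_
      have hL₂0 : (0:ℝ) ≤ L₂ := by
        have : (1:ℝ) ≤ L₂ := hL₂ ▸ le_max_left _ _
        linarith
      exact mul_le_mul_of_nonneg_left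
        (Real.rpow_le_rpow hL₂0 hxL₂ (by linarith)) (by positivity)
    have t2 : 2*C^2*(x^3)⁻¹ ≤ ρ/8 * (x^(-β)*(x^2)⁻¹) := by
      rw [e]
      calc 2*C^2*(x^3)⁻¹ ≤ (ρ/8 * x^((1:ℝ)-β))*(x^3)⁻¹ :=
            mul_le_mul_of_nonneg_right h2C (inv_nonneg.2 hx3.le)
        _ = ρ/8 * (x^((1:ℝ)-β) * (x^3)⁻¹) := by ring
    have t3 : (3/2)*((x/(j:ℝ))*(x^2)⁻¹) ≤ ρ/8 * (x^(-β)*(x^2)⁻¹) := by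
      rw [hxnβ]
      have h1 : (x/(j:ℝ))*(x^2)⁻¹ ≤ (c * (x^(β:ℝ))⁻¹)*(x^2)⁻¹ :=
        mul_le_mul_of_nonneg_right t1 (inv_nonneg.2 hx2.le)
      calc (3/2)*((x/(j:ℝ))*(x^2)⁻¹) ≤ (3/2)*((c * (x^(β:ℝ))⁻¹)*(x^2)⁻¹) := by
            linarith
        _ = (3/2)*c * ((x^(β:ℝ))⁻¹*(x^2)⁻¹) := by ring
        _ = ρ/8 * ((x^(β:ℝ))⁻¹*(x^2)⁻¹) := by rw [hc]; ring
    have hnn : (0:ℝ) ≤ x^(-β) * (x^2)⁻¹ := by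
      rw [hxnβ]; positivity
    have hint : (0:ℝ) ≤ ρ * (x^(-β) * (x^2)⁻¹) := mul_nonneg (le_of_lt hρ) hnn
    nlinarith [t2, t3, hKj, hint]
  · -- above the curve
    have hxup : (c*(j:ℝ))^(η:ℝ) ≤ x := by
      have h1 : (c*(j:ℝ))^(η:ℝ) ≤ (x * x^(β:ℝ))^(η:ℝ) :=
        Real.rpow_le_rpow (by positivity) (le_of_lt hcase) (le_of_lt hη0)
      have h2 : x * x^(β:ℝ) = x^((1:ℝ)+β) := by
        rw [Real.rpow_add hx0, Real.rpow_one]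
      have h3 : (x^((1:ℝ)+β))^(η:ℝ) = x := by
        rw [← Real.rpow_mul (le_of_lt hx0)]
        rw [show ((1:ℝ)+β)*η = 1 from by rw [hη]; field_simp]
        exact Real.rpow_one x
      rw [h2, h3] at h1
      exact h1
    have hcjpos : (0:ℝ) < (c*(j:ℝ))^(η:ℝ) := Real.rpow_pos_of_pos (by positivity) _
    have hxinv : x⁻¹ ≤ c^(-η) * (j:ℝ)^(-η) := by
      have h2 : x⁻¹ ≤ ((c*(j:ℝ))^(η:ℝ))⁻¹ := inv_anti₀ hcjpos hxup
      have h3 : ((c*(j:ℝ))^(η:ℝ))⁻¹ = (c*(j:ℝ))^(-η) :=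
        (Real.rpow_neg (by positivity) η).symm
      have h4 : (c*(j:ℝ))^(-η) = c^(-η) * (j:ℝ)^(-η) :=
        Real.mul_rpow (le_of_lt hc0) (le_of_lt hj0)
      rw [h3, h4] at h2
      exact h2
    have hxinv0 : (0:ℝ) ≤ x⁻¹ := inv_nonneg.2 hx0.le
    have bound1 : (3/2)*((x/(j:ℝ))*(x^2)⁻¹) ≤ (3/2)*c^(-η)*(j:ℝ)^(-(1:ℝ)-η) := by
      have e1 : (x/(j:ℝ))*(x^2)⁻¹ = x⁻¹ * ((j:ℝ))⁻¹ := by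
        field_simp
      have e2 : (j:ℝ)^(-(1:ℝ)-η) = ((j:ℝ))⁻¹ * (j:ℝ)^(-η) := by
        rw [show (-(1:ℝ)-η) = (-1) + (-η) from by ring, Real.rpow_add hj0,
          Real.rpow_neg_one]
      rw [e1, e2]
      have h1 : x⁻¹ * ((j:ℝ))⁻¹ ≤ (c^(-η) * (j:ℝ)^(-η)) * ((j:ℝ))⁻¹ :=
        mul_le_mul_of_nonneg_right hxinv (by positivity)
      calc (3/2)*(x⁻¹ * ((j:ℝ))⁻¹) ≤ (3/2)*((c^(-η) * (j:ℝ)^(-η)) * ((j:ℝ))⁻¹) := by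
            linarith
        _ = (3/2)*c^(-η)*(((j:ℝ))⁻¹ * (j:ℝ)^(-η)) := by ring
    have bound2 : 2*C^2*(x^3)⁻¹ ≤ 2*C^2*c^(-(3*η))*(j:ℝ)^(-(1:ℝ)-η) := by
      have e1 : (x^3)⁻¹ = (x⁻¹)^3 := by rw [inv_pow]
      have h1 : (x⁻¹)^3 ≤ (c^(-η) * (j:ℝ)^(-η))^3 := by
        apply pow_le_pow_left₀ hxinv0 hxinv
      have e2 : (c^(-η) * (j:ℝ)^(-η))^3 = (c^(-η))^3 * ((j:ℝ)^(-η))^3 := by ring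
      have e3 : (c^(-η))^3 = c^(-(3*η)) := by
        rw [← Real.rpow_natCast (c^(-η)) 3, ← Real.rpow_mul (le_of_lt hc0)]
        norm_num [mul_comm]
      have e4 : ((j:ℝ)^(-η))^3 = (j:ℝ)^(-(3*η)) := by
        rw [← Real.rpow_natCast ((j:ℝ)^(-η)) 3, ← Real.rpow_mul hj0.le]
        norm_num [mul_comm]
      have h5 : (j:ℝ)^(-(3*η)) ≤ (j:ℝ)^(-(1:ℝ)-η) :=
        Real.rpow_le_rpow_of_exponent_le hj1 (by linarith)
      have hc1 : (0:ℝ) ≤ c^(-(3*η)) := Real.rpow_nonneg (le_of_lt hc0) _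
      calc 2*C^2*(x^3)⁻¹ = 2*C^2*((x⁻¹)^3) := by rw [e1]
        _ ≤ 2*C^2*((c^(-η) * (j:ℝ)^(-η))^3) :=
            mul_le_mul_of_nonneg_left h1 (by positivity)
        _ = 2*C^2*(c^(-(3*η)) * (j:ℝ)^(-(3*η))) := by rw [e2, e3, e4]
        _ ≤ 2*C^2*(c^(-(3*η)) * (j:ℝ)^(-(1:ℝ)-η)) := by
            apply mul_le_mul_of_nonneg_left _ (by positivity)
            exact mul_le_mul_of_nonneg_left h5 hc1
        _ = 2*C^2*c^(-(3*η))*(j:ℝ)^(-(1:ℝ)-η) := by ring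
    have bound3 : (0:ℝ) ≤ (ρ/2)*(x^(-β)*(x^2)⁻¹) := by
      rw [hxnβ]; positivity
    have hKexp : K₀ * (j:ℝ)^(-(1:ℝ)-η)
        = (3/2)*c^(-η)*(j:ℝ)^(-(1:ℝ)-η) + 2*C^2*c^(-(3*η))*(j:ℝ)^(-(1:ℝ)-η) := by
      rw [hK₀]; ring
    rw [hKexp]
    linarith [bound1, bound2, bound3]


variable {Ω : Type*} {m0 : MeasurableSpace Ω} {μ : Measure Ω}




variable {Ω : Type*} {m0 : MeasurableSpace Ω} {μ : Measure Ω}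

/-- the "still alive at time j" set: in S i for all i ∈ [k, j]. -/
def alive (S : ℕ → Set Ω) (k j : ℕ) : Set Ω := {ω | ∀ i, k ≤ i → i ≤ j → ω ∈ S i}

lemma mem_alive {S : ℕ → Set Ω} {k j : ℕ} {ω : Ω} :
    ω ∈ alive S k j ↔ ∀ i, k ≤ i → i ≤ j → ω ∈ S i := Iff.rfl

/-- the stopped process: start at F k, accumulate increments while alive. -/
noncomputable def stopProc (F : ℕ → Ω → ℝ) (S : ℕ → Set Ω) (k m : ℕ) (ω : Ω) : ℝ :=
  F k ω + ∑ j ∈ Finset.Ico k m,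
    (alive S k j).indicator (fun ω' => F (j+1) ω' - F j ω') ω

lemma alive_measurable (ℱ : MeasureTheory.Filtration ℕ m0) {S : ℕ → Set Ω}
    (hS : ∀ n, MeasurableSet[ℱ n] (S n)) (k j : ℕ) :
    MeasurableSet[ℱ j] (alive S k j) := by
  have : alive S k j = ⋂ (i) (_ : k ≤ i) (_ : i ≤ j), S i := by
    ext ω; simp [alive, Set.mem_iInter]
  rw [this]
  exact MeasurableSet.iInter fun i => MeasurableSet.iInter fun _ =>
    MeasurableSet.iInter fun hj => ℱ.mono hj _ (hS i)

lemma stopProc_of_le (F : ℕ → Ω → ℝ) (S : ℕ → Set Ω) {k m : ℕ} (h : m ≤ k) (ω : Ω) :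
    stopProc F S k m ω = F k ω := by
  rw [stopProc, Finset.Ico_eq_empty (by omega), Finset.sum_empty, add_zero]

lemma stopProc_eq_of_alive {F : ℕ → Ω → ℝ} {S : ℕ → Set Ω} {k : ℕ} {ω : Ω} :
    ∀ {m}, k ≤ m → (∀ i, k ≤ i → i < m → ω ∈ S i) → stopProc F S k m ω = F m ω := by
  intro m
  induction m with
  | zero =>
    intro h _
    have hk : k = 0 := by omega
    subst hk; exact stopProc_of_le F S le_rfl ω
  | succ m ih =>
    intro hk h
    rcases Nat.lt_or_ge k (m+1) with hlt | hge
    · have hkm : k ≤ m := by omega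
      have hsum : stopProc F S k (m+1) ω
          = stopProc F S k m ω + (alive S k m).indicator
              (fun ω' => F (m+1) ω' - F m ω') ω := by
        simp [stopProc, Finset.sum_Ico_succ_top hkm, add_assoc]
      have halive : ω ∈ alive S k m := fun i hki him => h i hki (by omega)
      rw [hsum, ih hkm (fun i hki him => h i hki (by omega)),
        Set.indicator_of_mem halive]
      ring
    · have hk1 : k = m + 1 := by omega
      rw [stopProc_of_le F S (le_of_eq hk1.symm), hk1]

lemma stopProc_eq_of_exit {F : ℕ → Ω → ℝ} {S : ℕ → Set Ω} {k t m : ℕ} {ω : Ω}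
    (hkt : k ≤ t) (htm : t < m) (hexit : ω ∉ S t)
    (hbefore : ∀ i, k ≤ i → i < t → ω ∈ S i) :
    stopProc F S k m ω = F t ω := by
  have hsplit : stopProc F S k m ω = stopProc F S k t ω
      + ∑ j ∈ Finset.Ico t m,
        (alive S k j).indicator (fun ω' => F (j+1) ω' - F j ω') ω := by
    simp only [stopProc]
    rw [← Finset.sum_Ico_consecutive _ hkt (le_of_lt htm), add_assoc]
  have hzero : ∀ j ∈ Finset.Ico t m,
      (alive S k j).indicator (fun ω' => F (j+1) ω' - F j ω') ω = 0 := by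
    intro j hj
    rw [Finset.mem_Ico] at hj
    refine Set.indicator_of_notMem (fun ha => hexit ?_) _
    exact (mem_alive.1 ha) t hkt hj.1
  rw [hsplit, Finset.sum_congr rfl hzero, Finset.sum_const_zero, add_zero,
    stopProc_eq_of_alive hkt hbefore]

lemma stopProc_cases (F : ℕ → Ω → ℝ) (S : ℕ → Set Ω) {k m : ℕ} (hkm : k ≤ m) (ω : Ω) :
    ∃ t, k ≤ t ∧ t ≤ m ∧ stopProc F S k m ω = F t ω := by
  by_cases h : ∀ i, k ≤ i → i < m → ω ∈ S i
  · exact ⟨m, hkm, le_rfl, stopProc_eq_of_alive hkm h⟩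
  · push_neg at h
    have hex : ∃ i, k ≤ i ∧ i < m ∧ ω ∉ S i := by
      obtain ⟨i, h1, h2, h3⟩ := h; exact ⟨i, h1, h2, h3⟩
    classical
    let t := Nat.find hex
    obtain ⟨ht1, ht2, ht3⟩ := Nat.find_spec hex
    refine ⟨t, ht1, le_of_lt ht2, stopProc_eq_of_exit ht1 ht2 ht3 ?_⟩
    intro i hki hit
    by_contra hnot
    exact Nat.find_min hex hit ⟨hki, by omega, hnot⟩

lemma stopProc_nonneg {F : ℕ → Ω → ℝ} {S : ℕ → Set Ω} {k m : ℕ} (hkm : k ≤ m)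
    (hF : ∀ n ω, 0 ≤ F n ω) (ω : Ω) : 0 ≤ stopProc F S k m ω := by
  obtain ⟨t, _, _, ht⟩ := stopProc_cases F S hkm ω
  rw [ht]; exact hF t ω

lemma stopProc_integrable [IsFiniteMeasure μ] (ℱ : MeasureTheory.Filtration ℕ m0)
    {F : ℕ → Ω → ℝ} {S : ℕ → Set Ω} {k : ℕ} (hFint : ∀ n, k ≤ n → Integrable (F n) μ)
    (hS : ∀ n, MeasurableSet[ℱ n] (S n)) (m : ℕ) :
    Integrable (stopProc F S k m) μ := by
  refine (hFint k le_rfl).add (integrable_finset_sum _ fun j hj => ?_)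
  rw [Finset.mem_Ico] at hj
  exact (((hFint (j+1) (by omega)).sub (hFint j hj.1)).indicator
    (ℱ.le j _ (alive_measurable ℱ hS k j)))

theorem stopProc_setIntegral_le [IsProbabilityMeasure μ]
    (ℱ : MeasureTheory.Filtration ℕ m0)
    {F : ℕ → Ω → ℝ} {S : ℕ → Set Ω} {k : ℕ}
    (hFint : ∀ n, k ≤ n → Integrable (F n) μ)
    (hS : ∀ n, MeasurableSet[ℱ n] (S n))
    (hdrift : ∀ j, k ≤ j → ∀ᵐ ω ∂μ, ω ∈ alive S k j →
      (μ[fun ω' => F (j+1) ω' - F j ω' | ℱ j]) ω ≤ 0)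
    {s : Set Ω} (hs : MeasurableSet[ℱ k] s) (m : ℕ) :
    ∫ ω in s, stopProc F S k m ω ∂μ ≤ ∫ ω in s, F k ω ∂μ := by
  induction m with
  | zero =>
    simp only [stopProc_of_le F S (Nat.zero_le k)]; exact le_rfl
  | succ m ih =>
    rcases Nat.lt_or_ge m k with hlt | hge
    · simp only [stopProc_of_le F S (show m + 1 ≤ k by omega)]; exact le_rfl
    · have hsum : ∀ ω, stopProc F S k (m+1) ω
          = stopProc F S k m ω + (alive S k m).indicator
              (fun ω' => F (m+1) ω' - F m ω') ω := by
        intro ω; simp [stopProc, Finset.sum_Ico_succ_top hge, add_assoc]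
      have hIndInt : Integrable ((alive S k m).indicator
          (fun ω' => F (m+1) ω' - F m ω')) μ :=
        ((hFint (m+1) (by omega)).sub (hFint m hge)).indicator
          (ℱ.le m _ (alive_measurable ℱ hS k m))
      have hsm : MeasurableSet[ℱ m] s := ℱ.mono hge _ hs
      have hsm0 : MeasurableSet s := ℱ.le m _ hsm
      have hle : ∫ ω in s, (alive S k m).indicator
          (fun ω' => F (m+1) ω' - F m ω') ω ∂μ ≤ 0 := by
        rw [← setIntegral_condExp (ℱ.le m) hIndInt hsm]
        have hce : μ[(alive S k m).indicator (fun ω' => F (m+1) ω' - F m ω') | ℱ m]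
            =ᵐ[μ] (alive S k m).indicator
              (μ[fun ω' => F (m+1) ω' - F m ω' | ℱ m]) :=
          condExp_indicator ((hFint (m+1) (by omega)).sub (hFint m hge))
            (alive_measurable ℱ hS k m)
        have hae : ∀ᵐ ω ∂μ, (μ[(alive S k m).indicator
            (fun ω' => F (m+1) ω' - F m ω') | ℱ m]) ω ≤ 0 := by
          filter_upwards [hce, hdrift m hge] with ω h1 h2
          rw [h1]
          by_cases hmem : ω ∈ alive S k m
          · rw [Set.indicator_of_mem hmem]; exact h2 hmem
          · rw [Set.indicator_of_notMem hmem]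
        have := ae_restrict_of_ae (μ := μ) (s := s) hae
        calc ∫ ω in s, (μ[(alive S k m).indicator
              (fun ω' => F (m+1) ω' - F m ω') | ℱ m]) ω ∂μ
            ≤ ∫ _ω in s, (0:ℝ) ∂μ := by
              apply integral_mono_ae (integrable_condExp.restrict) (integrable_const 0) this
          _ = 0 := by simp
      calc ∫ ω in s, stopProc F S k (m+1) ω ∂μ
          = ∫ ω in s, (stopProc F S k m ω + (alive S k m).indicator
              (fun ω' => F (m+1) ω' - F m ω') ω) ∂μ := by
            simp only [hsum]
        _ = ∫ ω in s, stopProc F S k m ω ∂μ + ∫ ω in s, (alive S k m).indicator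
              (fun ω' => F (m+1) ω' - F m ω') ω ∂μ := by
            exact integral_add ((stopProc_integrable ℱ hFint hS m).restrict)
              (hIndInt.restrict)
        _ ≤ ∫ ω in s, stopProc F S k m ω ∂μ + 0 := by linarith
        _ ≤ ∫ ω in s, F k ω ∂μ := by rw [add_zero]; exact ih







lemma exists_gt_of_limsup_top {Z : ℕ → Ω → ℝ} {ω : Ω}
    (h : Filter.limsup (fun n => ENNReal.ofReal (Z n ω)) Filter.atTop = ⊤)
    (b : ℝ) (m : ℕ) : ∃ j, m ≤ j ∧ b < Z j ω := by
  by_contra hcon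
  push_neg at hcon
  have hev : ∀ᶠ j in atTop, ENNReal.ofReal (Z j ω) ≤ ENNReal.ofReal b :=
    eventually_atTop.2 ⟨m, fun j hj => ENNReal.ofReal_le_ofReal (hcon j hj)⟩
  have hle := Filter.limsup_le_of_le (by isBoundedDefault) hev
  rw [h] at hle
  exact ENNReal.ofReal_ne_top (top_le_iff.1 hle)







lemma Dint [IsProbabilityMeasure μ] (ℱ : MeasureTheory.Filtration ℕ m0)
    (Z : ℕ → Ω → ℝ) (hadapt : ∀ n, StronglyMeasurable[ℱ n] (Z n))
    {C : ℝ} (hjump : ∀ n, ∀ᵐ ω ∂μ, |Z (n+1) ω - Z n ω| ≤ C) (n : ℕ) :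
    Integrable (fun ω' => Z (n+1) ω' - Z n ω') μ := by
  refine ⟨(((hadapt (n+1)).mono (ℱ.le _)).sub
    ((hadapt n).mono (ℱ.le n))).aestronglyMeasurable, ?_⟩
  refine HasFiniteIntegral.of_bounded (C := C) ?_
  filter_upwards [hjump n] with ω h
  rwa [Real.norm_eq_abs]

lemma Ebd [IsProbabilityMeasure μ] (ℱ : MeasureTheory.Filtration ℕ m0)
    (Z : ℕ → Ω → ℝ)
    {C : ℝ} (hC0 : 0 ≤ C) (hjump : ∀ n, ∀ᵐ ω ∂μ, |Z (n+1) ω - Z n ω| ≤ C) (n : ℕ) :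
    ∀ᵐ ω ∂μ, |(μ[(fun ω' => Z (n + 1) ω' - Z n ω') | ℱ n]) ω| ≤ C := by
  have h : ∀ᵐ ω ∂μ, |Z (n+1) ω - Z n ω| ≤ (C.toNNReal : ℝ) := by
    filter_upwards [hjump n] with ω h
    rwa [Real.coe_toNNReal _ hC0]
  have := ae_bdd_condExp_of_ae_bdd (m := ℱ n) h
  filter_upwards [this] with ω h2
  rwa [Real.coe_toNNReal _ hC0] at h2

-- a.s. bound on Z 1 from the drift condition
lemma Z1bd [IsProbabilityMeasure μ] (ℱ : MeasureTheory.Filtration ℕ m0)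
    (Z : ℕ → Ω → ℝ) (hpos : ∀ n ω, 0 ≤ Z n ω)
    {C : ℝ} (hC0 : 0 ≤ C) (hjump : ∀ n, ∀ᵐ ω ∂μ, |Z (n+1) ω - Z n ω| ≤ C)
    (β ρ : ℝ) (hβ0 : 0 ≤ β)
    (hdrift : ∀ ε : ℝ, 0 < ε → ∃ R : ℝ, 1 ≤ R ∧ ∀ n, 1 ≤ n → ∀ᵐ ω ∂μ, R ≤ Z n ω →
      |(μ[(fun ω' => Z (n + 1) ω' - Z n ω') | ℱ n]) ω - ρ * Z n ω ^ (-β) + Z n ω / n|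
        ≤ ε * Z n ω ^ (-β) + ε * Z n ω / n) :
    ∃ B : ℝ, 0 ≤ B ∧ ∀ᵐ ω ∂μ, Z 1 ω ≤ B := by
  obtain ⟨R, hR1, hRd⟩ := hdrift 2⁻¹ (by norm_num)
  refine ⟨max R (2*C + 2*|ρ| + 2), le_trans (by linarith) (le_max_left _ _), ?_⟩
  filter_upwards [hRd 1 le_rfl, Ebd ℱ Z hC0 hjump 1] with ω hd hb
  by_contra hgt
  push_neg at hgt
  have hZR : R ≤ Z 1 ω := le_trans (le_max_left _ _) hgt.le
  have h2 := abs_le.1 (hd hZR)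
  have hx1 : (1:ℝ) ≤ Z 1 ω := le_trans hR1 hZR
  have hrp0 : (0:ℝ) ≤ Z 1 ω ^ (-β) := Real.rpow_nonneg (by linarith) _
  have hrp1 : Z 1 ω ^ (-β) ≤ 1 :=
    Real.rpow_le_one_of_one_le_of_nonpos hx1 (by linarith)
  have hb2 := abs_le.1 hb
  have hcast : ((1:ℕ):ℝ) = 1 := by norm_num
  rw [hcast, div_one, div_one] at h2
  have hgt2 : 2*C + 2*|ρ| + 2 < Z 1 ω := lt_of_le_of_lt (le_max_right _ _) hgt
  have hρ1 : ρ * (Z 1 ω ^ (-β)) ≤ |ρ| := by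
    calc ρ * (Z 1 ω ^ (-β)) ≤ |ρ| * (Z 1 ω ^ (-β)) :=
          mul_le_mul_of_nonneg_right (le_abs_self ρ) hrp0
      _ ≤ |ρ| * 1 := mul_le_mul_of_nonneg_left hrp1 (abs_nonneg ρ)
      _ = |ρ| := mul_one _
  have hε1 : (2:ℝ)⁻¹ * (Z 1 ω ^ (-β)) ≤ 1 := by nlinarith
  -- h2.2 : E - ρ * x^(-β) + x ≤ 2⁻¹ * x^(-β) + 2⁻¹ * x
  linarith [h2.2, hb2.1, hρ1, hε1, hgt2]

lemma Zbd [IsProbabilityMeasure μ] (ℱ : MeasureTheory.Filtration ℕ m0)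
    (Z : ℕ → Ω → ℝ)
    {C B : ℝ} (hjump : ∀ n, ∀ᵐ ω ∂μ, |Z (n+1) ω - Z n ω| ≤ C)
    (hZ1 : ∀ᵐ ω ∂μ, Z 1 ω ≤ B) :
    ∀ᵐ ω ∂μ, ∀ n, 1 ≤ n → Z n ω ≤ B + C * n := by
  have hall : ∀ᵐ ω ∂μ, ∀ n, |Z (n+1) ω - Z n ω| ≤ C := ae_all_iff.2 hjump
  filter_upwards [hZ1, hall] with ω h1 hj
  intro n hn
  induction n with
  | zero => omega
  | succ m ih =>
    rcases Nat.lt_or_ge m 1 with hm | hm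
    · have : m = 0 := by omega
      subst this
      have : (0:ℝ) ≤ C := le_trans (abs_nonneg _) (hj 1)
      push_cast
      nlinarith
    · have h := (abs_le.1 (hj m)).2
      have := ih hm
      push_cast
      push_cast at this
      nlinarith

lemma Zint [IsProbabilityMeasure μ] (ℱ : MeasureTheory.Filtration ℕ m0)
    (Z : ℕ → Ω → ℝ) (hadapt : ∀ n, StronglyMeasurable[ℱ n] (Z n))
    (hpos : ∀ n ω, 0 ≤ Z n ω)
    {C B : ℝ} (hjump : ∀ n, ∀ᵐ ω ∂μ, |Z (n+1) ω - Z n ω| ≤ C)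
    (hZ1 : ∀ᵐ ω ∂μ, Z 1 ω ≤ B) :
    ∀ n, 1 ≤ n → Integrable (Z n) μ := by
  intro n hn
  refine ⟨((hadapt n).mono (ℱ.le n)).aestronglyMeasurable, ?_⟩
  refine HasFiniteIntegral.of_bounded (C := B + C * n) ?_
  filter_upwards [Zbd ℱ Z hjump hZ1] with ω h
  rw [Real.norm_eq_abs, abs_of_nonneg (hpos n ω)]
  exact h n hn





lemma Fdrift [IsProbabilityMeasure μ] (ℱ : MeasureTheory.Filtration ℕ m0)
    (Z : ℕ → Ω → ℝ)
    (hadapt : ∀ n, StronglyMeasurable[ℱ n] (Z n))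
    {C : ℝ} (hC0 : 0 ≤ C) (hjump : ∀ n, ∀ᵐ ω ∂μ, |Z (n+1) ω - Z n ω| ≤ C)
    (hDint : ∀ n, Integrable (fun ω' => Z (n+1) ω' - Z n ω') μ)
    {β ρ : ℝ} (hβ0 : 0 ≤ β) (hβ1 : β < 1) (hρ : 0 < ρ)
    {η c L₂ K₀ A : ℝ} (hη : η = (1+β)⁻¹) (hc : c = ρ/12)
    (hL₂ : L₂ = max 1 ((16*C^2/ρ)^((1-β)⁻¹)))
    (hK₀ : K₀ = (3/2)*c^(-η) + 2*C^2*c^(-(3*η)))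
    (hA : A = 4*K₀/η)
    {r : ℝ} (hr2C : 2*C ≤ r) (hr1 : 1 ≤ r) (hrL₂ : L₂ ≤ r)
    {F : ℕ → Ω → ℝ}
    (hF : F = fun n ω => (max (Z n ω) (r - C))⁻¹ + A*((n:ℕ):ℝ)^(-η))
    {j : ℕ} (hj : 1 ≤ j)
    (hlow : ∀ᵐ ω ∂μ, r ≤ Z j ω →
      (ρ/2) * Z j ω ^ (-β) - (3/2) * (Z j ω / j)
        ≤ (μ[(fun ω' => Z (j + 1) ω' - Z j ω') | ℱ j]) ω) :
    ∀ᵐ ω ∂μ, r ≤ Z j ω →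
      (μ[(fun ω' => F (j+1) ω' - F j ω') | ℱ j]) ω ≤ 0 := by
  have hrC0 : 0 < r - C := by linarith
  have hη0 : 0 < η := by rw [hη]; exact inv_pos.2 (by linarith)
  have hη1 : η ≤ 1 := by
    rw [hη]
    calc (1+β)⁻¹ ≤ 1⁻¹ := inv_anti₀ (by norm_num) (by linarith)
      _ = 1 := by norm_num
  have hc0 : 0 < c := by rw [hc]; linarith
  have hK₀0 : (0:ℝ) ≤ K₀ := by
    rw [hK₀]
    have h1 : (0:ℝ) ≤ c^(-η) := Real.rpow_nonneg hc0.le _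
    have h2 : (0:ℝ) ≤ c^(-(3*η)) := Real.rpow_nonneg hc0.le _
    positivity
  have hA0 : 0 ≤ A := by rw [hA]; positivity
  -- the capped inverse process
  set Yc : ℕ → Ω → ℝ := fun n ω => (max (Z n ω) (r - C))⁻¹ with hYc
  have hYsm : ∀ n, StronglyMeasurable[ℱ n] (Yc n) := fun n =>
    (((hadapt n).measurable.max measurable_const).inv).stronglyMeasurable
  have hYbd : ∀ n ω, 0 ≤ Yc n ω ∧ Yc n ω ≤ (r - C)⁻¹ := by
    intro n ω
    constructor
    · apply inv_nonneg.2; exact le_trans hrC0.le (le_max_right _ _)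
    · exact inv_anti₀ hrC0 (le_max_right _ _)
  have hYint : ∀ n, Integrable (Yc n) μ := by
    intro n
    refine ⟨((hYsm n).mono (ℱ.le n)).aestronglyMeasurable, ?_⟩
    refine HasFiniteIntegral.of_bounded (C := (r-C)⁻¹) (ae_of_all _ fun ω => ?_)
    rw [Real.norm_eq_abs, abs_of_nonneg (hYbd n ω).1]
    exact (hYbd n ω).2
  -- the region
  set s : Set Ω := {ω | r ≤ Z j ω} with hsdef
  have hs : MeasurableSet[ℱ j] s := (hadapt j).measurable measurableSet_Ici
  have hsm0 : MeasurableSet s := ℱ.le j _ hs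
  -- pieces
  set g : Ω → ℝ := s.indicator (fun ω => ((Z j ω)^2)⁻¹) with hgdef
  have hgsm : StronglyMeasurable[ℱ j] g :=
    ((((hadapt j).measurable.pow_const 2).inv).stronglyMeasurable).indicator hs
  have hgbd : ∀ ω, ‖g ω‖ ≤ 1 := by
    intro ω
    rw [Real.norm_eq_abs]
    by_cases hω : ω ∈ s
    · rw [hgdef, Set.indicator_of_mem hω]
      have hx1 : (1:ℝ) ≤ Z j ω := le_trans hr1 hω
      rw [abs_of_nonneg (by positivity)]
      exact inv_le_one_of_one_le₀ (one_le_pow₀ hx1)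
    · rw [hgdef, Set.indicator_of_notMem hω]
      norm_num
  set W : Ω → ℝ := s.indicator (fun ω => Yc j ω + 2*C^2*((Z j ω)^3)⁻¹) with hWdef
  have hWsm : StronglyMeasurable[ℱ j] W := by
    apply StronglyMeasurable.indicator _ hs
    apply (hYsm j).add
    exact (((hadapt j).measurable.pow_const 3).inv.const_mul _).stronglyMeasurable
  have hWint : Integrable W μ := by
    refine ⟨((hWsm.mono (ℱ.le j))).aestronglyMeasurable, ?_⟩
    refine HasFiniteIntegral.of_bounded (C := (r-C)⁻¹ + 2*C^2) (ae_of_all _ fun ω => ?_)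
    rw [Real.norm_eq_abs]
    by_cases hω : ω ∈ s
    · rw [hWdef, Set.indicator_of_mem hω]
      have hx1 : (1:ℝ) ≤ Z j ω := le_trans hr1 hω
      have h1 : (0:ℝ) ≤ ((Z j ω)^3)⁻¹ := by positivity
      have h2 : ((Z j ω)^3)⁻¹ ≤ 1 := inv_le_one_of_one_le₀ (one_le_pow₀ hx1)
      have h3 := hYbd j ω
      rw [abs_of_nonneg (by nlinarith [h3.1])]
      nlinarith [h3.2]
    · rw [hWdef, Set.indicator_of_notMem hω]
      have : (0:ℝ) < (r-C)⁻¹ := inv_pos.2 hrC0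
      simp only [abs_zero]
      nlinarith
  set D : Ω → ℝ := fun ω' => Z (j+1) ω' - Z j ω' with hD
  have hDj : Integrable D μ := hDint j
  have hintgD : Integrable (fun ω => g ω * D ω) μ :=
    hDj.bdd_mul ((hgsm.mono (ℱ.le j)).aestronglyMeasurable) (ae_of_all _ hgbd)
  -- pointwise Taylor inequality
  have P1 : ∀ᵐ ω ∂μ, s.indicator (Yc (j+1)) ω ≤ W ω - g ω * D ω := by
    filter_upwards [hjump j] with ω hδ
    by_cases hω : ω ∈ s
    · rw [Set.indicator_of_mem hω, hWdef, Set.indicator_of_mem hω, hgdef,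
        Set.indicator_of_mem hω]
      have hZr : r ≤ Z j ω := hω
      have hx1 : (1:ℝ) ≤ Z j ω := le_trans hr1 hZr
      have hδ2 := abs_le.1 hδ
      have hZ1pos : 0 < Z (j+1) ω := by linarith
      have hY1 : Yc (j+1) ω ≤ (Z (j+1) ω)⁻¹ := inv_anti₀ hZ1pos (le_max_left _ _)
      have hYj : Yc j ω = (Z j ω)⁻¹ := by
        simp only [hYc]
        congr 1
        exact max_eq_left (by linarith)
      have htay := inv_taylor (x := Z j ω) (δ := Z (j+1) ω - Z j ω) (C := C)
        (by linarith) hx1 hδ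
      rw [show Z j ω + (Z (j+1) ω - Z j ω) = Z (j+1) ω from by ring] at htay
      rw [div_eq_mul_inv, div_eq_mul_inv] at htay
      rw [hYj]
      simp only [hD]
      linarith [hY1, htay]
    · rw [Set.indicator_of_notMem hω, hWdef, Set.indicator_of_notMem hω, hgdef,
        Set.indicator_of_notMem hω]
      simp
  -- conditional expectation chain
  have hIind : Integrable (s.indicator (Yc (j+1))) μ := (hYint (j+1)).indicator hsm0
  have hWgD : Integrable (fun ω => W ω - g ω * D ω) μ := hWint.sub hintgD
  have c1 : μ[s.indicator (Yc (j+1)) | ℱ j] ≤ᵐ[μ] μ[fun ω => W ω - g ω * D ω | ℱ j] :=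
    condExp_mono hIind hWgD P1
  have c2 : μ[fun ω => W ω - g ω * D ω | ℱ j]
      =ᵐ[μ] μ[W | ℱ j] - μ[fun ω => g ω * D ω | ℱ j] := condExp_sub hWint hintgD _
  have c3 : μ[W | ℱ j] = W := condExp_of_stronglyMeasurable (ℱ.le j) hWsm hWint
  have c4 : μ[fun ω => g ω * D ω | ℱ j] =ᵐ[μ] fun ω => g ω * (μ[D | ℱ j]) ω :=
    condExp_mul_of_stronglyMeasurable_left hgsm hintgD hDj
  have c5 : μ[s.indicator (Yc (j+1)) | ℱ j] =ᵐ[μ] s.indicator (μ[Yc (j+1) | ℱ j]) :=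
    condExp_indicator (hYint (j+1)) hs
  -- ΔF decomposition
  have hsplit : (fun ω' => F (j+1) ω' - F j ω')
      = (Yc (j+1) - Yc j)
        + fun _ => (A*(((j+1):ℕ):ℝ)^(-η) - A*((j:ℕ):ℝ)^(-η)) := by
    funext ω'
    simp only [Pi.add_apply, Pi.sub_apply, hF, hYc]
    ring
  have c7 : μ[(Yc (j+1) - Yc j)
        + (fun _ => (A*(((j+1):ℕ):ℝ)^(-η) - A*((j:ℕ):ℝ)^(-η))) | ℱ j]
      =ᵐ[μ] μ[Yc (j+1) - Yc j | ℱ j]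
        + fun _ => (A*(((j+1):ℕ):ℝ)^(-η) - A*((j:ℕ):ℝ)^(-η)) := by
    have h1 := condExp_add (μ := μ) (m := ℱ j)
      ((hYint (j+1)).sub (hYint j))
      (integrable_const (A*(((j+1):ℕ):ℝ)^(-η) - A*((j:ℕ):ℝ)^(-η)))
    have h4 : μ[(fun _ : Ω => (A*(((j+1):ℕ):ℝ)^(-η) - A*((j:ℕ):ℝ)^(-η))) | ℱ j]
        = fun _ => (A*(((j+1):ℕ):ℝ)^(-η) - A*((j:ℕ):ℝ)^(-η)) :=
      condExp_const (ℱ.le j) _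
    filter_upwards [h1] with ω hω
    rw [hω]
    simp only [Pi.add_apply]
    rw [congrFun h4 ω]
  have c8 : μ[Yc (j+1) - Yc j | ℱ j]
      =ᵐ[μ] μ[Yc (j+1) | ℱ j] - Yc j := by
    refine (condExp_sub (hYint (j+1)) (hYint j) _).trans ?_
    rw [condExp_of_stronglyMeasurable (ℱ.le j) (hYsm j) (hYint j)]
  -- compensator inequality
  have hcomp : A*(((j+1):ℕ):ℝ)^(-η) - A*((j:ℕ):ℝ)^(-η) ≤ -(K₀ * (j:ℝ)^(-(1:ℝ)-η)) := by
    have h := comp_ineq hη0 hη1 hj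
    have hcast : (((j+1):ℕ):ℝ) = (j:ℝ)+1 := by push_cast; ring
    rw [hcast]
    have h2 : A * (η/4 * ((j:ℝ))^(-(1:ℝ)-η)) ≤ A * ((j:ℝ)^(-η) - ((j:ℝ)+1)^(-η)) :=
      mul_le_mul_of_nonneg_left h hA0
    have h3 : A * (η/4) = K₀ := by rw [hA]; field_simp
    have h5 : A*(η/4*((j:ℝ))^(-(1:ℝ)-η)) = K₀ * (j:ℝ)^(-(1:ℝ)-η) := by
      rw [← h3]; ring
    rw [h5] at h2
    linarith [h2]
  -- final assembly
  rw [hsplit]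
  filter_upwards [c1, c2, c4, c5, c7, c8, hlow] with ω e1 e2 e4 e5 e7 e8 elow hZr
  have hωs : ω ∈ s := hZr
  have hx1 : (1:ℝ) ≤ Z j ω := le_trans hr1 hZr
  -- main chain
  have k5 : (μ[s.indicator (Yc (j+1)) | ℱ j]) ω = (μ[Yc (j+1) | ℱ j]) ω := by
    rw [e5, Set.indicator_of_mem hωs]
  have k1 : (μ[Yc (j+1) | ℱ j]) ω ≤ W ω - g ω * (μ[D | ℱ j]) ω := by
    rw [← k5]
    refine le_trans e1 ?_
    rw [e2]
    simp only [Pi.sub_apply]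
    rw [e4, c3]
  have kW : W ω = Yc j ω + 2*C^2*((Z j ω)^3)⁻¹ := by
    rw [hWdef, Set.indicator_of_mem hωs]
  have kg : g ω = ((Z j ω)^2)⁻¹ := by
    rw [hgdef, Set.indicator_of_mem hωs]
  rw [kW, kg] at k1
  have hlow2 : (ρ/2)*(Z j ω)^(-β) - (3/2)*(Z j ω/(j:ℝ)) ≤ (μ[D | ℱ j]) ω := elow hZr
  have hreg := regime (C := C) hβ0 hβ1 hρ hC0 hη hc hL₂ hK₀
    (x := Z j ω) hx1 (le_trans hrL₂ hZr) hj
  have hmul : ((Z j ω)^2)⁻¹ * ((ρ/2)*(Z j ω)^(-β) - (3/2)*(Z j ω/(j:ℝ)))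
      ≤ ((Z j ω)^2)⁻¹ * (μ[D | ℱ j]) ω :=
    mul_le_mul_of_nonneg_left hlow2 (by positivity)
  rw [e7]
  simp only [Pi.add_apply]
  rw [e8]
  simp only [Pi.sub_apply]
  linarith [k1, hmul, hreg, hcomp]


lemma transience_level [IsProbabilityMeasure μ] (ℱ : MeasureTheory.Filtration ℕ m0)
    (Z : ℕ → Ω → ℝ)
    (hadapt : ∀ n, StronglyMeasurable[ℱ n] (Z n))
    {C : ℝ} (hC0 : 0 ≤ C) (hjump : ∀ n, ∀ᵐ ω ∂μ, |Z (n+1) ω - Z n ω| ≤ C)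
    (hDint : ∀ n, Integrable (fun ω' => Z (n+1) ω' - Z n ω') μ)
    (hlimsup : ∀ᵐ ω ∂μ, Filter.limsup (fun n => ENNReal.ofReal (Z n ω)) Filter.atTop = ⊤)
    {β ρ : ℝ} (hβ0 : 0 ≤ β) (hβ1 : β < 1) (hρ : 0 < ρ)
    {η c L₂ K₀ A : ℝ} (hη : η = (1+β)⁻¹) (hc : c = ρ/12)
    (hL₂ : L₂ = max 1 ((16*C^2/ρ)^((1-β)⁻¹)))
    (hK₀ : K₀ = (3/2)*c^(-η) + 2*C^2*c^(-(3*η)))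
    (hA : A = 4*K₀/η)
    {r : ℝ} (hr2C : 2*C ≤ r) (hr1 : 1 ≤ r) (hrL₂ : L₂ ≤ r)
    (hlow : ∀ j : ℕ, 1 ≤ j → ∀ᵐ ω ∂μ, r ≤ Z j ω →
      (ρ/2) * Z j ω ^ (-β) - (3/2) * (Z j ω / j)
        ≤ (μ[(fun ω' => Z (j + 1) ω' - Z j ω') | ℱ j]) ω) :
    μ {ω | ∀ m : ℕ, ∃ j, m ≤ j ∧ Z j ω < r} = 0 := by
  classical
  have hrC0 : 0 < r - C := by linarith
  have hη0 : 0 < η := by rw [hη]; exact inv_pos.2 (by linarith)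
  have hc0 : 0 < c := by rw [hc]; linarith
  have hK₀0 : (0:ℝ) ≤ K₀ := by
    rw [hK₀]
    have h1 : (0:ℝ) ≤ c^(-η) := Real.rpow_nonneg hc0.le _
    have h2 : (0:ℝ) ≤ c^(-(3*η)) := Real.rpow_nonneg hc0.le _
    positivity
  have hA0 : 0 ≤ A := by rw [hA]; positivity
  have hr0 : (0:ℝ) < r := by linarith
  set F : ℕ → Ω → ℝ := fun n ω => (max (Z n ω) (r - C))⁻¹ + A*((n:ℕ):ℝ)^(-η) with hF
  have hFpos : ∀ n ω, 0 ≤ F n ω := fun n ω =>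
    add_nonneg (inv_nonneg.2 (le_trans hrC0.le (le_max_right _ _)))
      (mul_nonneg hA0 (Real.rpow_nonneg (Nat.cast_nonneg n) _))
  have hrpow1 : ∀ n : ℕ, ((n:ℕ):ℝ)^(-η) ≤ 1 := by
    intro n
    rcases Nat.eq_zero_or_pos n with h0 | h1
    · subst h0
      rw [Nat.cast_zero, Real.zero_rpow (by linarith)]
      norm_num
    · exact Real.rpow_le_one_of_one_le_of_nonpos (by exact_mod_cast h1) (by linarith)
  have hFint : ∀ n, Integrable (F n) μ := by
    intro n
    refine ⟨((((hadapt n).measurable.max measurable_const).inv.stronglyMeasurable.mono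
      (ℱ.le n)).add_const _).aestronglyMeasurable, ?_⟩
    refine HasFiniteIntegral.of_bounded (C := (r-C)⁻¹ + A) (ae_of_all _ fun ω => ?_)
    rw [Real.norm_eq_abs, abs_of_nonneg (hFpos n ω)]
    have h1 : (max (Z n ω) (r - C))⁻¹ ≤ (r-C)⁻¹ := inv_anti₀ hrC0 (le_max_right _ _)
    have h2 : A*((n:ℕ):ℝ)^(-η) ≤ A*1 := mul_le_mul_of_nonneg_left (hrpow1 n) hA0
    simp only [hF]
    linarith
  set S : ℕ → Set Ω := fun j => {ω | r ≤ Z j ω} with hS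
  have hSmeas : ∀ j, MeasurableSet[ℱ j] (S j) :=
    fun j => (hadapt j).measurable measurableSet_Ici
  set E : Set Ω := {ω | ∀ m : ℕ, ∃ j, m ≤ j ∧ Z j ω < r} with hE
  -- master bound
  have master : ∀ M n₀ : ℕ, r ≤ M → 1 ≤ n₀ →
      μ E ≤ ENNReal.ofReal (r * ((M:ℝ)⁻¹ + A*(n₀:ℝ)^(-η))) := by
    intro M n₀ hM hn₀
    have hM0 : (0:ℝ) < M := lt_of_lt_of_le hr0 hM
    have hn₀0 : (0:ℝ) < n₀ := by exact_mod_cast hn₀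
    set t : ℕ → Set Ω := fun i =>
      {ω | (M:ℝ) ≤ Z (n₀+i) ω ∧ ∀ l, l < i → Z (n₀+l) ω < M} with ht
    have htmeas : ∀ i, MeasurableSet[ℱ (n₀+i)] (t i) := by
      intro i
      have : t i = (Z (n₀+i) ⁻¹' Set.Ici (M:ℝ)) ∩
          ⋂ (l) (_ : l < i), (Z (n₀+l) ⁻¹' Set.Iio (M:ℝ)) := by
        ext ω
        simp only [ht, Set.mem_setOf_eq, Set.mem_inter_iff, Set.mem_preimage,
          Set.mem_Ici, Set.mem_Iio, Set.mem_iInter]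
      rw [this]
      refine MeasurableSet.inter ((hadapt _).measurable measurableSet_Ici) ?_
      refine MeasurableSet.iInter fun l => MeasurableSet.iInter fun hl => ?_
      exact ℱ.mono (by omega) _ ((hadapt _).measurable measurableSet_Iio)
    have htm0 : ∀ i, MeasurableSet (t i) := fun i => ℱ.le _ _ (htmeas i)
    have hdisj : Pairwise (Function.onFun Disjoint t) := by
      intro i j hij
      rw [Function.onFun, Set.disjoint_left]
      intro ω hωi hωj
      rcases lt_or_gt_of_ne hij with h | h
      · exact absurd hωi.1 (not_le.2 (hωj.2 i h))
      · exact absurd hωj.1 (not_le.2 (hωi.2 j h))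
    have hcover : ∀ᵐ ω ∂μ, ω ∈ ⋃ i, t i := by
      filter_upwards [hlimsup] with ω hub
      obtain ⟨j, hj1, hj2⟩ := exists_gt_of_limsup_top hub M n₀
      have hexist : ∃ i, (M:ℝ) ≤ Z (n₀+i) ω := by
        exact ⟨j - n₀, by rw [Nat.add_sub_cancel' hj1]; linarith⟩
      set i := Nat.find hexist with hi
      refine Set.mem_iUnion.2 ⟨i, Nat.find_spec hexist, fun l hl => ?_⟩
      have := Nat.find_min hexist hl
      linarith [not_le.1 this]
    -- per-i bound
    have hper : ∀ i, μ (t i ∩ E)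
        ≤ ENNReal.ofReal (r * ((M:ℝ)⁻¹ + A*(n₀:ℝ)^(-η))) * μ (t i) := by
      intro i
      set k := n₀ + i with hk
      have hk1 : 1 ≤ k := le_trans hn₀ (Nat.le_add_right n₀ i)
      -- drift for the stopped process
      have hdr : ∀ j, k ≤ j → ∀ᵐ ω ∂μ, ω ∈ alive S k j →
          (μ[fun ω' => F (j+1) ω' - F j ω' | ℱ j]) ω ≤ 0 := by
        intro j hjk
        have hj1 : 1 ≤ j := le_trans hk1 hjk
        filter_upwards [Fdrift ℱ Z hadapt hC0 hjump hDint hβ0 hβ1 hρ hη hc hL₂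
          hK₀ hA hr2C hr1 hrL₂ hF hj1 (hlow j hj1)] with ω h hal
        exact h (hal j hjk le_rfl)
      -- exit sets
      set V : ℕ → Set Ω := fun m => {ω | ∃ u, k ≤ u ∧ u < m ∧ Z u ω < r ∧
        ∀ l, k ≤ l → l < u → r ≤ Z l ω} with hV
      have hVmeas : ∀ m, MeasurableSet (V m) := by
        intro m
        have : V m = ⋃ u, ⋃ (_ : k ≤ u), ⋃ (_ : u < m),
            ((Z u ⁻¹' Set.Iio r) ∩ ⋂ (l) (_ : k ≤ l) (_ : l < u),
              (Z l ⁻¹' Set.Ici r)) := by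
          ext ω
          constructor
          · rintro ⟨u, h1, h2, h3, h4⟩
            refine Set.mem_iUnion.2 ⟨u, Set.mem_iUnion.2 ⟨h1, Set.mem_iUnion.2
              ⟨h2, h3, ?_⟩⟩⟩
            exact Set.mem_iInter.2 fun l => Set.mem_iInter.2 fun hl1 =>
              Set.mem_iInter.2 fun hl2 => h4 l hl1 hl2
          · intro h
            obtain ⟨u, hu⟩ := Set.mem_iUnion.1 h
            obtain ⟨h1, hu⟩ := Set.mem_iUnion.1 hu
            obtain ⟨h2, h3, h4⟩ := Set.mem_iUnion.1 hu
            exact ⟨u, h1, h2, h3, fun l hl1 hl2 =>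
              Set.mem_iInter.1 (Set.mem_iInter.1 (Set.mem_iInter.1 h4 l) hl1) hl2⟩
        rw [this]
        refine MeasurableSet.iUnion fun u => MeasurableSet.iUnion fun _ =>
          MeasurableSet.iUnion fun _ => MeasurableSet.inter
            (((hadapt u).mono (ℱ.le u)).measurable measurableSet_Iio)
            (MeasurableSet.iInter fun l => MeasurableSet.iInter fun _ =>
              MeasurableSet.iInter fun _ =>
                ((hadapt l).mono (ℱ.le l)).measurable measurableSet_Ici)
      have hVmono : Monotone V := by
        intro a b hab ω hω
        obtain ⟨u, h1, h2, h3, h4⟩ := hω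
        exact ⟨u, h1, by omega, h3, h4⟩
      -- the integral bound for each m
      have hVbd : ∀ m, (μ (t i ∩ V m)).toReal
          ≤ r * (((M:ℝ)⁻¹ + A*(k:ℝ)^(-η)) * (μ (t i)).toReal) := by
        intro m
        rcases Nat.lt_or_ge m k with hm | hm
        · have : t i ∩ V m = ∅ := by
            ext ω
            simp only [Set.mem_inter_iff, Set.mem_empty_iff_false, iff_false,
              not_and]
            intro _
            rintro ⟨u, h1, h2, _⟩
            omega
          rw [this]
          simp only [measure_empty, ENNReal.toReal_zero]
          have h1 : (0:ℝ) ≤ ((M:ℝ)⁻¹ + A*(k:ℝ)^(-η)) :=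
            add_nonneg (by positivity)
              (mul_nonneg hA0 (Real.rpow_nonneg (Nat.cast_nonneg k) _))
          positivity
        · -- indicator bound
          have hind : ∀ ω ∈ t i, (V m).indicator (fun _ => r⁻¹) ω
              ≤ stopProc F S k m ω := by
            intro ω hωt
            by_cases hω : ω ∈ V m
            · rw [Set.indicator_of_mem hω]
              obtain ⟨u, h1, h2, h3, h4⟩ := hω
              have hexit : ω ∉ S u := by
                simp only [hS, Set.mem_setOf_eq, not_le]
                exact h3
              rw [stopProc_eq_of_exit h1 h2 hexit h4]
              have hmax : max (Z u ω) (r - C) ≤ r :=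
                max_le h3.le (by linarith)
              have hmax0 : 0 < max (Z u ω) (r - C) :=
                lt_of_lt_of_le hrC0 (le_max_right _ _)
              have : r⁻¹ ≤ (max (Z u ω) (r - C))⁻¹ := inv_anti₀ hmax0 hmax
              have h5 : 0 ≤ A*((u:ℕ):ℝ)^(-η) :=
                mul_nonneg hA0 (Real.rpow_nonneg (Nat.cast_nonneg u) _)
              simp only [hF]
              linarith
            · rw [Set.indicator_of_notMem hω]
              exact stopProc_nonneg hm hFpos ω
          have hint1 : Integrable ((V m).indicator (fun _ => r⁻¹)) μ :=
            (integrable_const _).indicator (hVmeas m)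
          have hint2 : Integrable (stopProc F S k m) μ :=
            stopProc_integrable ℱ (fun n _ => hFint n) hSmeas m
          have h1 : ∫ ω in t i, (V m).indicator (fun _ => r⁻¹) ω ∂μ
              ≤ ∫ ω in t i, stopProc F S k m ω ∂μ :=
            setIntegral_mono_on hint1.restrict hint2.restrict (htm0 i) hind
          have h2 : ∫ ω in t i, stopProc F S k m ω ∂μ ≤ ∫ ω in t i, F k ω ∂μ :=
            stopProc_setIntegral_le ℱ (fun n _ => hFint n) hSmeas hdr (htmeas i) m
          have h3 : ∫ ω in t i, F k ω ∂μ
              ≤ ((M:ℝ)⁻¹ + A*(k:ℝ)^(-η)) * (μ (t i)).toReal := by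
            have hb : ∀ ω ∈ t i, F k ω ≤ (M:ℝ)⁻¹ + A*(k:ℝ)^(-η) := by
              intro ω hωt
              have hZM : (M:ℝ) ≤ Z k ω := hωt.1
              have hZpos : (0:ℝ) < Z k ω := lt_of_lt_of_le hM0 hZM
              have hmax : (M:ℝ) ≤ max (Z k ω) (r - C) :=
                le_trans hZM (le_max_left _ _)
              have h4 : (max (Z k ω) (r - C))⁻¹ ≤ (M:ℝ)⁻¹ := inv_anti₀ hM0 hmax
              simp only [hF]
              linarith
            calc ∫ ω in t i, F k ω ∂μ
                ≤ ∫ _ω in t i, ((M:ℝ)⁻¹ + A*(k:ℝ)^(-η)) ∂μ :=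
                  setIntegral_mono_on (hFint k).restrict
                    (integrable_const _).restrict (htm0 i) hb
              _ = ((M:ℝ)⁻¹ + A*(k:ℝ)^(-η)) * (μ (t i)).toReal := by
                  rw [setIntegral_const]
                  rw [measureReal_def]
                  rw [smul_eq_mul, mul_comm]
          have h4 : ∫ ω in t i, (V m).indicator (fun _ => r⁻¹) ω ∂μ
              = r⁻¹ * (μ (t i ∩ V m)).toReal := by
            rw [integral_indicator_const _ (hVmeas m)]
            rw [measureReal_def]
            rw [Measure.restrict_apply (hVmeas m)]
            rw [smul_eq_mul, mul_comm, Set.inter_comm]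
          rw [h4] at h1
          have h5 := le_trans h1 (le_trans h2 h3)
          calc (μ (t i ∩ V m)).toReal
              = r * (r⁻¹ * (μ (t i ∩ V m)).toReal) := by
                field_simp
            _ ≤ r * (((M:ℝ)⁻¹ + A*(k:ℝ)^(-η)) * (μ (t i)).toReal) :=
                mul_le_mul_of_nonneg_left h5 hr0.le
      -- combine over m
      have hsub : t i ∩ E ⊆ ⋃ m, (t i ∩ V m) := by
        intro ω hω
        obtain ⟨hωt, hωE⟩ := hω
        obtain ⟨j, hj1, hj2⟩ := hωE k
        have hexist : ∃ u, k ≤ u ∧ Z u ω < r := ⟨j, hj1, hj2⟩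
        obtain ⟨u, ⟨hu1, hu2⟩, hu3⟩ :
            ∃ u, (k ≤ u ∧ Z u ω < r) ∧ ∀ l, l < u → ¬(k ≤ l ∧ Z l ω < r) :=
          ⟨Nat.find hexist, Nat.find_spec hexist, fun l hl => Nat.find_min hexist hl⟩
        refine Set.mem_iUnion.2 ⟨u+1, hωt, u, hu1, by omega, hu2, fun l hl1 hl2 => ?_⟩
        by_contra hcon
        exact hu3 l hl2 ⟨hl1, not_le.1 hcon⟩
      have hmono2 : Monotone (fun m => t i ∩ V m) :=
        fun a b hab => Set.inter_subset_inter_right _ (hVmono hab)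
      have hknη : A*(k:ℝ)^(-η) ≤ A*(n₀:ℝ)^(-η) := by
        apply mul_le_mul_of_nonneg_left _ hA0
        have h1 : (n₀:ℝ)^(η:ℝ) ≤ (k:ℝ)^(η:ℝ) :=
          Real.rpow_le_rpow hn₀0.le (by exact_mod_cast Nat.le_add_right n₀ i) hη0.le
        rw [Real.rpow_neg hn₀0.le, Real.rpow_neg (Nat.cast_nonneg k)]
        exact inv_anti₀ (Real.rpow_pos_of_pos hn₀0 _) h1
      calc μ (t i ∩ E) ≤ μ (⋃ m, (t i ∩ V m)) := measure_mono hsub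
        _ = ⨆ m, μ (t i ∩ V m) := Directed.measure_iUnion hmono2.directed_le
        _ ≤ ENNReal.ofReal (r * ((M:ℝ)⁻¹ + A*(n₀:ℝ)^(-η))) * μ (t i) := by
            refine iSup_le fun m => ?_
            have h1 := hVbd m
            have h2 : (μ (t i ∩ V m)).toReal
                ≤ (r * ((M:ℝ)⁻¹ + A*(n₀:ℝ)^(-η))) * (μ (t i)).toReal := by
              have h3 : r * (((M:ℝ)⁻¹ + A*(k:ℝ)^(-η)) * (μ (t i)).toReal)
                  ≤ r * (((M:ℝ)⁻¹ + A*(n₀:ℝ)^(-η)) * (μ (t i)).toReal) := by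
                apply mul_le_mul_of_nonneg_left _ hr0.le
                apply mul_le_mul_of_nonneg_right _ (ENNReal.toReal_nonneg)
                linarith
              calc (μ (t i ∩ V m)).toReal ≤ _ := h1
                _ ≤ _ := h3
                _ = (r * ((M:ℝ)⁻¹ + A*(n₀:ℝ)^(-η))) * (μ (t i)).toReal := by ring
            calc μ (t i ∩ V m)
                = ENNReal.ofReal ((μ (t i ∩ V m)).toReal) :=
                  (ENNReal.ofReal_toReal (measure_ne_top μ _)).symm
              _ ≤ ENNReal.ofReal ((r * ((M:ℝ)⁻¹ + A*(n₀:ℝ)^(-η))) * (μ (t i)).toReal) :=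
                  ENNReal.ofReal_le_ofReal h2
              _ = ENNReal.ofReal (r * ((M:ℝ)⁻¹ + A*(n₀:ℝ)^(-η)))
                  * ENNReal.ofReal ((μ (t i)).toReal) := by
                  rw [ENNReal.ofReal_mul]
                  have h6 : (0:ℝ) ≤ (M:ℝ)⁻¹ + A*(n₀:ℝ)^(-η) :=
                    add_nonneg (by positivity)
                      (mul_nonneg hA0 (Real.rpow_nonneg hn₀0.le _))
                  positivity
              _ = ENNReal.ofReal (r * ((M:ℝ)⁻¹ + A*(n₀:ℝ)^(-η))) * μ (t i) := by
                  rw [ENNReal.ofReal_toReal (measure_ne_top μ _)]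
    -- sum over i
    have hEsplit : μ E ≤ ∑' i, μ (t i ∩ E) := by
      have h1 : μ E ≤ μ (E ∩ ⋃ i, t i) + μ ((⋃ i, t i)ᶜ) := by
        refine le_trans (measure_mono ?_) (measure_union_le _ _)
        intro ω hω
        by_cases h : ω ∈ ⋃ i, t i
        · exact Or.inl ⟨hω, h⟩
        · exact Or.inr h
      have h2 : μ ((⋃ i, t i)ᶜ) = 0 := by
        rw [measure_eq_zero_iff_ae_notMem]
        filter_upwards [hcover] with ω h
        simpa using h
      rw [h2, add_zero] at h1
      refine le_trans h1 ?_
      have heq : E ∩ ⋃ i, t i = ⋃ i, (t i ∩ E) := by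
        ext ω
        constructor
        · rintro ⟨h1', h2'⟩
          obtain ⟨i, hi⟩ := Set.mem_iUnion.1 h2'
          exact Set.mem_iUnion.2 ⟨i, hi, h1'⟩
        · intro h'
          obtain ⟨i, hi1, hi2⟩ := Set.mem_iUnion.1 h'
          exact ⟨hi2, Set.mem_iUnion.2 ⟨i, hi1⟩⟩
      rw [heq]
      exact measure_iUnion_le _
    calc μ E ≤ ∑' i, μ (t i ∩ E) := hEsplit
      _ ≤ ∑' i, ENNReal.ofReal (r * ((M:ℝ)⁻¹ + A*(n₀:ℝ)^(-η))) * μ (t i) :=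
          ENNReal.tsum_le_tsum hper
      _ = ENNReal.ofReal (r * ((M:ℝ)⁻¹ + A*(n₀:ℝ)^(-η))) * ∑' i, μ (t i) :=
          ENNReal.tsum_mul_left
      _ = ENNReal.ofReal (r * ((M:ℝ)⁻¹ + A*(n₀:ℝ)^(-η))) * μ (⋃ i, t i) := by
          rw [measure_iUnion hdisj htm0]
      _ ≤ ENNReal.ofReal (r * ((M:ℝ)⁻¹ + A*(n₀:ℝ)^(-η))) * 1 :=
          mul_le_mul_right prob_le_one _
      _ = _ := mul_one _
  -- conclude μ E = 0
  by_contra h0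
  have hδ : 0 < (μ E).toReal := ENNReal.toReal_pos h0 (measure_ne_top μ _)
  set δ := (μ E).toReal with hδdef
  have hchoice : ∃ n₀ : ℕ, 1 ≤ n₀ ∧ r*(A*(n₀:ℝ)^(-η)) < δ/2 := by
    rcases eq_or_lt_of_le hA0 with hAz | hApos
    · refine ⟨1, le_rfl, ?_⟩
      rw [← hAz]
      simp only [zero_mul, mul_zero]
      positivity
    · obtain ⟨N, hN⟩ := exists_nat_gt (max 1 ((2*r*A/δ + 1)^(η⁻¹)))
      have hbase : (0:ℝ) < 2*r*A/δ + 1 := by positivity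
      have hN1 : (1:ℝ) < N := lt_of_le_of_lt (le_max_left _ _) hN
      have hN0 : (0:ℝ) < N := by linarith
      have hNw : (2*r*A/δ + 1)^(η⁻¹) < N := lt_of_le_of_lt (le_max_right _ _) hN
      have h1 : (2*r*A/δ + 1) < (N:ℝ)^(η:ℝ) := by
        have h2 : ((2*r*A/δ + 1)^(η⁻¹))^(η:ℝ) < (N:ℝ)^(η:ℝ) :=
          Real.rpow_lt_rpow (Real.rpow_nonneg hbase.le _) hNw hη0
        rwa [Real.rpow_inv_rpow hbase.le (ne_of_gt hη0)] at h2
      have h3 : (N:ℝ)^(-η) < (2*r*A/δ + 1)⁻¹ := by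
        rw [Real.rpow_neg hN0.le]
        exact inv_strictAnti₀ hbase h1
      refine ⟨N, by exact_mod_cast hN1.le, ?_⟩
      have h5 : (N:ℝ)^(-η) * (2*r*A) < δ := by
        calc (N:ℝ)^(-η) * (2*r*A) < (2*r*A/δ+1)⁻¹ * (2*r*A) :=
              mul_lt_mul_of_pos_right h3 (by positivity)
          _ = (2*r*A)/(2*r*A/δ+1) := by rw [inv_mul_eq_div]
          _ ≤ δ := by
              rw [div_le_iff₀ hbase]
              have : δ*(2*r*A/δ+1) = 2*r*A + δ := by field_simp
              rw [this]
              linarith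
      nlinarith [h5]
  obtain ⟨n₀, hn₀1, hn₀2⟩ := hchoice
  obtain ⟨M, hM⟩ := exists_nat_gt (max r (2*r/δ))
  have hMr : r ≤ M := (lt_of_le_of_lt (le_max_left _ _) hM).le
  have hM2 : 2*r/δ < M := lt_of_le_of_lt (le_max_right _ _) hM
  have hM0 : (0:ℝ) < M := lt_of_lt_of_le hr0 hMr
  have hMinv : r*(M:ℝ)⁻¹ < δ/2 := by
    rw [div_lt_iff₀ (by positivity : (0:ℝ) < δ)] at hM2
    rw [← div_eq_mul_inv, div_lt_div_iff₀ hM0 (by norm_num : (0:ℝ) < 2)]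
    linarith
  have hfinal := master M n₀ hMr hn₀1
  have hcon : μ E < μ E := by
    calc μ E ≤ ENNReal.ofReal (r*((M:ℝ)⁻¹ + A*(n₀:ℝ)^(-η))) := hfinal
      _ < ENNReal.ofReal δ := by
          rw [ENNReal.ofReal_lt_ofReal_iff hδ]
          rw [mul_add]
          linarith
      _ = μ E := ENNReal.ofReal_toReal (measure_ne_top μ _)
  exact absurd hcon (lt_irrefl _)

lemma recurrence_part [IsProbabilityMeasure μ] (ℱ : MeasureTheory.Filtration ℕ m0)
    (Z : ℕ → Ω → ℝ)
    (hadapt : ∀ n, StronglyMeasurable[ℱ n] (Z n))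
    (hpos : ∀ n ω, 0 ≤ Z n ω)
    (hlimsup : ∀ᵐ ω ∂μ, Filter.limsup (fun n => ENNReal.ofReal (Z n ω)) Filter.atTop = ⊤)
    (β ρ : ℝ) (hρneg : ρ < 0)
    (hdrift : ∀ ε : ℝ, 0 < ε → ∃ R : ℝ, 1 ≤ R ∧ ∀ n, 1 ≤ n → ∀ᵐ ω ∂μ, R ≤ Z n ω →
      |(μ[(fun ω' => Z (n + 1) ω' - Z n ω') | ℱ n]) ω - ρ * Z n ω ^ (-β) + Z n ω / n|
        ≤ ε * Z n ω ^ (-β) + ε * Z n ω / n)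
    (Zint : ∀ n, 1 ≤ n → Integrable (Z n) μ) :
    ∀ᵐ ω ∂μ, Filter.liminf (fun n => ENNReal.ofReal (Z n ω)) Filter.atTop < ⊤ := by
  have hε : (0:ℝ) < min 2⁻¹ (-ρ/2) := lt_min (by norm_num) (by linarith)
  obtain ⟨R, hR1, hRd⟩ := hdrift (min 2⁻¹ (-ρ/2)) hε
  set ε := min (2:ℝ)⁻¹ (-ρ/2) with hεdef
  -- drift is nonpositive above R
  have hdneg : ∀ j, 1 ≤ j → ∀ᵐ ω ∂μ, R ≤ Z j ω →
      (μ[(fun ω' => Z (j + 1) ω' - Z j ω') | ℱ j]) ω ≤ 0 := by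
    intro j hj
    filter_upwards [hRd j hj] with ω h hZ
    have h2 := (abs_le.1 (h hZ)).2
    have hx1 : (1:ℝ) ≤ Z j ω := le_trans hR1 hZ
    have hx0 : (0:ℝ) < Z j ω := by linarith
    have hrp : (0:ℝ) < Z j ω ^ (-β) := Real.rpow_pos_of_pos hx0 _
    have hdiv : (0:ℝ) ≤ Z j ω / j := div_nonneg (by linarith) (Nat.cast_nonneg j)
    have hε1 : ε ≤ 2⁻¹ := min_le_left _ _
    have hε2 : ε ≤ -ρ/2 := min_le_right _ _
    rw [mul_div_assoc] at h2
    have t1 : ρ * (Z j ω ^ (-β)) + ε * (Z j ω ^ (-β)) ≤ 0 := by nlinarith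
    have t2 : ε * (Z j ω / j) ≤ Z j ω / j := mul_le_of_le_one_left hdiv (by linarith)
    linarith
  -- unboundedness set
  set UB : Set Ω := {ω | ∀ b m : ℕ, ∃ j, m ≤ j ∧ (b:ℝ) < Z j ω} with hUBdef
  -- the bad sets
  set A : ℕ → Set Ω := fun k =>
    {ω | ∀ j, k+1 ≤ j → R ≤ Z j ω} ∩ UB with hAdef
  have hAzero : ∀ k, μ (A k) = 0 := by
    intro k
    set I : ℝ := ∫ ω, Z (k+1) ω ∂μ with hIdef
    have hI0 : 0 ≤ I := integral_nonneg (fun ω => hpos _ ω)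
    -- bound for every Λ ≥ 1
    have hbound : ∀ Λ : ℕ, 1 ≤ Λ → μ (A k) ≤ ENNReal.ofReal (I / Λ) := by
      intro Λ hΛ
      have hL0 : (0:ℝ) < Λ := by exact_mod_cast hΛ
      set S : ℕ → Set Ω := fun j => Z j ⁻¹' Set.Icc R (Λ:ℝ) with hSdef
      have hS : ∀ j, MeasurableSet[ℱ j] (S j) :=
        fun j => (hadapt j).measurable measurableSet_Icc
      have hFint : ∀ n, k+1 ≤ n → Integrable (Z n) μ := fun n hn => Zint n (by omega)
      have hdr : ∀ j, k+1 ≤ j → ∀ᵐ ω ∂μ, ω ∈ alive S (k+1) j →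
          (μ[fun ω' => Z (j+1) ω' - Z j ω' | ℱ j]) ω ≤ 0 := by
        intro j hj
        filter_upwards [hdneg j (by omega)] with ω h hal
        exact h ((mem_alive.1 hal) j hj le_rfl).1
      set U : ℕ → Set Ω := fun m => {ω | ∃ t, k+1 ≤ t ∧ t < m ∧ (Λ:ℝ) < Z t ω ∧
        ∀ i, k+1 ≤ i → i < t → ω ∈ S i} with hUdef
      have hUmeas : ∀ m, MeasurableSet (U m) := by
        intro m
        have : U m = ⋃ t, ⋃ (_ : k+1 ≤ t), ⋃ (_ : t < m),
            ((Z t ⁻¹' Set.Ioi (Λ:ℝ)) ∩ ⋂ i, ⋂ (_ : k+1 ≤ i), ⋂ (_ : i < t), S i) := by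
          ext ω
          constructor
          · rintro ⟨t, h1, h2, h3, h4⟩
            refine Set.mem_iUnion.2 ⟨t, Set.mem_iUnion.2 ⟨h1, Set.mem_iUnion.2 ⟨h2, ?_, ?_⟩⟩⟩
            · exact h3
            · exact Set.mem_iInter.2 fun i => Set.mem_iInter.2 fun hi1 =>
                Set.mem_iInter.2 fun hi2 => h4 i hi1 hi2
          · intro h
            obtain ⟨t, ht⟩ := Set.mem_iUnion.1 h
            obtain ⟨h1, ht⟩ := Set.mem_iUnion.1 ht
            obtain ⟨h2, h3, h4⟩ := Set.mem_iUnion.1 ht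
            exact ⟨t, h1, h2, h3, fun i hi1 hi2 =>
              Set.mem_iInter.1 (Set.mem_iInter.1 (Set.mem_iInter.1 h4 i) hi1) hi2⟩
        rw [this]
        refine MeasurableSet.iUnion fun t => MeasurableSet.iUnion fun _ =>
          MeasurableSet.iUnion fun _ => MeasurableSet.inter
            (((hadapt t).mono (ℱ.le t)).measurable measurableSet_Ioi)
            (MeasurableSet.iInter fun i => MeasurableSet.iInter fun _ =>
              MeasurableSet.iInter fun _ => ℱ.le i _ (hS i))
      have hUbd : ∀ m, (Λ:ℝ) * (μ (U m)).toReal ≤ I := by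
        intro m
        rcases Nat.lt_or_ge m (k+1) with hm | hm
        · have : U m = ∅ := by
            ext ω; simp only [hUdef, Set.mem_setOf_eq, Set.mem_empty_iff_false, iff_false]
            rintro ⟨t, h1, h2, _⟩; omega
          rw [this]; simpa using hI0
        · have hind : ∀ ω, (U m).indicator (fun _ => (Λ:ℝ)) ω ≤ stopProc Z S (k+1) m ω := by
            intro ω
            by_cases hω : ω ∈ U m
            · rw [Set.indicator_of_mem hω]
              obtain ⟨t, ht1, ht2, ht3, ht4⟩ := hω
              have hexit : ω ∉ S t := by
                simp only [hSdef, Set.mem_preimage, Set.mem_Icc, not_and_or, not_le]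
                right; exact ht3
              rw [stopProc_eq_of_exit ht1 ht2 hexit ht4]
              exact le_of_lt ht3
            · rw [Set.indicator_of_notMem hω]
              exact stopProc_nonneg hm hpos ω
          have hint1 : Integrable ((U m).indicator (fun _ => (Λ:ℝ))) μ :=
            (integrable_const _).indicator (hUmeas m)
          have hint2 : Integrable (stopProc Z S (k+1) m) μ :=
            stopProc_integrable ℱ hFint hS m
          have h1 : ∫ ω, (U m).indicator (fun _ => (Λ:ℝ)) ω ∂μ
              ≤ ∫ ω, stopProc Z S (k+1) m ω ∂μ := integral_mono hint1 hint2 hind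
          have h2 : ∫ ω, stopProc Z S (k+1) m ω ∂μ ≤ I := by
            have := stopProc_setIntegral_le ℱ hFint hS hdr
              (s := Set.univ) MeasurableSet.univ m
            simpa [Measure.restrict_univ] using this
          have h3 : ∫ ω, (U m).indicator (fun _ => (Λ:ℝ)) ω ∂μ
              = (μ (U m)).toReal * (Λ:ℝ) := by
            rw [integral_indicator_const _ (hUmeas m)]; simp [measureReal_def]
          rw [mul_comm]; rw [h3] at h1; linarith
      have hsub : A k ⊆ ⋃ m, U m := by
        intro ω hω
        obtain ⟨hall, hub⟩ := hω
        have hex : ∃ t, k+1 ≤ t ∧ (Λ:ℝ) < Z t ω := by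
          obtain ⟨j, hj1, hj2⟩ := hub Λ (k+1); exact ⟨j, hj1, hj2⟩
        classical
        set t := Nat.find hex with htdef
        obtain ⟨ht1, ht2⟩ := Nat.find_spec hex
        refine Set.mem_iUnion.2 ⟨t+1, t, ht1, by omega, ht2, ?_⟩
        intro i hi1 hi2
        have hni := Nat.find_min hex hi2
        simp only [not_and_or, not_lt] at hni
        rcases hni with h | h
        · omega
        · exact ⟨hall i hi1, h⟩
      have hmono : Monotone U := by
        intro a b hab ω hω
        obtain ⟨t, h1, h2, h3, h4⟩ := hω
        exact ⟨t, h1, by omega, h3, h4⟩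
      calc μ (A k) ≤ μ (⋃ m, U m) := measure_mono hsub
        _ = ⨆ m, μ (U m) := Directed.measure_iUnion hmono.directed_le
        _ ≤ ENNReal.ofReal (I / Λ) := by
            refine iSup_le fun m => ?_
            have h1 : (μ (U m)).toReal ≤ I / Λ := by
              rw [le_div_iff₀ hL0]; linarith [hUbd m, mul_comm (Λ:ℝ) (μ (U m)).toReal]
            calc μ (U m) = ENNReal.ofReal ((μ (U m)).toReal) :=
                  (ENNReal.ofReal_toReal (measure_ne_top μ _)).symm
              _ ≤ ENNReal.ofReal (I / Λ) := ENNReal.ofReal_le_ofReal h1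
    -- conclude μ (A k) = 0
    by_contra h0
    have hδ : 0 < (μ (A k)).toReal :=
      ENNReal.toReal_pos h0 (measure_ne_top μ _)
    obtain ⟨Λ, hΛ⟩ := exists_nat_gt (max (I / (μ (A k)).toReal) 1)
    have hΛ1 : 1 ≤ Λ := by
      have : (1:ℝ) < Λ := lt_of_le_of_lt (le_max_right _ _) hΛ
      exact_mod_cast this.le
    have hL0 : (0:ℝ) < Λ := by exact_mod_cast hΛ1
    have hIL : I / Λ < (μ (A k)).toReal := by
      have h1 : I / (μ (A k)).toReal < Λ := lt_of_le_of_lt (le_max_left _ _) hΛ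
      rw [div_lt_iff₀ hδ] at h1
      rw [div_lt_iff₀ hL0]; linarith
    have := hbound Λ hΛ1
    have hcon : μ (A k) < μ (A k) := by
      calc μ (A k) ≤ ENNReal.ofReal (I / Λ) := this
        _ < ENNReal.ofReal ((μ (A k)).toReal) := ENNReal.ofReal_lt_ofReal_iff hδ |>.2 hIL
        _ = μ (A k) := ENNReal.ofReal_toReal (measure_ne_top μ _)
    exact absurd hcon (lt_irrefl _)
  -- combine
  have haeA : ∀ᵐ ω ∂μ, ∀ k, ω ∉ A k := by
    rw [ae_all_iff]
    intro k
    exact (measure_eq_zero_iff_ae_notMem.1 (hAzero k))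
  filter_upwards [hlimsup, haeA] with ω htop hnA
  have hUB : ω ∈ UB := by
    intro b m
    exact exists_gt_of_limsup_top htop b m
  have hlow : ∀ k : ℕ, ∃ j, k+1 ≤ j ∧ Z j ω < R := by
    intro k
    have := hnA k
    simp only [hAdef, Set.mem_inter_iff, not_and_or] at this
    rcases this with h | h
    · simp only [Set.mem_setOf_eq, not_forall, not_le] at h
      obtain ⟨j, hj1, hj2⟩ := h
      exact ⟨j, hj1, hj2⟩
    · exact absurd hUB h
  have hfreq : ∃ᶠ j in atTop, ENNReal.ofReal (Z j ω) ≤ ENNReal.ofReal R := by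
    rw [frequently_atTop]
    intro m
    obtain ⟨j, hj1, hj2⟩ := hlow m
    exact ⟨j, by omega, ENNReal.ofReal_le_ofReal hj2.le⟩
  calc Filter.liminf (fun n => ENNReal.ofReal (Z n ω)) Filter.atTop
      ≤ ENNReal.ofReal R := Filter.liminf_le_of_frequently_le hfreq (by isBoundedDefault)
    _ < ⊤ := ENNReal.ofReal_lt_top

lemma transience_part [IsProbabilityMeasure μ] (ℱ : MeasureTheory.Filtration ℕ m0)
    (Z : ℕ → Ω → ℝ)
    (hadapt : ∀ n, StronglyMeasurable[ℱ n] (Z n))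
    {C : ℝ} (hC0 : 0 ≤ C) (hjump : ∀ n, ∀ᵐ ω ∂μ, |Z (n+1) ω - Z n ω| ≤ C)
    (hDint : ∀ n, Integrable (fun ω' => Z (n+1) ω' - Z n ω') μ)
    (hlimsup : ∀ᵐ ω ∂μ, Filter.limsup (fun n => ENNReal.ofReal (Z n ω)) Filter.atTop = ⊤)
    (β ρ : ℝ) (hβ0 : 0 ≤ β) (hβ1 : β < 1) (hρpos : 0 < ρ)
    (hdrift : ∀ ε : ℝ, 0 < ε → ∃ R : ℝ, 1 ≤ R ∧ ∀ n, 1 ≤ n → ∀ᵐ ω ∂μ, R ≤ Z n ω →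
      |(μ[(fun ω' => Z (n + 1) ω' - Z n ω') | ℱ n]) ω - ρ * Z n ω ^ (-β) + Z n ω / n|
        ≤ ε * Z n ω ^ (-β) + ε * Z n ω / n) :
    ∀ᵐ ω ∂μ, Filter.Tendsto (fun n => Z n ω) Filter.atTop Filter.atTop := by
  have hε : (0:ℝ) < min (ρ/2) 2⁻¹ := lt_min (by linarith) (by norm_num)
  obtain ⟨R, hR1, hRd⟩ := hdrift _ hε
  set ε := min (ρ/2) 2⁻¹ with hεdef
  have hε1 : ε ≤ ρ/2 := min_le_left _ _
  have hε2 : ε ≤ 2⁻¹ := min_le_right _ _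
  set L₂ : ℝ := max 1 ((16*C^2/ρ)^((1-β)⁻¹)) with hL₂def
  set L₁ : ℝ := max (max (2*C) 1) (max L₂ R) with hL₁def
  have hlevel : ∀ n : ℕ, ∀ᵐ ω ∂μ, ∃ m : ℕ, ∀ j, m ≤ j → L₁ + n ≤ Z j ω := by
    intro n
    set r : ℝ := L₁ + (n:ℝ) with hrdef
    have hn0 : (0:ℝ) ≤ n := Nat.cast_nonneg n
    have hr2C : 2*C ≤ r := by
      have : 2*C ≤ L₁ := le_trans (le_max_left _ _) (le_max_left _ _)
      linarith
    have hr1 : 1 ≤ r := by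
      have : (1:ℝ) ≤ L₁ := le_trans (le_max_right _ _) (le_max_left _ _)
      linarith
    have hrL₂ : L₂ ≤ r := by
      have : L₂ ≤ L₁ := le_trans (le_max_left _ _) (le_max_right _ _)
      linarith
    have hrR : R ≤ r := by
      have : R ≤ L₁ := le_trans (le_max_right _ _) (le_max_right _ _)
      linarith
    have hlow : ∀ j : ℕ, 1 ≤ j → ∀ᵐ ω ∂μ, r ≤ Z j ω →
        (ρ/2) * Z j ω ^ (-β) - (3/2) * (Z j ω / j)
          ≤ (μ[(fun ω' => Z (j + 1) ω' - Z j ω') | ℱ j]) ω := by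
      intro j hj
      filter_upwards [hRd j hj] with ω h hZ
      have h2 := (abs_le.1 (h (le_trans hrR hZ))).1
      rw [mul_div_assoc] at h2
      have hx0 : (0:ℝ) < Z j ω := by
        have : (1:ℝ) ≤ Z j ω := le_trans hr1 hZ
        linarith
      have ha0 : (0:ℝ) ≤ Z j ω ^ (-β) := Real.rpow_nonneg hx0.le _
      have hxj0 : (0:ℝ) ≤ Z j ω / j := div_nonneg hx0.le (Nat.cast_nonneg j)
      have hεa : ε * (Z j ω ^ (-β)) ≤ (ρ/2) * (Z j ω ^ (-β)) :=
        mul_le_mul_of_nonneg_right hε1 ha0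
      have hεxj : ε * (Z j ω / j) ≤ 2⁻¹ * (Z j ω / j) :=
        mul_le_mul_of_nonneg_right hε2 hxj0
      linarith
    have h0 := transience_level ℱ Z hadapt hC0 hjump hDint hlimsup hβ0 hβ1 hρpos
      rfl rfl hL₂def rfl rfl hr2C hr1 hrL₂ hlow
    rw [measure_eq_zero_iff_ae_notMem] at h0
    filter_upwards [h0] with ω h
    simp only [Set.mem_setOf_eq, not_forall, not_exists, not_and, not_lt] at h
    obtain ⟨m, hm⟩ := h
    exact ⟨m, fun j hj => hm j hj⟩
  have hall := ae_all_iff.2 hlevel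
  filter_upwards [hall] with ω hω
  rw [tendsto_atTop]
  intro b
  obtain ⟨n, hn⟩ := exists_nat_ge (b - L₁)
  obtain ⟨m, hm⟩ := hω n
  rw [eventually_atTop]
  exact ⟨m, fun j hj => le_trans (by linarith) (hm j hj)⟩


end SupercriticalAux

/-- Supercritical case: drift ρ x^{−β} − x/n with β ∈ [0,1), ρ ≠ 0. Transient if
ρ > 0, recurrent if ρ < 0. -/
theorem supercritical_classification
    {Ω : Type*} {m0 : MeasurableSpace Ω} {μ : Measure Ω} [IsProbabilityMeasure μ]
    (ℱ : MeasureTheory.Filtration ℕ m0)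
    (Z : ℕ → Ω → ℝ)
    (hadapt : ∀ n, StronglyMeasurable[ℱ n] (Z n))
    (hpos : ∀ n ω, 0 ≤ Z n ω)
    (hjumps : ∃ C : ℝ, ∀ n, ∀ᵐ ω ∂μ, |Z (n + 1) ω - Z n ω| ≤ C)
    (hlimsup : ∀ᵐ ω ∂μ, Filter.limsup (fun n => ENNReal.ofReal (Z n ω)) Filter.atTop = ⊤)
    (β ρ : ℝ) (hβ0 : 0 ≤ β) (hβ1 : β < 1) (hρ : ρ ≠ 0)
    (hdrift : ∀ ε : ℝ, 0 < ε → ∃ R : ℝ, 1 ≤ R ∧ ∀ n, 1 ≤ n → ∀ᵐ ω ∂μ, R ≤ Z n ω →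
      |(μ[(fun ω' => Z (n + 1) ω' - Z n ω') | ℱ n]) ω - ρ * Z n ω ^ (-β) + Z n ω / n|
        ≤ ε * Z n ω ^ (-β) + ε * Z n ω / n)
 :
    (0 < ρ →
      ∀ᵐ ω ∂μ, Filter.Tendsto (fun n => Z n ω) Filter.atTop Filter.atTop) ∧
    (ρ < 0 →
      ∀ᵐ ω ∂μ, Filter.liminf (fun n => ENNReal.ofReal (Z n ω)) Filter.atTop < ⊤) := by
  classical
  obtain ⟨C₀, hjump₀⟩ := hjumps
  have hμne : μ ≠ 0 := IsProbabilityMeasure.ne_zero μ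
  haveI : (MeasureTheory.ae μ).NeBot := ae_neBot.2 hμne
  have hC0 : 0 ≤ C₀ := by
    obtain ⟨ω, hω⟩ := (hjump₀ 0).exists
    exact le_trans (abs_nonneg _) hω
  have hDint := fun n => Dint ℱ Z hadapt hjump₀ n
  obtain ⟨B, hB0, hZ1⟩ := Z1bd ℱ Z hpos hC0 hjump₀ β ρ hβ0 hdrift
  have hZint : ∀ n, 1 ≤ n → Integrable (Z n) μ := Zint ℱ Z hadapt hpos hjump₀ hZ1
  constructor
  · intro hρpos
    exact transience_part ℱ Z hadapt hC0 hjump₀ hDint hlimsup β ρ hβ0 hβ1 hρpos hdrift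
  · intro hρneg
    exact recurrence_part ℱ Z hadapt hpos hlimsup β ρ hρneg hdrift hZint
end

section
/- Let (Z_n)_{n≥1} be adapted, [0,∞)-valued, with bounded jumps. Suppose there exist β ∈ [0,1) and A > 0 such that for some R ≥ 1 and N, for all n ≥ N, almost surely on {Z_n ≥ R}: Z_n^β · E_n[Z_{n+1} − Z_n] ≤ −A. Then for any ε > 0, almost surely Z_n ≤ (log n)^{1/(1−β) + ε} for all but finitely many n. -/
open MeasureTheory Filter Real
open scoped ENNReal Topology


lemma my_exp_quad {x : ℝ} (h : |x| ≤ 1) : Real.exp x ≤ 1 + x + x ^ 2 := by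
  have h2 := Real.exp_bound h (by norm_num : 0 < 2)
  have hs : ∑ m ∈ Finset.range 2, x ^ m / m.factorial = 1 + x := by
    simp [Finset.sum_range_succ]
  rw [hs] at h2
  have h3 := (abs_sub_le_iff.1 h2).1
  have h4 : ((Nat.succ 2 : ℕ) : ℝ) / ((Nat.factorial 2 : ℕ) * (2:ℕ)) = 3/4 := by
    norm_num [Nat.factorial]
  rw [h4] at h3
  nlinarith [sq_abs x, sq_nonneg x, abs_nonneg x]

lemma my_int_of_bound {Ω : Type*} {m0 : MeasurableSpace Ω} {μ : Measure Ω} [IsFiniteMeasure μ]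
    {f : Ω → ℝ} (hf : AEStronglyMeasurable f μ) {b : ℝ} (h : ∀ᵐ ω ∂μ, |f ω| ≤ b) :
    Integrable f μ :=
  (integrable_const b).mono' hf (by simpa [Real.norm_eq_abs] using h)


lemma my_rpow_tangent {γ z d : ℝ} (hγ0 : 0 < γ) (hγ1 : γ ≤ 1) (hz : 0 < z) (hzd : 0 ≤ z + d) :
    (z + d) ^ γ ≤ z ^ γ + γ * z ^ (γ - 1) * d := by
  have hs : -1 ≤ d / z := by
    rw [neg_le, ← neg_div, div_le_one hz]; linarith
  have h0 : (0:ℝ) ≤ 1 + d / z := by linarith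
  have h1 : (1 + d/z) ^ γ ≤ 1 + γ * (d/z) := rpow_one_add_le_one_add_mul_self hs hγ0.le hγ1
  have hzz : z + d = z * (1 + d/z) := by field_simp
  calc (z+d)^γ = z^γ * (1+d/z)^γ := by rw [hzz, Real.mul_rpow hz.le h0]
    _ ≤ z^γ * (1 + γ*(d/z)) := mul_le_mul_of_nonneg_left h1 (Real.rpow_nonneg hz.le γ)
    _ = z^γ + γ * (z^γ/z) * d := by field_simp
    _ = z^γ + γ * z^(γ-1) * d := by rw [Real.rpow_sub_one hz.ne' γ]

lemma my_u_bounds {γ z d C : ℝ} (hγ0 : 0 < γ) (hγ1 : γ ≤ 1) (hC : 0 < C)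
    (hd : |d| ≤ C) (hz : 2 * C ≤ z) :
    (z + d) ^ γ - z ^ γ ≤ γ * (z ^ γ / z) * d ∧
      |(z + d) ^ γ - z ^ γ| ≤ 2 * C * (z ^ γ / z) := by
  have hd1 : -C ≤ d := (abs_le.1 hd).1
  have hd2 : d ≤ C := (abs_le.1 hd).2
  have hz0 : 0 < z := by linarith
  have hzd0 : 0 < z + d := by linarith
  have hy : z ^ γ / z = z ^ (γ - 1) := (Real.rpow_sub_one hz0.ne' γ).symm
  set yz := z ^ (γ - 1) with hyz
  set yd := (z + d) ^ (γ - 1) with hyd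
  set yC := (z - C) ^ (γ - 1) with hyC
  have hub : (z + d) ^ γ - z ^ γ ≤ γ * yz * d := by
    have := my_rpow_tangent hγ0 hγ1 hz0 hzd0.le
    rw [hyz]; linarith
  have hlb : γ * yd * d ≤ (z + d) ^ γ - z ^ γ := by
    have := my_rpow_tangent hγ0 hγ1 hzd0 (by linarith : (0:ℝ) ≤ (z + d) + (-d))
    have h2 : ((z + d) + (-d)) = z := by ring
    rw [h2] at this
    rw [hyd]; linarith
  have hmono : ∀ {a b : ℝ}, 0 < a → a ≤ b → b ^ (γ - 1) ≤ a ^ (γ - 1) :=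
    fun ha hab => Real.rpow_le_rpow_of_nonpos ha hab (by linarith)
  have hy0 : 0 < yz := Real.rpow_pos_of_pos hz0 _
  have hyd0 : 0 < yd := Real.rpow_pos_of_pos hzd0 _
  have hyC0 : 0 < yC := Real.rpow_pos_of_pos (by linarith) _
  have hzdb : yd ≤ yC := hmono (by linarith) (by linarith)
  have hhalf : yC ≤ 2 * yz := by
    have h2 : yC ≤ (z / 2) ^ (γ - 1) := hmono (by linarith) (by linarith)
    have h3 : (z / 2) ^ (γ - 1) = yz / 2 ^ (γ - 1) :=
      Real.div_rpow hz0.le (by norm_num : (0:ℝ) ≤ 2) (γ - 1)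
    have h5 : (2:ℝ) ^ (-1:ℝ) ≤ 2 ^ (γ - 1) :=
      Real.rpow_le_rpow_of_exponent_le (by norm_num) (by linarith)
    have h6 : (2:ℝ) ^ (-1:ℝ) = 1/2 := by
      rw [Real.rpow_neg_one]; norm_num
    have h7 : 0 < (2:ℝ) ^ (γ - 1) := Real.rpow_pos_of_pos (by norm_num) _
    have h5' : (1:ℝ)/2 ≤ 2 ^ (γ - 1) := h6 ▸ h5
    have h8 : yz / 2 ^ (γ - 1) ≤ 2 * yz := by
      rw [div_le_iff₀ h7]
      have := mul_le_mul_of_nonneg_left h5' (by positivity : (0:ℝ) ≤ 2 * yz)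
      linarith
    linarith
  refine ⟨by rw [hy]; exact hub, ?_⟩
  rw [hy, abs_le]
  constructor
  · -- lower bound
    have l1 : γ * yd * (-|d|) ≤ γ * yd * d :=
      mul_le_mul_of_nonneg_left (neg_abs_le d) (mul_nonneg hγ0.le hyd0.le)
    have l2 : yd * |d| ≤ yC * C := mul_le_mul hzdb hd (abs_nonneg d) hyC0.le
    have l3 : γ * (yd * |d|) ≤ 1 * (yd * |d|) :=
      mul_le_mul_of_nonneg_right hγ1 (mul_nonneg hyd0.le (abs_nonneg d))
    have l4 : yC * C ≤ 2 * yz * C := mul_le_mul_of_nonneg_right hhalf hC.le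
    nlinarith
  · have u1 : γ * yz * d ≤ γ * yz * C :=
      mul_le_mul_of_nonneg_left hd2 (mul_nonneg hγ0.le hy0.le)
    have u2 : γ * yz * C ≤ 1 * yz * C :=
      mul_le_mul_of_nonneg_right (mul_le_mul_of_nonneg_right hγ1 hy0.le) hC.le
    nlinarith [mul_nonneg hy0.le hC.le]

set_option maxHeartbeats 1000000 in
lemma my_step
    {Ω : Type*} {m0 : MeasurableSpace Ω} {μ : Measure Ω} [IsProbabilityMeasure μ]
    (ℱ : MeasureTheory.Filtration ℕ m0) (n : ℕ)
    {X Y : Ω → ℝ}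
    (hX : StronglyMeasurable[ℱ n] X) (hYm : Measurable Y)
    (hXpos : ∀ ω, 0 ≤ X ω) (hYpos : ∀ ω, 0 ≤ Y ω)
    {β A R' C c M : ℝ}
    (hβ0 : 0 ≤ β) (hβ1 : β < 1) (hA : 0 < A) (hC : 1 ≤ C)
    (hjump : ∀ᵐ ω ∂μ, |Y ω - X ω| ≤ C)
    (hR2 : 2 * C ≤ R') (hR1 : 1 ≤ R')
    (hdrift : ∀ᵐ ω ∂μ, R' ≤ X ω → X ω ^ β * (μ[(fun ω' => Y ω' - X ω') | ℱ n]) ω ≤ -A)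
    (hc0 : 0 < c)
    (hc1 : c * ((R' + C) ^ (1 - β) + 2 * C) ≤ 1)
    (hc2 : c * (2 * C) ^ 2 ≤ (1 - β) * A)
    (hM : ∀ᵐ ω ∂μ, X ω ≤ M) :
    ∫ ω, Real.exp (c * Y ω ^ (1 - β)) ∂μ
      ≤ (∫ ω, Real.exp (c * X ω ^ (1 - β)) ∂μ) + 3 * Real.exp (c * R' ^ (1 - β)) := by
  have hm : ℱ n ≤ m0 := ℱ.le n
  set γ : ℝ := 1 - β with hγdef
  have hγ0 : 0 < γ := by simp only [hγdef]; linarith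
  have hγ1 : γ ≤ 1 := by simp only [hγdef]; linarith
  have hC0 : 0 < C := lt_of_lt_of_le one_pos hC
  set C₁ : ℝ := (R' + C) ^ γ + 2 * C with hC₁def
  have hC₁0 : 0 < C₁ := by
    have : 0 ≤ (R' + C) ^ γ := Real.rpow_nonneg (by linarith) _
    simp only [hC₁def]; linarith
  have hcC₁ : c * C₁ ≤ 1 := hc1
  -- measurability of X wrt m0
  have hXm : Measurable X := (hX.measurable).mono hm le_rfl
  -- basic functions
  set δ : Ω → ℝ := fun ω => Y ω - X ω with hδdef
  have hδm : Measurable δ := hYm.sub hXm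
  set y : Ω → ℝ := fun ω => X ω ^ γ / X ω with hydef
  have hy_meas : Measurable[ℱ n] y :=
    (((Real.continuous_rpow_const hγ0.le).measurable).comp hX.measurable).div hX.measurable
  set P : Set Ω := {ω | R' ≤ X ω} with hPdef
  have hPm : MeasurableSet[ℱ n] P := measurableSet_le measurable_const hX.measurable
  set f : Ω → ℝ := P.indicator (fun ω => γ * y ω) with hfdef
  have hfs : StronglyMeasurable[ℱ n] f :=
    ((hy_meas.const_mul γ).stronglyMeasurable).indicator hPm
  set g : Ω → ℝ := Pᶜ.indicator (fun _ => C₁) with hgdef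
  have hgs : StronglyMeasurable[ℱ n] g :=
    stronglyMeasurable_const.indicator hPm.compl
  set v₂ : Ω → ℝ := P.indicator (fun ω => (2*C)^2 * (y ω)^2) + Pᶜ.indicator (fun _ => C₁^2)
    with hv₂def
  have hv₂s : StronglyMeasurable[ℱ n] v₂ := by
    refine StronglyMeasurable.add ?_ ?_
    · exact (((hy_meas.pow_const 2).const_mul _).stronglyMeasurable).indicator hPm
    · exact stronglyMeasurable_const.indicator hPm.compl
  set HX : Ω → ℝ := fun ω => Real.exp (c * X ω ^ γ) with hHXdef
  set HY : Ω → ℝ := fun ω => Real.exp (c * Y ω ^ γ) with hHYdef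
  set e : Ω → ℝ := fun ω => Real.exp (c * (Y ω ^ γ - X ω ^ γ)) with hedef
  have hcont : Continuous fun t : ℝ => Real.exp (c * t ^ γ) :=
    Real.continuous_exp.comp (continuous_const.mul (Real.continuous_rpow_const hγ0.le))
  have hHXs : StronglyMeasurable[ℱ n] HX := hcont.comp_stronglyMeasurable hX
  have hHXm : Measurable HX := hcont.measurable.comp hXm
  have hHYm : Measurable HY := hcont.measurable.comp hYm
  have hem : Measurable e := by
    apply Real.measurable_exp.comp
    exact (((Real.continuous_rpow_const hγ0.le).measurable.comp hYm).sub
      ((Real.continuous_rpow_const hγ0.le).measurable.comp hXm)).const_mul c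
  -- pointwise y on P
  have hy_eqP : ∀ ω, R' ≤ X ω → (0 < X ω ∧ y ω = X ω ^ (γ - 1) ∧ 0 < y ω ∧ y ω ≤ 1) := by
    intro ω hω
    have hx0 : 0 < X ω := by linarith
    have h1 : y ω = X ω ^ (γ - 1) := (Real.rpow_sub_one hx0.ne' γ).symm
    have h2 : 0 < y ω := h1 ▸ Real.rpow_pos_of_pos hx0 _
    have h3 : y ω ≤ 1 := by
      rw [h1]
      exact Real.rpow_le_one_of_one_le_of_nonpos (by linarith) (by linarith)
    exact ⟨hx0, h1, h2, h3⟩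
  -- master pointwise a.e. facts
  have master : ∀ᵐ ω ∂μ,
      |Y ω ^ γ - X ω ^ γ| ≤ C₁ ∧
      e ω ≤ 1 + c * (f ω * δ ω + g ω) + c^2 * v₂ ω := by
    filter_upwards [hjump] with ω hj
    have hu := fun (h : R' ≤ X ω) =>
      my_u_bounds hγ0 hγ1 hC0 hj (le_trans hR2 h)
    by_cases hP : ω ∈ P
    · have hx : R' ≤ X ω := hP
      obtain ⟨hx0, hyeq, hy0, hy1⟩ := hy_eqP ω hx
      have hXY : Y ω = X ω + δ ω := by simp [hδdef]
      have hub := (hu hx).1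
      have hab := (hu hx).2
      rw [← hXY] at hub hab
      have habs : |Y ω ^ γ - X ω ^ γ| ≤ 2 * C * y ω := hab
      have hC₁b : 2 * C * y ω ≤ C₁ := by
        have : 2 * C * y ω ≤ 2 * C * 1 := by
          apply mul_le_mul_of_nonneg_left hy1 (by linarith)
        have h0 : 0 ≤ (R' + C) ^ γ := Real.rpow_nonneg (by linarith) _
        simp only [hC₁def]; linarith
      constructor
      · linarith
      · have hcu : |c * (Y ω ^ γ - X ω ^ γ)| ≤ 1 := by
          rw [abs_mul, abs_of_pos hc0]
          calc c * |Y ω ^ γ - X ω ^ γ| ≤ c * C₁ :=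
                mul_le_mul_of_nonneg_left (le_trans habs hC₁b) hc0.le
            _ ≤ 1 := hcC₁
        have hq := my_exp_quad hcu
        have hf_eq : f ω = γ * y ω := by simp [hfdef, Set.indicator_of_mem hP]
        have hg_eq : g ω = 0 := by simp [hgdef, Set.indicator_of_notMem (Set.notMem_compl_iff.mpr hP)]
        have hv₂_eq : v₂ ω = (2*C)^2 * (y ω)^2 := by
          simp [hv₂def, Set.indicator_of_mem hP,
            Set.indicator_of_notMem (Set.notMem_compl_iff.mpr hP)]
        rw [hf_eq, hg_eq, hv₂_eq]
        have h1 : c * (Y ω ^ γ - X ω ^ γ) ≤ c * (γ * y ω * δ ω) :=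
          mul_le_mul_of_nonneg_left hub hc0.le
        have h2 : (c * (Y ω ^ γ - X ω ^ γ))^2 ≤ c^2 * ((2*C)^2 * (y ω)^2) := by
          have := sq_le_sq' (neg_le_of_abs_le habs) (le_of_abs_le habs)
          have h2C : 0 ≤ 2 * C * y ω := by positivity
          calc (c * (Y ω ^ γ - X ω ^ γ))^2 = c^2 * (Y ω ^ γ - X ω ^ γ)^2 := by ring
            _ ≤ c^2 * (2 * C * y ω)^2 := by
                apply mul_le_mul_of_nonneg_left _ (sq_nonneg c)
                exact this
            _ = c^2 * ((2*C)^2 * (y ω)^2) := by ring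
        calc e ω ≤ 1 + c * (Y ω ^ γ - X ω ^ γ) + (c * (Y ω ^ γ - X ω ^ γ))^2 := hq
          _ ≤ 1 + c * (γ * y ω * δ ω) + c^2 * ((2*C)^2 * (y ω)^2) := by linarith
          _ = 1 + c * (γ * y ω * δ ω + 0) + c^2 * ((2*C)^2 * (y ω)^2) := by ring
    · -- low case
      have hx : X ω < R' := by simpa [hPdef] using hP
      have hYb : Y ω ≤ R' + C := by
        have := (abs_le.1 hj).2
        try simp only [hδdef] at this ⊢
        linarith
      have hu1 : Y ω ^ γ ≤ (R' + C) ^ γ := Real.rpow_le_rpow (hYpos ω) hYb (le_of_lt hγ0)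
      have hu2 : X ω ^ γ ≤ (R' + C) ^ γ :=
        Real.rpow_le_rpow (hXpos ω) (by linarith) (le_of_lt hγ0)
      have hu0a : 0 ≤ Y ω ^ γ := Real.rpow_nonneg (hYpos ω) _
      have hu0b : 0 ≤ X ω ^ γ := Real.rpow_nonneg (hXpos ω) _
      have habs : |Y ω ^ γ - X ω ^ γ| ≤ C₁ := by
        rw [abs_le]
        constructor
        · simp only [hC₁def]; linarith
        · simp only [hC₁def]; linarith
      refine ⟨habs, ?_⟩
      have hcu : |c * (Y ω ^ γ - X ω ^ γ)| ≤ 1 := by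
        rw [abs_mul, abs_of_pos hc0]
        calc c * |Y ω ^ γ - X ω ^ γ| ≤ c * C₁ :=
              mul_le_mul_of_nonneg_left habs hc0.le
          _ ≤ 1 := hcC₁
      have hq := my_exp_quad hcu
      have hf_eq : f ω = 0 := by simp [hfdef, Set.indicator_of_notMem hP]
      have hg_eq : g ω = C₁ := by
        simp [hgdef, Set.indicator_of_mem (Set.mem_compl hP)]
      have hv₂_eq : v₂ ω = C₁^2 := by
        simp [hv₂def, Set.indicator_of_notMem hP,
          Set.indicator_of_mem (Set.mem_compl hP)]
      rw [hf_eq, hg_eq, hv₂_eq]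
      have h1 : c * (Y ω ^ γ - X ω ^ γ) ≤ c * C₁ :=
        mul_le_mul_of_nonneg_left (le_of_abs_le habs) hc0.le
      have h2 : (c * (Y ω ^ γ - X ω ^ γ))^2 ≤ c^2 * C₁^2 := by
        have := sq_le_sq' (neg_le_of_abs_le habs) (le_of_abs_le habs)
        calc (c * (Y ω ^ γ - X ω ^ γ))^2 = c^2 * (Y ω ^ γ - X ω ^ γ)^2 := by ring
          _ ≤ c^2 * C₁^2 := mul_le_mul_of_nonneg_left this (sq_nonneg c)
      calc e ω ≤ 1 + c * (Y ω ^ γ - X ω ^ γ) + (c * (Y ω ^ γ - X ω ^ γ))^2 := hq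
        _ ≤ 1 + c * C₁ + c^2 * C₁^2 := by linarith
        _ = 1 + c * (0 * δ ω + C₁) + c^2 * C₁^2 := by ring
  -- integrability facts
  have hMb : ∀ᵐ ω ∂μ, X ω ≤ max M 0 := hM.mono fun ω h => le_trans h (le_max_left _ _)
  have hHXint : Integrable HX μ := by
    apply my_int_of_bound hHXm.aestronglyMeasurable (b := Real.exp (c * (max M 0) ^ γ))
    filter_upwards [hMb] with ω h
    rw [abs_of_pos (Real.exp_pos _)]
    exact Real.exp_le_exp.2
      (mul_le_mul_of_nonneg_left (Real.rpow_le_rpow (hXpos ω) h hγ0.le) hc0.le)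
  have hHYint : Integrable HY μ := by
    apply my_int_of_bound hHYm.aestronglyMeasurable (b := Real.exp (c * (max M 0 + C) ^ γ))
    filter_upwards [hMb, hjump] with ω h hj
    rw [abs_of_pos (Real.exp_pos _)]
    apply Real.exp_le_exp.2
    have hYb : Y ω ≤ max M 0 + C := by
      have := (abs_le.1 hj).2; linarith
    exact mul_le_mul_of_nonneg_left (Real.rpow_le_rpow (hYpos ω) hYb hγ0.le) hc0.le
  have heint : Integrable e μ := by
    apply my_int_of_bound hem.aestronglyMeasurable (b := Real.exp 1)
    filter_upwards [master] with ω hmm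
    rw [abs_of_pos (Real.exp_pos _)]
    apply Real.exp_le_exp.2
    calc c * (Y ω ^ γ - X ω ^ γ) ≤ c * C₁ :=
          mul_le_mul_of_nonneg_left (le_of_abs_le hmm.1) hc0.le
      _ ≤ 1 := hcC₁
  have hδint : Integrable δ μ := my_int_of_bound hδm.aestronglyMeasurable hjump
  have hfb : ∀ ω, |f ω| ≤ 1 := by
    intro ω
    by_cases hP : ω ∈ P
    · obtain ⟨_, _, hy0, hy1⟩ := hy_eqP ω hP
      rw [hfdef, Set.indicator_of_mem hP, abs_of_nonneg (by positivity)]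
      calc γ * y ω ≤ 1 * 1 := mul_le_mul hγ1 hy1 hy0.le zero_le_one
        _ = 1 := by ring
    · rw [hfdef, Set.indicator_of_notMem hP]; simp
  have hfδint : Integrable (f * δ) μ := by
    apply my_int_of_bound
      (((hfs.measurable.mono hm le_rfl).mul hδm).aestronglyMeasurable) (b := C)
    filter_upwards [hjump] with ω hj
    rw [Pi.mul_apply, abs_mul]
    calc |f ω| * |δ ω| ≤ 1 * C := mul_le_mul (hfb ω) hj (abs_nonneg _) zero_le_one
      _ = C := by ring
  have hgint : Integrable g μ := by
    apply my_int_of_bound ((hgs.measurable.mono hm le_rfl).aestronglyMeasurable) (b := C₁)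
    refine ae_of_all _ fun ω => ?_
    by_cases hP : ω ∈ Pᶜ
    · rw [hgdef, Set.indicator_of_mem hP, abs_of_pos hC₁0]
    · rw [hgdef, Set.indicator_of_notMem hP]; simp [hC₁0.le]
  have hv₂int : Integrable v₂ μ := by
    apply my_int_of_bound ((hv₂s.measurable.mono hm le_rfl).aestronglyMeasurable)
      (b := (2*C)^2 + C₁^2)
    refine ae_of_all _ fun ω => ?_
    by_cases hP : ω ∈ P
    · obtain ⟨_, _, hy0, hy1⟩ := hy_eqP ω hP
      rw [hv₂def, Pi.add_apply, Set.indicator_of_mem hP,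
        Set.indicator_of_notMem (Set.notMem_compl_iff.mpr hP)]
      rw [add_zero, abs_of_nonneg (by positivity)]
      have h1 : (y ω)^2 ≤ 1 := by nlinarith
      nlinarith [sq_nonneg C₁, sq_nonneg (2*C)]
    · rw [hv₂def, Pi.add_apply, Set.indicator_of_notMem hP,
        Set.indicator_of_mem (Set.mem_compl hP)]
      rw [zero_add, abs_of_nonneg (sq_nonneg _)]
      nlinarith [sq_nonneg (2*C)]
  have hv₁int : Integrable (f * δ + g) μ := hfδint.add hgint
  set w : Ω → ℝ := (fun _ => (1:ℝ)) + (c • (f * δ + g) + c^2 • v₂) with hwdef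
  have hwint : Integrable w μ :=
    (integrable_const 1).add ((hv₁int.smul c).add (hv₂int.smul (c^2)))
  have master' : e ≤ᵐ[μ] w := by
    filter_upwards [master] with ω hmm
    have : w ω = 1 + (c * (f ω * δ ω + g ω) + c^2 * v₂ ω) := by
      simp [hwdef, Pi.add_apply, Pi.smul_apply, smul_eq_mul, Pi.mul_apply]
      ring
    rw [this]
    have := hmm.2
    try simp only [Pi.mul_apply] at this ⊢
    linarith
  -- conditional expectation computations
  have hEe_le : μ[e|ℱ n] ≤ᵐ[μ] μ[w|ℱ n] := condExp_mono heint hwint master'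
  have h1 := condExp_add (μ := μ) (m := ℱ n) (integrable_const (1:ℝ))
    ((hv₁int.smul c).add (hv₂int.smul (c^2)))
  have h2 := condExp_add (μ := μ) (m := ℱ n) (hv₁int.smul c) (hv₂int.smul (c^2))
  have h3 := condExp_smul (μ := μ) (m := ℱ n) c (f * δ + g)
  have h4 := condExp_smul (μ := μ) (m := ℱ n) (c^2) v₂
  have hv₁add : μ[f * δ + g|ℱ n] =ᵐ[μ] μ[f * δ|ℱ n] + μ[g|ℱ n] := condExp_add hfδint hgint _
  have hv₁c : μ[f * δ|ℱ n] =ᵐ[μ] f * μ[δ|ℱ n] :=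
    condExp_mul_of_stronglyMeasurable_left hfs hfδint hδint
  have hgc : μ[g|ℱ n] = g := condExp_of_stronglyMeasurable hm hgs hgint
  have hv₂c : μ[v₂|ℱ n] = v₂ := condExp_of_stronglyMeasurable hm hv₂s hv₂int
  have hconst : μ[(fun _ => (1:ℝ))|ℱ n] = fun _ => (1:ℝ) := condExp_const hm 1
  have hHYeq : HY = HX * e := by
    funext ω
    simp only [hHYdef, hHXdef, hedef, Pi.mul_apply, ← Real.exp_add]
    congr 1; ring
  have hEY : μ[HY|ℱ n] =ᵐ[μ] HX * μ[e|ℱ n] := by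
    rw [hHYeq]
    exact condExp_mul_of_stronglyMeasurable_left hHXs (hHYeq ▸ hHYint) heint
  -- final pointwise bound on the conditional expectation
  have hfinal : μ[HY|ℱ n] ≤ᵐ[μ] fun ω => HX ω + 3 * Real.exp (c * R' ^ γ) := by
    filter_upwards [hEY, hEe_le, h1, h2, h3, h4, hv₁add, hv₁c, hdrift] with ω
      a1 a2 b1 b2 b3 b4 a4 a5 adrift
    set D := (μ[δ|ℱ n]) ω with hDdef
    have hQ : (μ[w|ℱ n]) ω = 1 + (c * (f ω * D + g ω) + c^2 * v₂ ω) := by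
      rw [b1]
      simp only [Pi.add_apply, hconst]
      congr 1
      rw [b2]
      simp only [Pi.add_apply, b3, b4, Pi.smul_apply, smul_eq_mul]
      congr 1
      · rw [a4]
        simp only [Pi.add_apply, a5, Pi.mul_apply, hgc]
        rw [← hDdef]
      · rw [hv₂c]
    have hexpR : 0 < Real.exp (c * R' ^ γ) := Real.exp_pos _
    have hHX0 : 0 < HX ω := Real.exp_pos _
    by_cases hP : ω ∈ P
    · -- high case: conditional factor ≤ 1
      have hx : R' ≤ X ω := hP
      obtain ⟨hx0, hyeq, hy0, hy1⟩ := hy_eqP ω hx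
      have hf_eq : f ω = γ * y ω := by simp [hfdef, Set.indicator_of_mem hP]
      have hg_eq : g ω = 0 := by
        simp [hgdef, Set.indicator_of_notMem (Set.notMem_compl_iff.mpr hP)]
      have hv₂_eq : v₂ ω = (2*C)^2 * (y ω)^2 := by
        simp [hv₂def, Set.indicator_of_mem hP,
          Set.indicator_of_notMem (Set.notMem_compl_iff.mpr hP)]
      have hxβ : 0 < X ω ^ β := Real.rpow_pos_of_pos hx0 _
      have hyβ : y ω = (X ω ^ β)⁻¹ := by
        rw [hyeq]
        have hexp : γ - 1 = -β := by rw [hγdef]; ring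
        rw [hexp, Real.rpow_neg (hXpos ω)]
      have hD : D ≤ -A * y ω := by
        have hd := adrift hx
        rw [mul_comm] at hd
        have h' : D ≤ -A / X ω ^ β := (le_div_iff₀ hxβ).2 hd
        rw [hyβ, ← div_eq_mul_inv]
        exact h'
      -- conditional factor at ω is ≤ 1
      have hQ1 : (μ[w|ℱ n]) ω ≤ 1 := by
        rw [hQ, hf_eq, hg_eq, hv₂_eq]
        have hcy : 0 ≤ c * (γ * y ω) := by positivity
        have t1 : c * (γ * y ω * D) ≤ c * (γ * y ω * (-A * y ω)) := by
          have := mul_le_mul_of_nonneg_left hD hcy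
          calc c * (γ * y ω * D) = c * (γ * y ω) * D := by ring
            _ ≤ c * (γ * y ω) * (-A * y ω) := this
            _ = c * (γ * y ω * (-A * y ω)) := by ring
        have t2 : c * (γ * y ω * (-A * y ω)) + c^2 * ((2*C)^2 * (y ω)^2) ≤ 0 := by
          have hy2 : 0 ≤ c * (y ω)^2 := by positivity
          have h5 := mul_le_mul_of_nonneg_left hc2 hy2
          linarith [h5]
        linarith [t1, t2]
      have hle : (μ[HY|ℱ n]) ω ≤ HX ω := by
        rw [a1, Pi.mul_apply]
        calc HX ω * (μ[e|ℱ n]) ω ≤ HX ω * 1 :=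
              mul_le_mul_of_nonneg_left (le_trans a2 hQ1) hHX0.le
          _ = HX ω := by ring
      linarith
    · -- low case
      have hx : X ω < R' := by simpa [hPdef] using hP
      have hf_eq : f ω = 0 := by simp [hfdef, Set.indicator_of_notMem hP]
      have hg_eq : g ω = C₁ := by
        simp [hgdef, Set.indicator_of_mem (Set.mem_compl hP)]
      have hv₂_eq : v₂ ω = C₁^2 := by
        simp [hv₂def, Set.indicator_of_notMem hP,
          Set.indicator_of_mem (Set.mem_compl hP)]
      have hQ3 : (μ[w|ℱ n]) ω ≤ 3 := by
        rw [hQ, hf_eq, hg_eq, hv₂_eq]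
        have hsq : c^2 * C₁^2 ≤ 1 := by
          nlinarith [mul_nonneg hc0.le hC₁0.le, hcC₁]
        linarith [hcC₁, hsq]
      have hHXb : HX ω ≤ Real.exp (c * R' ^ γ) := by
        apply Real.exp_le_exp.2
        exact mul_le_mul_of_nonneg_left
          (Real.rpow_le_rpow (hXpos ω) hx.le hγ0.le) hc0.le
      have hle : (μ[HY|ℱ n]) ω ≤ 3 * Real.exp (c * R' ^ γ) := by
        rw [a1, Pi.mul_apply]
        rcases le_or_gt 0 ((μ[e|ℱ n]) ω) with hE0 | hE0
        · calc HX ω * (μ[e|ℱ n]) ω ≤ Real.exp (c * R' ^ γ) * 3 :=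
              mul_le_mul hHXb (le_trans a2 hQ3) hE0 hexpR.le
            _ = 3 * Real.exp (c * R' ^ γ) := by ring
        · have : HX ω * (μ[e|ℱ n]) ω ≤ 0 :=
            mul_nonpos_of_nonneg_of_nonpos hHX0.le hE0.le
          linarith
      linarith
  -- integrate the conditional bound
  calc ∫ ω, HY ω ∂μ = ∫ ω, (μ[HY|ℱ n]) ω ∂μ := (integral_condExp hm).symm
    _ ≤ ∫ ω, (HX ω + 3 * Real.exp (c * R' ^ γ)) ∂μ :=
        integral_mono_ae integrable_condExp (hHXint.add (integrable_const _)) hfinal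
    _ = (∫ ω, HX ω ∂μ) + 3 * Real.exp (c * R' ^ γ) := by
        rw [integral_add hHXint (integrable_const _), integral_const, probReal_univ]
        simp

set_option maxHeartbeats 1000000 in
lemma my_core
    {Ω : Type*} {m0 : MeasurableSpace Ω} {μ : Measure Ω} [IsProbabilityMeasure μ]
    (ℱ : MeasureTheory.Filtration ℕ m0)
    (Z : ℕ → Ω → ℝ)
    (hadapt : ∀ n, StronglyMeasurable[ℱ n] (Z n))
    (hpos : ∀ n ω, 0 ≤ Z n ω)
    (hjumps : ∃ C : ℝ, ∀ n, ∀ᵐ ω ∂μ, |Z (n + 1) ω - Z n ω| ≤ C)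
    (β A R : ℝ) (N : ℕ) (hβ0 : 0 ≤ β) (hβ1 : β < 1) (hA : 0 < A) (hR : 1 ≤ R)
    (hdrift : ∀ n, N ≤ n → ∀ᵐ ω ∂μ, R ≤ Z n ω →
      Z n ω ^ β * (μ[(fun ω' => Z (n + 1) ω' - Z n ω') | ℱ n]) ω ≤ -A)
    (M : ℝ) (hM : ∀ᵐ ω ∂μ, Z 0 ω ≤ M)
    (ε : ℝ) (hε : 0 < ε) :
    ∀ᵐ ω ∂μ, ∀ᶠ n in Filter.atTop, Z n ω ≤ Real.log n ^ (1 / (1 - β) + ε) := by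
  obtain ⟨C₀, hj0⟩ := hjumps
  set γ : ℝ := 1 - β with hγdef
  have hγ0 : 0 < γ := by simp only [hγdef]; linarith
  have hγ1 : γ ≤ 1 := by simp only [hγdef]; linarith
  set C : ℝ := max C₀ 1 with hCdef
  have hC : 1 ≤ C := le_max_right _ _
  have hC0 : 0 < C := lt_of_lt_of_le one_pos hC
  have hj : ∀ n, ∀ᵐ ω ∂μ, |Z (n + 1) ω - Z n ω| ≤ C := fun n =>
    (hj0 n).mono fun ω h => le_trans h (le_max_left _ _)
  set R' : ℝ := R + 2 * C with hR'def
  have hR'2 : 2 * C ≤ R' := by simp only [hR'def]; linarith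
  have hR'1 : 1 ≤ R' := by simp only [hR'def]; linarith
  have hRR' : R ≤ R' := by simp only [hR'def]; linarith
  set C₁ : ℝ := (R' + C) ^ γ + 2 * C with hC₁def
  have hC₁0 : 0 < C₁ := by
    have : 0 ≤ (R' + C) ^ γ := Real.rpow_nonneg (by linarith) _
    simp only [hC₁def]; linarith
  set c : ℝ := min (γ * A / (2 * C)^2) (1 / C₁) with hcdef
  have hc0 : 0 < c := by
    apply lt_min
    · positivity
    · positivity
  have hc1 : c * C₁ ≤ 1 := by
    have h1 : c ≤ 1 / C₁ := min_le_right _ _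
    calc c * C₁ ≤ (1 / C₁) * C₁ := mul_le_mul_of_nonneg_right h1 hC₁0.le
      _ = 1 := by field_simp
  have hc2 : c * (2 * C)^2 ≤ γ * A := by
    have h1 : c ≤ γ * A / (2 * C)^2 := min_le_left _ _
    have h2 : (0:ℝ) < (2 * C)^2 := by positivity
    calc c * (2 * C)^2 ≤ (γ * A / (2 * C)^2) * (2 * C)^2 :=
          mul_le_mul_of_nonneg_right h1 h2.le
      _ = γ * A := by field_simp
  -- a.e. global linear bound on Z
  set B : ℕ → ℝ := fun n => max M 0 + C * n with hBdef
  have hB0 : ∀ n, 0 ≤ B n := fun n => by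
    have : (0:ℝ) ≤ max M 0 := le_max_right _ _
    have : (0:ℝ) ≤ C * n := by positivity
    simp only [hBdef]; positivity
  have hZb : ∀ᵐ ω ∂μ, ∀ n, Z n ω ≤ B n := by
    have hjall : ∀ᵐ ω ∂μ, ∀ n, |Z (n + 1) ω - Z n ω| ≤ C := ae_all_iff.2 hj
    filter_upwards [hM, hjall] with ω h0 hja
    intro n
    induction n with
    | zero => simp only [hBdef]; simpa using le_trans h0 (le_max_left _ _)
    | succ k ih =>
        have := (abs_le.1 (hja k)).2
        have hck : B (k+1) = B k + C := by simp only [hBdef]; push_cast; ring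
        rw [hck]; linarith
  have hZbn : ∀ n, ∀ᵐ ω ∂μ, Z n ω ≤ B n := fun n => hZb.mono fun ω h => h n
  -- integral of exponential Lyapunov function
  set h : ℕ → Ω → ℝ := fun n ω => Real.exp (c * Z n ω ^ γ) with hhdef
  have hhm : ∀ n, Measurable (h n) := by
    intro n
    apply (Real.continuous_exp.comp
      ((continuous_const.mul (Real.continuous_rpow_const hγ0.le)))).measurable.comp
    exact (hadapt n).measurable.mono (ℱ.le n) le_rfl
  have hint : ∀ n, Integrable (h n) μ := by
    intro n
    apply my_int_of_bound (hhm n).aestronglyMeasurable (b := Real.exp (c * B n ^ γ))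
    filter_upwards [hZbn n] with ω hb
    rw [abs_of_pos (Real.exp_pos _)]
    exact Real.exp_le_exp.2
      (mul_le_mul_of_nonneg_left (Real.rpow_le_rpow (hpos n ω) hb hγ0.le) hc0.le)
  set I : ℕ → ℝ := fun n => ∫ ω, h n ω ∂μ with hIdef
  set K : ℝ := 3 * Real.exp (c * R' ^ γ) with hKdef
  have hK0 : 0 < K := by positivity
  have hIb : ∀ n, I n ≤ Real.exp (c * B n ^ γ) := by
    intro n
    have : I n ≤ ∫ _ω, Real.exp (c * B n ^ γ) ∂μ := by
      apply integral_mono_ae (hint n) (integrable_const _)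
      filter_upwards [hZbn n] with ω hb
      exact Real.exp_le_exp.2
        (mul_le_mul_of_nonneg_left (Real.rpow_le_rpow (hpos n ω) hb hγ0.le) hc0.le)
    simpa [measure_univ] using this
  have hstep : ∀ n, N ≤ n → I (n + 1) ≤ I n + K := by
    intro n hn
    exact my_step ℱ n (hadapt n)
      ((hadapt (n+1)).measurable.mono (ℱ.le (n+1)) le_rfl)
      (hpos n) (hpos (n+1)) hβ0 hβ1 hA hC (hj n) hR'2 hR'1
      ((hdrift n hn).mono fun ω hw hr => hw (le_trans hRR' hr))
      hc0 hc1 hc2 (hZbn n)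
  set KN : ℝ := Real.exp (c * B N ^ γ) with hKNdef
  have hKN0 : 0 < KN := Real.exp_pos _
  have hIter : ∀ k : ℕ, I (N + k) ≤ KN + K * k := by
    intro k
    induction k with
    | zero => simpa using hIb N
    | succ m ih =>
        have := hstep (N + m) (Nat.le_add_right _ _)
        have harr : N + (m + 1) = (N + m) + 1 := by ring
        rw [harr]
        push_cast
        push_cast at ih
        linarith
  have hIbound : ∀ n, N ≤ n → I n ≤ KN + K * n := by
    intro n hn
    obtain ⟨k, rfl⟩ := Nat.exists_eq_add_of_le hn
    calc I (N + k) ≤ KN + K * k := hIter k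
      _ ≤ KN + K * (N + k : ℕ) := by
          push_cast
          have h1 : (0:ℝ) ≤ (N:ℝ) := Nat.cast_nonneg N
          nlinarith
  -- tail sets and Markov bound
  set q : ℝ := 1 / (1 - β) + ε with hqdef
  have hqγ : q * γ = 1 + ε * γ := by
    simp only [hqdef, hγdef]
    field_simp
    rw [mul_add, mul_one_div_cancel (by linarith)]
  have hln : ∀ n : ℕ, 0 ≤ Real.log n := by
    intro n
    rcases Nat.eq_zero_or_pos n with h0 | h0
    · simp [h0]
    · exact Real.log_nonneg (by exact_mod_cast h0)
  set s : ℕ → Set Ω := fun n => {ω | Real.log n ^ q < Z n ω} with hsdef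
  set T : ℕ → ℝ := fun n => Real.exp (c * Real.log n ^ (q * γ)) with hTdef
  have hT0 : ∀ n, 0 < T n := fun n => Real.exp_pos _
  have hMark : ∀ n, N ≤ n → (μ (s n)).toReal ≤ (KN + K * n) / T n := by
    intro n hn
    have hincl : s n ⊆ {ω | T n ≤ h n ω} := by
      intro ω hω
      simp only [hsdef, Set.mem_setOf_eq] at hω
      simp only [Set.mem_setOf_eq, hhdef, hTdef]
      apply Real.exp_le_exp.2
      apply mul_le_mul_of_nonneg_left _ hc0.le
      have hrw : Real.log n ^ (q * γ) = (Real.log n ^ q) ^ γ := Real.rpow_mul (hln n) q γ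
      rw [hrw]
      exact Real.rpow_le_rpow (Real.rpow_nonneg (hln n) _) hω.le hγ0.le
    have hmark := mul_meas_ge_le_integral_of_nonneg
      (ae_of_all μ fun ω => (Real.exp_pos _).le) (hint n) (T n)
    have h2 : (μ (s n)).toReal ≤ (μ {ω | T n ≤ h n ω}).toReal :=
      ENNReal.toReal_mono (measure_ne_top μ _) (measure_mono hincl)
    have h3 : T n * (μ (s n)).toReal ≤ KN + K * n := by
      calc T n * (μ (s n)).toReal ≤ T n * (μ {ω | T n ≤ h n ω}).toReal :=
            mul_le_mul_of_nonneg_left h2 (hT0 n).le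
        _ ≤ I n := hmark
        _ ≤ KN + K * n := hIbound n hn
    rw [le_div_iff₀ (hT0 n)]
    linarith
  set a : ℕ → ℝ := fun n => (KN + K * n) / T n with hadef
  -- eventual domination by 1/n^2
  have hEv : ∀ᶠ n : ℕ in atTop, a n ≤ 1 / (n:ℝ)^2 := by
    have t1 : Tendsto (fun n : ℕ => Real.log n) atTop atTop :=
      Real.tendsto_log_atTop.comp tendsto_natCast_atTop_atTop
    have t2 : Tendsto (fun n : ℕ => Real.log n ^ (ε * γ)) atTop atTop :=
      (tendsto_rpow_atTop (by positivity)).comp t1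
    have e1 : ∀ᶠ n : ℕ in atTop, max 1 (Real.log (KN + K)) ≤ Real.log n :=
      t1.eventually_ge_atTop _
    have e2 : ∀ᶠ n : ℕ in atTop, 4 / c ≤ Real.log n ^ (ε * γ) :=
      t2.eventually_ge_atTop _
    have e3 : ∀ᶠ n : ℕ in atTop, 1 ≤ n := eventually_ge_atTop 1
    filter_upwards [e1, e2, e3] with n h1 h2 h3
    have hn1 : (1:ℝ) ≤ (n:ℝ) := by exact_mod_cast h3
    have hn0 : (0:ℝ) < (n:ℝ) := by linarith
    have hL1 : 1 ≤ Real.log n := le_trans (le_max_left _ _) h1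
    have hL0 : 0 < Real.log n := by linarith
    have hLK : Real.log (KN + K) ≤ Real.log n := le_trans (le_max_right _ _) h1
    have hc4 : 4 ≤ c * Real.log n ^ (ε * γ) := by
      rw [div_le_iff₀ hc0] at h2
      linarith
    -- T n is large
    have hTlarge : (KN + K) * (n:ℝ)^3 ≤ T n := by
      have hKNK : 0 < KN + K := by linarith
      have hlogeq : Real.log ((KN + K) * (n:ℝ)^3) = Real.log (KN + K) + 3 * Real.log n := by
        rw [Real.log_mul hKNK.ne' (by positivity), Real.log_pow]
        norm_num
      have hXbig : Real.log (KN + K) + 3 * Real.log n ≤ c * Real.log n ^ (q * γ) := by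
        rw [hqγ, Real.rpow_add hL0, Real.rpow_one]
        have hLε : 0 ≤ Real.log n ^ (ε * γ) := Real.rpow_nonneg hL0.le _
        have : 4 * Real.log n ≤ (c * Real.log n ^ (ε * γ)) * Real.log n :=
          mul_le_mul_of_nonneg_right hc4 hL0.le
        calc Real.log (KN + K) + 3 * Real.log n ≤ 4 * Real.log n := by linarith
          _ ≤ (c * Real.log n ^ (ε * γ)) * Real.log n := this
          _ = c * (Real.log n * Real.log n ^ (ε * γ)) := by ring
      calc (KN + K) * (n:ℝ)^3 = Real.exp (Real.log ((KN + K) * (n:ℝ)^3)) :=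
            (Real.exp_log (by positivity)).symm
        _ ≤ Real.exp (c * Real.log n ^ (q * γ)) := Real.exp_le_exp.2 (hlogeq ▸ hXbig)
        _ = T n := rfl
    -- conclude
    have hnum : KN + K * n ≤ (KN + K) * n := by nlinarith
    have hKNK : 0 < KN + K := by linarith
    have hpos3 : (0:ℝ) < (KN + K) * (n:ℝ)^3 := by positivity
    calc a n = (KN + K * n) / T n := rfl
      _ ≤ ((KN + K) * n) / ((KN + K) * (n:ℝ)^3) :=
          div_le_div₀ (by positivity) hnum hpos3 hTlarge
      _ = 1 / (n:ℝ)^2 := by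
          field_simp
  -- summability and Borel-Cantelli
  obtain ⟨n₀, hn₀⟩ := eventually_atTop.1 hEv
  set n₁ : ℕ := max n₀ N with hn₁def
  have hsummable : Summable (fun n : ℕ => 1/(n:ℝ)^2) :=
    summable_one_div_nat_pow.2 one_lt_two
  have hF : ∀ n, μ (s n) ≤ (if n < n₁ then 1 else 0) + ENNReal.ofReal (1/(n:ℝ)^2) := by
    intro n
    by_cases hlt : n < n₁
    · simp only [hlt, if_true]
      exact le_add_of_le_of_nonneg prob_le_one (zero_le)
    · push_neg at hlt
      have hnN : N ≤ n := le_trans (le_max_right _ _) hlt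
      have hn0' : n₀ ≤ n := le_trans (le_max_left _ _) hlt
      have hμ : μ (s n) ≤ ENNReal.ofReal (a n) := by
        calc μ (s n) = ENNReal.ofReal ((μ (s n)).toReal) :=
              (ENNReal.ofReal_toReal (measure_ne_top μ _)).symm
          _ ≤ ENNReal.ofReal (a n) := ENNReal.ofReal_le_ofReal (hMark n hnN)
      simp only [not_lt.2 hlt, if_false, zero_add]
      exact le_trans hμ (ENNReal.ofReal_le_ofReal (hn₀ n hn0'))
  have hsum : (∑' n, μ (s n)) ≠ ⊤ := by
    apply ne_top_of_le_ne_top ?_ (ENNReal.tsum_le_tsum hF)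
    rw [ENNReal.tsum_add]
    apply ENNReal.add_ne_top.2
    constructor
    · have heq : (∑' n : ℕ, (if n < n₁ then (1:ℝ≥0∞) else 0))
          = ∑ n ∈ Finset.range n₁, (if n < n₁ then (1:ℝ≥0∞) else 0) := by
        apply tsum_eq_sum
        intro b hb
        simp only [Finset.mem_range, not_lt] at hb
        simp [not_lt.2 hb]
      rw [heq]
      exact (ENNReal.sum_lt_top.2 fun i _ => by split <;> simp).ne
    · rw [← ENNReal.ofReal_tsum_of_nonneg (fun n => by positivity) hsummable]
      exact ENNReal.ofReal_ne_top
  filter_upwards [MeasureTheory.ae_eventually_notMem hsum] with ω hω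
  refine hω.mono fun n hn => ?_
  simpa [hsdef, not_lt] using hn

/-- If Z has bounded jumps and Z_n^β E_n[Z_{n+1} − Z_n] ≤ −A on {Z_n ≥ R} for large n,
then a.s. Z_n ≤ (log n)^{1/(1−β)+ε} eventually. -/
theorem polylog_upper_bound
    {Ω : Type*} {m0 : MeasurableSpace Ω} {μ : Measure Ω} [IsProbabilityMeasure μ]
    (ℱ : MeasureTheory.Filtration ℕ m0)
    (Z : ℕ → Ω → ℝ)
    (hadapt : ∀ n, StronglyMeasurable[ℱ n] (Z n))
    (hpos : ∀ n ω, 0 ≤ Z n ω)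
    (hjumps : ∃ C : ℝ, ∀ n, ∀ᵐ ω ∂μ, |Z (n + 1) ω - Z n ω| ≤ C)
    (β A R : ℝ) (N : ℕ) (hβ0 : 0 ≤ β) (hβ1 : β < 1) (hA : 0 < A) (hR : 1 ≤ R)
    (hdrift : ∀ n, N ≤ n → ∀ᵐ ω ∂μ, R ≤ Z n ω →
      Z n ω ^ β * (μ[(fun ω' => Z (n + 1) ω' - Z n ω') | ℱ n]) ω ≤ -A) :
    ∀ ε : ℝ, 0 < ε → ∀ᵐ ω ∂μ, ∀ᶠ n in Filter.atTop,
      Z n ω ≤ Real.log n ^ (1 / (1 - β) + ε) := by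
  intro ε hε
  obtain ⟨C₀, hj0⟩ := hjumps
  have key : ∀ M : ℕ, ∀ᵐ ω ∂μ, Z 0 ω ≤ (M:ℝ) →
      ∀ᶠ n in Filter.atTop, Z n ω ≤ Real.log n ^ (1 / (1 - β) + ε) := by
    intro M
    set G : Set Ω := {ω | Z 0 ω ≤ (M:ℝ)} with hGdef
    have hG0 : MeasurableSet[ℱ 0] G :=
      measurableSet_le (hadapt 0).measurable measurable_const
    have hGm : ∀ n, MeasurableSet[ℱ n] G := fun n => (ℱ.mono (Nat.zero_le n)) _ hG0
    set Z' : ℕ → Ω → ℝ := fun n => G.indicator (Z n) with hZ'def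
    have hadapt' : ∀ n, StronglyMeasurable[ℱ n] (Z' n) :=
      fun n => (hadapt n).indicator (hGm n)
    have hpos' : ∀ n ω, 0 ≤ Z' n ω := fun n ω => by
      by_cases h : ω ∈ G
      · simp [hZ'def, Set.indicator_of_mem h, hpos n ω]
      · simp [hZ'def, Set.indicator_of_notMem h]
    have hjumps' : ∃ C : ℝ, ∀ n, ∀ᵐ ω ∂μ, |Z' (n+1) ω - Z' n ω| ≤ C := by
      refine ⟨max C₀ 0, fun n => ?_⟩
      filter_upwards [hj0 n] with ω hj
      by_cases h : ω ∈ G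
      · simp only [hZ'def, Set.indicator_of_mem h]
        exact le_trans hj (le_max_left _ _)
      · simp [hZ'def, Set.indicator_of_notMem h]
    have hdrift' : ∀ n, N ≤ n → ∀ᵐ ω ∂μ, R ≤ Z' n ω →
        Z' n ω ^ β * (μ[(fun ω' => Z' (n+1) ω' - Z' n ω') | ℱ n]) ω ≤ -A := by
      intro n hn
      set i : Ω → ℝ := G.indicator (fun _ => (1:ℝ)) with hidef
      have his : StronglyMeasurable[ℱ n] i := stronglyMeasurable_const.indicator (hGm n)
      have hieq : (fun ω' => Z' (n+1) ω' - Z' n ω')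
          = i * (fun ω' => Z (n+1) ω' - Z n ω') := by
        funext ω
        by_cases h : ω ∈ G
        · simp [hZ'def, hidef, Set.indicator_of_mem h]
        · simp [hZ'def, hidef, Set.indicator_of_notMem h]
      have hδm : Measurable (fun ω' => Z (n+1) ω' - Z n ω') :=
        ((hadapt (n+1)).measurable.mono (ℱ.le (n+1)) le_rfl).sub
          ((hadapt n).measurable.mono (ℱ.le n) le_rfl)
      have hδint : Integrable (fun ω' => Z (n+1) ω' - Z n ω') μ :=
        my_int_of_bound hδm.aestronglyMeasurable (hj0 n)
      have hiδint : Integrable (i * fun ω' => Z (n+1) ω' - Z n ω') μ := by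
        apply my_int_of_bound
          (((his.measurable.mono (ℱ.le n) le_rfl).mul hδm).aestronglyMeasurable)
          (b := max C₀ 0)
        filter_upwards [hj0 n] with ω hj
        by_cases h : ω ∈ G
        · simp only [Pi.mul_apply, hidef, Set.indicator_of_mem h, one_mul]
          exact le_trans hj (le_max_left _ _)
        · simp [Pi.mul_apply, hidef, Set.indicator_of_notMem h]
      have hpull := condExp_mul_of_stronglyMeasurable_left his hiδint hδint
      filter_upwards [hdrift n hn, hpull] with ω hd hp
      intro hRZ'
      have hωG : ω ∈ G := by
        by_contra h
        have : Z' n ω = 0 := by simp [hZ'def, Set.indicator_of_notMem h]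
        rw [this] at hRZ'
        linarith
      have hZeq : Z' n ω = Z n ω := by simp [hZ'def, Set.indicator_of_mem hωG]
      rw [hZeq] at hRZ' ⊢
      have hceq : (μ[(fun ω' => Z' (n+1) ω' - Z' n ω') | ℱ n]) ω
          = (μ[(fun ω' => Z (n+1) ω' - Z n ω') | ℱ n]) ω := by
        rw [hieq, hp, Pi.mul_apply, hidef, Set.indicator_of_mem hωG, one_mul]
      rw [hceq]
      exact hd hRZ'
    have hM' : ∀ᵐ ω ∂μ, Z' 0 ω ≤ (M:ℝ) := by
      refine ae_of_all _ fun ω => ?_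
      by_cases h : ω ∈ G
      · simpa [hZ'def, Set.indicator_of_mem h] using (show Z 0 ω ≤ (M:ℝ) from h)
      · simp only [hZ'def, Set.indicator_of_notMem h]
        exact_mod_cast (Nat.cast_nonneg M : (0:ℝ) ≤ M)
    have hae := my_core ℱ Z' hadapt' hpos' hjumps' β A R N hβ0 hβ1 hA hR hdrift'
      (M:ℝ) hM' ε hε
    filter_upwards [hae] with ω h1 h0
    have hωG : ω ∈ G := h0
    refine h1.mono fun n hn => ?_
    simp only [hZ'def] at hn
    rwa [Set.indicator_of_mem hωG] at hn
  have hall : ∀ᵐ ω ∂μ, ∀ M : ℕ, Z 0 ω ≤ (M:ℝ) →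
      ∀ᶠ n in Filter.atTop, Z n ω ≤ Real.log n ^ (1 / (1 - β) + ε) := ae_all_iff.2 key
  filter_upwards [hall] with ω hω
  exact hω ⌈Z 0 ω⌉₊ (Nat.le_ceil _)
end
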